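/- arXiv:2111.13775 — 7 statements merged into one kernel-verified Lean document; each statement's English description precedes it below -/
import Mathlib

section
/- Under consistency, positivity, and no unmeasured confounding, the mean of the treated potential outcome is identified by inverse probability weighting: E[A·Y / e(X)] = E[Y(1)], where e(X) is the propensity score. -/
open MeasureTheory ProbabilityTheory Filter

set_option linter.unusedSectionVars false
set_option linter.unusedVariables false
set_option maxHeartbeats 1000000

section IPWAuxApprox

variable {Ω : Type*} {m₁ : MeasurableSpace Ω} [mΩ : MeasurableSpace Ω]
  {μ : Measure Ω} [IsProbabilityMeasure μ]

/-- Extend a set-integral identity from indicators of `m₁`-measurable sets to an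
`m₁`-measurable integrable function, by simple-function approximation and dominated
convergence. -/
lemma ipw_aux_approx (hm₁ : m₁ ≤ mΩ) {f : Ω → ℝ} (hf₁ : Measurable[m₁] f)
    (hfint : Integrable f μ) {ι w : Ω → ℝ}
    (hι_meas : AEStronglyMeasurable ι μ) (hι_bdd : ∀ᵐ x ∂μ, ‖ι x‖ ≤ 1)
    (hι_int : Integrable ι μ)
    (hw_meas : AEStronglyMeasurable w μ) (hw_bdd : ∀ᵐ x ∂μ, ‖w x‖ ≤ 1)
    (hw_int : Integrable w μ) {s : Set Ω}
    (hstep : ∀ B : Set Ω, MeasurableSet[m₁] B →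
      ∫ x in s, B.indicator (fun _ => (1:ℝ)) x * ι x ∂μ
        = ∫ x in s, B.indicator (fun _ => (1:ℝ)) x * w x ∂μ) :
    ∫ x in s, f x * ι x ∂μ = ∫ x in s, f x * w x ∂μ := by
  classical
  -- integrability of a simple function (wrt m₁) times an integrable function
  have hint_sf : ∀ (g : @SimpleFunc Ω m₁ ℝ) (v : Ω → ℝ), Integrable v μ →
      Integrable (fun x => g x * v x) μ := by
    intro g v hv
    obtain ⟨Cb, hCb⟩ := @SimpleFunc.exists_forall_norm_le Ω ℝ m₁ _ g
    exact hv.bdd_mul (((@SimpleFunc.stronglyMeasurable Ω ℝ m₁ _ g).mono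
      hm₁).aestronglyMeasurable) (Eventually.of_forall hCb)
  -- the identity for simple functions wrt m₁
  have step_simple : ∀ g : @SimpleFunc Ω m₁ ℝ,
      ∫ x in s, g x * ι x ∂μ = ∫ x in s, g x * w x ∂μ := by
    intro g
    refine @SimpleFunc.induction Ω ℝ m₁ _
      (fun g => ∫ x in s, g x * ι x ∂μ = ∫ x in s, g x * w x ∂μ) ?_ ?_ g
    · intro c B hB
      have hcoe : ∀ x, (@SimpleFunc.piecewise Ω ℝ m₁ B hB
          (@SimpleFunc.const Ω ℝ m₁ c) (@SimpleFunc.const Ω ℝ m₁ 0)) x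
          = c * B.indicator (fun _ => (1:ℝ)) x := by
        intro x
        by_cases hx : x ∈ B
        · simp [SimpleFunc.coe_piecewise, SimpleFunc.coe_const, SimpleFunc.coe_zero,
            Set.piecewise_eq_indicator, Set.indicator_of_mem hx]
        · simp [SimpleFunc.coe_piecewise, SimpleFunc.coe_const, SimpleFunc.coe_zero,
            Set.piecewise_eq_indicator, Set.indicator_of_notMem hx]
      have key : ∀ v : Ω → ℝ,
          ∫ x in s, (@SimpleFunc.piecewise Ω ℝ m₁ B hB
            (@SimpleFunc.const Ω ℝ m₁ c) (@SimpleFunc.const Ω ℝ m₁ 0)) x * v x ∂μ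
          = c * ∫ x in s, B.indicator (fun _ => (1:ℝ)) x * v x ∂μ := by
        intro v
        rw [← integral_const_mul]
        refine integral_congr_ae (Eventually.of_forall fun x => ?_)
        simp only [hcoe, mul_assoc]
      rw [key ι, key w, hstep B hB]
    · intro g₁ g₂ _ h₁ h₂
      have hadd : ∀ v : Ω → ℝ, Integrable v μ →
          ∫ x in s, (g₁ + g₂) x * v x ∂μ
            = (∫ x in s, g₁ x * v x ∂μ) + ∫ x in s, g₂ x * v x ∂μ := by
        intro v hv
        have h1 : ∀ x, (g₁ + g₂) x * v x = g₁ x * v x + g₂ x * v x := by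
          intro x
          rw [@SimpleFunc.coe_add Ω ℝ m₁ _ g₁ g₂]
          simp [add_mul]
        rw [integral_congr_ae (Eventually.of_forall fun x => h1 x)]
        exact integral_add ((hint_sf g₁ v hv).integrableOn) ((hint_sf g₂ v hv).integrableOn)
      rw [hadd ι hι_int, hadd w hw_int, h₁, h₂]
  -- approximation of f by simple functions wrt m₁ and dominated convergence
  have htend : ∀ x, Tendsto
      (fun n => (@SimpleFunc.approxOn ℝ Ω _ _ _ m₁ f hf₁ Set.univ 0 (Set.mem_univ 0) _ n) x)
      atTop (nhds (f x)) := by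
    intro x
    apply @SimpleFunc.tendsto_approxOn ℝ Ω _ _ _ m₁ f hf₁ Set.univ 0 (Set.mem_univ 0) _ x
    simp
  have hFbdd : ∀ (n : ℕ) x,
      ‖(@SimpleFunc.approxOn ℝ Ω _ _ _ m₁ f hf₁ Set.univ 0 (Set.mem_univ 0) _ n) x‖
      ≤ ‖f x‖ + ‖f x‖ := fun n x =>
    @SimpleFunc.norm_approxOn_zero_le Ω ℝ m₁ _ _ _ f hf₁ Set.univ (Set.mem_univ 0) _ x n
  have hDCT : ∀ v : Ω → ℝ, AEStronglyMeasurable v μ → (∀ᵐ x ∂μ, ‖v x‖ ≤ 1) →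
      Tendsto (fun n => ∫ x in s,
          (@SimpleFunc.approxOn ℝ Ω _ _ _ m₁ f hf₁ Set.univ 0 (Set.mem_univ 0) _ n) x * v x ∂μ)
        atTop (nhds (∫ x in s, f x * v x ∂μ)) := by
    intro v hv hvb
    refine tendsto_integral_of_dominated_convergence (fun x => ‖f x‖ + ‖f x‖)
      (fun n => ((((@SimpleFunc.stronglyMeasurable Ω ℝ m₁ _
        (@SimpleFunc.approxOn ℝ Ω _ _ _ m₁ f hf₁ Set.univ 0 (Set.mem_univ 0) _ n)).mono
        hm₁).aestronglyMeasurable.mul hv)).restrict)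
      (hfint.norm.add hfint.norm).integrableOn ?_ ?_
    · intro n
      refine ae_restrict_of_ae ?_
      filter_upwards [hvb] with x hx
      calc ‖(@SimpleFunc.approxOn ℝ Ω _ _ _ m₁ f hf₁ Set.univ 0 (Set.mem_univ 0) _ n) x * v x‖
          = ‖(@SimpleFunc.approxOn ℝ Ω _ _ _ m₁ f hf₁ Set.univ 0 (Set.mem_univ 0) _ n) x‖
            * ‖v x‖ := norm_mul _ _
        _ ≤ (‖f x‖ + ‖f x‖) * 1 := by
            apply mul_le_mul (hFbdd n x) hx (norm_nonneg _)
            positivity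
        _ = ‖f x‖ + ‖f x‖ := mul_one _
    · refine ae_restrict_of_ae (Eventually.of_forall fun x => ?_)
      exact (htend x).mul tendsto_const_nhds
  have h1 := hDCT ι hι_meas hι_bdd
  have h2 := hDCT w hw_meas hw_bdd
  have heq : (fun n => ∫ x in s,
        (@SimpleFunc.approxOn ℝ Ω _ _ _ m₁ f hf₁ Set.univ 0 (Set.mem_univ 0) _ n) x * ι x ∂μ)
      = fun n => ∫ x in s,
        (@SimpleFunc.approxOn ℝ Ω _ _ _ m₁ f hf₁ Set.univ 0 (Set.mem_univ 0) _ n) x * w x ∂μ :=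
    funext fun n => step_simple _
  rw [heq] at h1
  exact tendsto_nhds_unique h1 h2


end IPWAuxApprox

section IPWAuxCore

variable {Ω : Type*} {m' : MeasurableSpace Ω} [mΩ : MeasurableSpace Ω] [StandardBorelSpace Ω]
  {μ : Measure Ω} [IsProbabilityMeasure μ]

/-- a.e. bound of a conditional probability by 1. -/
lemma ipw_aux_condexp_indicator_bound (hm' : m' ≤ mΩ) {T : Set Ω} (hT : MeasurableSet[mΩ] T) :
    ∀ᵐ x ∂μ, ‖(μ[T.indicator (fun _ => (1:ℝ)) | m']) x‖ ≤ 1 := by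
  have hint : Integrable (T.indicator (fun _ => (1:ℝ))) μ :=
    (integrable_const (1:ℝ)).indicator hT
  have h0 : 0 ≤ᵐ[μ] μ[T.indicator (fun _ => (1:ℝ)) | m'] :=
    condExp_nonneg (Eventually.of_forall fun x => Set.indicator_nonneg (fun _ _ => zero_le_one) x)
  have h1 : μ[T.indicator (fun _ => (1:ℝ)) | m'] ≤ᵐ[μ] μ[(fun _ => (1:ℝ)) | m'] :=
    condExp_mono hint (integrable_const 1)
      (Eventually.of_forall fun x => Set.indicator_le_self' (fun _ _ => zero_le_one) x)
  have hc : μ[(fun _ => (1:ℝ)) | m'] = fun _ => (1:ℝ) := condExp_const (μ := μ) hm' (1:ℝ)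
  filter_upwards [h0, h1] with x hx0 hx1
  simp only [Pi.zero_apply] at hx0
  rw [Real.norm_eq_abs, abs_le]
  constructor
  · linarith
  · rw [hc] at hx1; exact hx1

/-- Core set-integral identity for conditional independence. -/
lemma ipw_aux_core (hm' : m' ≤ mΩ) {f A : Ω → ℝ}
    (hf : Measurable[mΩ] f) (hA : Measurable[mΩ] A) (hfint : Integrable f μ)
    (hindep : CondIndepFun m' hm' f A μ)
    {s : Set Ω} (hs : MeasurableSet[m'] s) :
    ∫ x in s, f x * (A ⁻¹' {1}).indicator (fun _ => (1:ℝ)) x ∂μ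
      = ∫ x in s, f x * (μ[(A ⁻¹' {1}).indicator (fun _ => (1:ℝ)) | m']) x ∂μ := by
  classical
  have hT : MeasurableSet[mΩ] (A ⁻¹' {1}) := hA (measurableSet_singleton 1)
  have hι_meas : Measurable[mΩ] ((A ⁻¹' {1}).indicator (fun _ => (1:ℝ))) :=
    measurable_const.indicator hT
  have hι_int : Integrable ((A ⁻¹' {1}).indicator (fun _ => (1:ℝ))) μ :=
    (integrable_const (1:ℝ)).indicator hT
  have hι_bdd : ∀ x, ‖(A ⁻¹' {1}).indicator (fun _ => (1:ℝ)) x‖ ≤ 1 := by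
    intro x
    by_cases hx : x ∈ A ⁻¹' {1} <;> simp [Set.indicator_apply, hx]
  have hw_sm : StronglyMeasurable[m'] (μ[(A ⁻¹' {1}).indicator (fun _ => (1:ℝ)) | m']) :=
    stronglyMeasurable_condExp
  have hw_meas : AEStronglyMeasurable (μ[(A ⁻¹' {1}).indicator (fun _ => (1:ℝ)) | m']) μ :=
    (hw_sm.mono hm').aestronglyMeasurable
  have hw_bdd : ∀ᵐ x ∂μ, ‖(μ[(A ⁻¹' {1}).indicator (fun _ => (1:ℝ)) | m']) x‖ ≤ 1 :=
    ipw_aux_condexp_indicator_bound hm' hT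
  -- the indicator step, for sets in σ(f)
  have hstep : ∀ B : Set Ω, MeasurableSet[MeasurableSpace.comap f Real.measurableSpace] B →
      ∫ x in s, B.indicator (fun _ => (1:ℝ)) x * (A ⁻¹' {1}).indicator (fun _ => (1:ℝ)) x ∂μ
        = ∫ x in s, B.indicator (fun _ => (1:ℝ)) x
            * (μ[(A ⁻¹' {1}).indicator (fun _ => (1:ℝ)) | m']) x ∂μ := by
    rintro B ⟨C, hC, rfl⟩
    have hB : MeasurableSet[mΩ] (f ⁻¹' C) := hf hC
    have hind_int : Integrable ((f ⁻¹' C).indicator (fun _ => (1:ℝ))) μ :=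
      (integrable_const (1:ℝ)).indicator hB
    have hinter_int : Integrable (((f ⁻¹' C) ∩ (A ⁻¹' {1})).indicator (fun _ => (1:ℝ))) μ :=
      (integrable_const (1:ℝ)).indicator (hB.inter hT)
    have hkey : (μ⟦(f ⁻¹' C) ∩ (A ⁻¹' {1}) | m'⟧)
        =ᵐ[μ] fun ω => (μ⟦f ⁻¹' C | m'⟧) ω * (μ⟦A ⁻¹' {1} | m'⟧) ω :=
      (condIndepFun_iff_condExp_inter_preimage_eq_mul (hm' := hm') hf hA).mp hindep
        C {1} hC (measurableSet_singleton 1)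
    have hprod : ∀ x, (f ⁻¹' C).indicator (fun _ => (1:ℝ)) x
          * (A ⁻¹' {1}).indicator (fun _ => (1:ℝ)) x
        = ((f ⁻¹' C) ∩ (A ⁻¹' {1})).indicator (fun _ => (1:ℝ)) x := by
      intro x
      simp only [Set.indicator_apply, Set.mem_inter_iff]
      split_ifs <;> simp_all
    have hpull : μ[fun x => (μ[(A ⁻¹' {1}).indicator (fun _ => (1:ℝ)) | m']) x
          * (f ⁻¹' C).indicator (fun _ => (1:ℝ)) x | m']
        =ᵐ[μ] fun x => (μ[(A ⁻¹' {1}).indicator (fun _ => (1:ℝ)) | m']) x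
          * (μ[(f ⁻¹' C).indicator (fun _ => (1:ℝ)) | m']) x := by
      have := condExp_stronglyMeasurable_mul_of_bound hm' hw_sm hind_int 1 hw_bdd
      filter_upwards [this] with x hx
      exact hx
    have hwind_int : Integrable (fun x => (μ[(A ⁻¹' {1}).indicator (fun _ => (1:ℝ)) | m']) x
        * (f ⁻¹' C).indicator (fun _ => (1:ℝ)) x) μ :=
      hind_int.bdd_mul hw_meas hw_bdd
    calc ∫ x in s, (f ⁻¹' C).indicator (fun _ => (1:ℝ)) x
            * (A ⁻¹' {1}).indicator (fun _ => (1:ℝ)) x ∂μ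
        = ∫ x in s, ((f ⁻¹' C) ∩ (A ⁻¹' {1})).indicator (fun _ => (1:ℝ)) x ∂μ :=
          integral_congr_ae (Eventually.of_forall fun x => hprod x)
      _ = ∫ x in s, (μ[((f ⁻¹' C) ∩ (A ⁻¹' {1})).indicator (fun _ => (1:ℝ)) | m']) x ∂μ :=
          (setIntegral_condExp hm' hinter_int hs).symm
      _ = ∫ x in s, (μ[(f ⁻¹' C).indicator (fun _ => (1:ℝ)) | m']) x
            * (μ[(A ⁻¹' {1}).indicator (fun _ => (1:ℝ)) | m']) x ∂μ := by
          refine integral_congr_ae (ae_restrict_of_ae ?_)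
          filter_upwards [hkey] with x hx
          exact hx
      _ = ∫ x in s, (μ[(A ⁻¹' {1}).indicator (fun _ => (1:ℝ)) | m']) x
            * (μ[(f ⁻¹' C).indicator (fun _ => (1:ℝ)) | m']) x ∂μ :=
          integral_congr_ae (Eventually.of_forall fun x => mul_comm _ _)
      _ = ∫ x in s, (μ[fun x => (μ[(A ⁻¹' {1}).indicator (fun _ => (1:ℝ)) | m']) x
            * (f ⁻¹' C).indicator (fun _ => (1:ℝ)) x | m']) x ∂μ := by
          refine integral_congr_ae (ae_restrict_of_ae ?_)
          filter_upwards [hpull] with x hx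
          exact hx.symm
      _ = ∫ x in s, (μ[(A ⁻¹' {1}).indicator (fun _ => (1:ℝ)) | m']) x
            * (f ⁻¹' C).indicator (fun _ => (1:ℝ)) x ∂μ :=
          setIntegral_condExp hm' hwind_int hs
      _ = ∫ x in s, (f ⁻¹' C).indicator (fun _ => (1:ℝ)) x
            * (μ[(A ⁻¹' {1}).indicator (fun _ => (1:ℝ)) | m']) x ∂μ :=
          integral_congr_ae (Eventually.of_forall fun x => mul_comm _ _)
  exact ipw_aux_approx hf.comap_le (measurable_iff_comap_le.mpr le_rfl) hfint
    hι_meas.aestronglyMeasurable (Eventually.of_forall hι_bdd) hι_int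
    hw_meas hw_bdd integrable_condExp hstep

/-- Conditional independence gives the product rule for conditional expectations, for the
product of an integrable function with the indicator of a level set of the other function. -/
lemma ipw_aux_condexp_mul (hm' : m' ≤ mΩ) {f A : Ω → ℝ}
    (hf : Measurable[mΩ] f) (hA : Measurable[mΩ] A) (hfint : Integrable f μ)
    (hindep : CondIndepFun m' hm' f A μ) :
    μ[fun x => f x * (A ⁻¹' {1}).indicator (fun _ => (1:ℝ)) x | m']
      =ᵐ[μ] fun x => (μ[f | m']) x * (μ[(A ⁻¹' {1}).indicator (fun _ => (1:ℝ)) | m']) x := by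
  have hT : MeasurableSet[mΩ] (A ⁻¹' {1}) := hA (measurableSet_singleton 1)
  have hι_bdd : ∀ x, ‖(A ⁻¹' {1}).indicator (fun _ => (1:ℝ)) x‖ ≤ 1 := by
    intro x
    by_cases hx : x ∈ A ⁻¹' {1} <;> simp [Set.indicator_apply, hx]
  have hw_bdd : ∀ᵐ x ∂μ, ‖(μ[(A ⁻¹' {1}).indicator (fun _ => (1:ℝ)) | m']) x‖ ≤ 1 :=
    ipw_aux_condexp_indicator_bound hm' hT
  have hw_meas : AEStronglyMeasurable (μ[(A ⁻¹' {1}).indicator (fun _ => (1:ℝ)) | m']) μ :=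
    ((stronglyMeasurable_condExp (m := m')).mono hm').aestronglyMeasurable
  have hfι_int : Integrable (fun x => f x * (A ⁻¹' {1}).indicator (fun _ => (1:ℝ)) x) μ := by
    refine Integrable.mono hfint
      ((hf.mul (measurable_const.indicator hT)).aestronglyMeasurable) ?_
    refine Eventually.of_forall fun x => ?_
    calc ‖f x * (A ⁻¹' {1}).indicator (fun _ => (1:ℝ)) x‖
        = ‖f x‖ * ‖(A ⁻¹' {1}).indicator (fun _ => (1:ℝ)) x‖ := norm_mul _ _
      _ ≤ ‖f x‖ * 1 := mul_le_mul_of_nonneg_left (hι_bdd x) (norm_nonneg _)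
      _ = ‖f x‖ := mul_one _
  have hwf_int : Integrable (fun x =>
      (μ[(A ⁻¹' {1}).indicator (fun _ => (1:ℝ)) | m']) x * f x) μ :=
    hfint.bdd_mul hw_meas hw_bdd
  have hpull : μ[fun x => (μ[(A ⁻¹' {1}).indicator (fun _ => (1:ℝ)) | m']) x * f x | m']
      =ᵐ[μ] fun x => (μ[(A ⁻¹' {1}).indicator (fun _ => (1:ℝ)) | m']) x * (μ[f | m']) x := by
    have := condExp_stronglyMeasurable_mul_of_bound hm'
      (stronglyMeasurable_condExp (m := m')) hfint 1 hw_bdd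
    filter_upwards [this] with x hx
    exact hx
  have hg_int : Integrable (fun x =>
      (μ[f | m']) x * (μ[(A ⁻¹' {1}).indicator (fun _ => (1:ℝ)) | m']) x) μ := by
    have := (integrable_condExp (f := f) (m := m')).bdd_mul hw_meas hw_bdd
    refine this.congr (Eventually.of_forall fun x => mul_comm _ _)
  refine (ae_eq_condExp_of_forall_setIntegral_eq hm' hfι_int
    (fun s _ _ => hg_int.integrableOn) (fun s hs _ => ?_) ?_).symm
  · calc ∫ x in s, (μ[f | m']) x * (μ[(A ⁻¹' {1}).indicator (fun _ => (1:ℝ)) | m']) x ∂μ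
        = ∫ x in s, (μ[(A ⁻¹' {1}).indicator (fun _ => (1:ℝ)) | m']) x * (μ[f | m']) x ∂μ :=
          integral_congr_ae (Eventually.of_forall fun x => mul_comm _ _)
      _ = ∫ x in s, (μ[fun x =>
            (μ[(A ⁻¹' {1}).indicator (fun _ => (1:ℝ)) | m']) x * f x | m']) x ∂μ := by
          refine integral_congr_ae (ae_restrict_of_ae ?_)
          filter_upwards [hpull] with x hx
          exact hx.symm
      _ = ∫ x in s, (μ[(A ⁻¹' {1}).indicator (fun _ => (1:ℝ)) | m']) x * f x ∂μ :=
          setIntegral_condExp hm' hwf_int hs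
      _ = ∫ x in s, f x * (μ[(A ⁻¹' {1}).indicator (fun _ => (1:ℝ)) | m']) x ∂μ :=
          integral_congr_ae (Eventually.of_forall fun x => mul_comm _ _)
      _ = ∫ x in s, f x * (A ⁻¹' {1}).indicator (fun _ => (1:ℝ)) x ∂μ :=
          (ipw_aux_core hm' hf hA hfint hindep hs).symm
  · exact ((stronglyMeasurable_condExp.mul stronglyMeasurable_condExp)).aestronglyMeasurable

end IPWAuxCore

/-- **IPW identification of the treated potential-outcome mean.**
Under consistency, positivity, and no unmeasured confounding,
`E[A·Y / e(X)] = E[Y(1)]`, where `e(X)` is the propensity score. -/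
theorem ipw_identifies_treated_mean
    {Ω 𝒳 : Type*} [MeasurableSpace Ω] [StandardBorelSpace Ω]
    [m𝒳 : MeasurableSpace 𝒳]
    {μ : Measure Ω} [IsProbabilityMeasure μ]
    (X : Ω → 𝒳) (A Y Y0 Y1 : Ω → ℝ) (e : 𝒳 → ℝ)
    (hX : Measurable X) (hA : Measurable A) (hY : Measurable Y)
    (hY0 : Measurable Y0) (hY1 : Measurable Y1) (he : Measurable e)
    (hY0int : Integrable Y0 μ) (hY1int : Integrable Y1 μ)
    -- binary treatment
    (hAbin : ∀ ω, A ω = 0 ∨ A ω = 1)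
    -- consistency: Y = Y(A) almost surely
    (hcons : ∀ᵐ ω ∂μ, Y ω = if A ω = 1 then Y1 ω else Y0 ω)
    -- the propensity score e(X) is a version of E[A | σ(X)]
    (hps : μ[A | MeasurableSpace.comap X m𝒳] =ᵐ[μ] fun ω => e (X ω))
    -- positivity
    {η : ℝ} (hη : 0 < η)
    (hpos : ∀ᵐ ω ∂μ, η ≤ e (X ω) ∧ e (X ω) ≤ 1 - η)
    -- no unmeasured confounding: (Y(0), Y(1)) ⫫ A ∣ σ(X)
    (hignor : CondIndepFun (MeasurableSpace.comap X m𝒳) hX.comap_le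
      (fun ω => (Y0 ω, Y1 ω)) A μ) :
    ∫ ω, A ω * Y ω / e (X ω) ∂μ = ∫ ω, Y1 ω ∂μ := by
  have hm' : MeasurableSpace.comap X m𝒳 ≤ ‹MeasurableSpace Ω› := hX.comap_le
  -- conditional independence of Y1 and A
  have hY1A : CondIndepFun (MeasurableSpace.comap X m𝒳) hX.comap_le Y1 A μ := by
    have h := hignor.comp measurable_snd measurable_id
    simpa [Function.comp_def] using h
  have hT : MeasurableSet (A ⁻¹' {1}) := hA (measurableSet_singleton 1)
  -- A is the indicator of {A = 1}
  have hAind : A = (A ⁻¹' {1}).indicator (fun _ => (1:ℝ)) := by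
    funext ω
    rcases hAbin ω with h0 | h1
    · have hni : ω ∉ A ⁻¹' {1} := by simp [Set.mem_preimage, h0]
      simp [Set.indicator_of_notMem hni, h0]
    · have hi : ω ∈ A ⁻¹' {1} := by simp [Set.mem_preimage, h1]
      simp [Set.indicator_of_mem hi, h1]
  -- the propensity score is the conditional probability of {A = 1}
  have hw : μ[(A ⁻¹' {1}).indicator (fun _ => (1:ℝ)) | MeasurableSpace.comap X m𝒳]
      =ᵐ[μ] fun ω => e (X ω) := by rw [← hAind]; exact hps
  have hkey := ipw_aux_condexp_mul hX.comap_le hY1 hA hY1int hY1A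
  -- integrability facts
  have hι_bdd : ∀ ω, ‖(A ⁻¹' {1}).indicator (fun _ => (1:ℝ)) ω‖ ≤ 1 := by
    intro ω
    by_cases hx : ω ∈ A ⁻¹' {1} <;> simp [Set.indicator_apply, hx]
  have hq_int : Integrable (fun ω => Y1 ω * (A ⁻¹' {1}).indicator (fun _ => (1:ℝ)) ω) μ := by
    refine Integrable.mono hY1int
      ((hY1.mul (measurable_const.indicator hT)).aestronglyMeasurable)
      (Eventually.of_forall fun ω => ?_)
    calc ‖Y1 ω * (A ⁻¹' {1}).indicator (fun _ => (1:ℝ)) ω‖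
        = ‖Y1 ω‖ * ‖(A ⁻¹' {1}).indicator (fun _ => (1:ℝ)) ω‖ := norm_mul _ _
      _ ≤ ‖Y1 ω‖ * 1 := mul_le_mul_of_nonneg_left (hι_bdd ω) (norm_nonneg _)
      _ = ‖Y1 ω‖ := mul_one _
  have hc_sm : StronglyMeasurable[MeasurableSpace.comap X m𝒳] (fun ω => (e (X ω))⁻¹) :=
    ((he.comp (measurable_iff_comap_le.mpr le_rfl)).inv).stronglyMeasurable
  have hc_bdd : ∀ᵐ ω ∂μ, ‖(e (X ω))⁻¹‖ ≤ η⁻¹ := by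
    filter_upwards [hpos] with ω hω
    have h1 : 0 < e (X ω) := lt_of_lt_of_le hη hω.1
    rw [Real.norm_eq_abs, abs_of_pos (inv_pos.mpr h1)]
    exact inv_anti₀ hη hω.1
  -- rewrite the integrand
  have hstep1 : (fun ω => A ω * Y ω / e (X ω)) =ᵐ[μ]
      fun ω => (e (X ω))⁻¹ * (Y1 ω * (A ⁻¹' {1}).indicator (fun _ => (1:ℝ)) ω) := by
    filter_upwards [hcons] with ω hω
    rcases hAbin ω with h0 | h1
    · have hni : ω ∉ A ⁻¹' {1} := by simp [Set.mem_preimage, h0]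
      simp [h0, Set.indicator_of_notMem hni]
    · have hi : ω ∈ A ⁻¹' {1} := by simp [Set.mem_preimage, h1]
      rw [hω, if_pos h1, h1, Set.indicator_of_mem hi]
      ring
  -- the conditional expectation of the transformed integrand
  have hpull : μ[fun ω => (e (X ω))⁻¹ * (Y1 ω * (A ⁻¹' {1}).indicator (fun _ => (1:ℝ)) ω)
        | MeasurableSpace.comap X m𝒳]
      =ᵐ[μ] fun ω => (e (X ω))⁻¹
        * (μ[fun ω => Y1 ω * (A ⁻¹' {1}).indicator (fun _ => (1:ℝ)) ω
            | MeasurableSpace.comap X m𝒳]) ω := by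
    have := condExp_stronglyMeasurable_mul_of_bound hm' hc_sm hq_int η⁻¹ hc_bdd
    filter_upwards [this] with ω hω
    exact hω
  have hfinal : μ[fun ω => (e (X ω))⁻¹ * (Y1 ω * (A ⁻¹' {1}).indicator (fun _ => (1:ℝ)) ω)
        | MeasurableSpace.comap X m𝒳]
      =ᵐ[μ] μ[Y1 | MeasurableSpace.comap X m𝒳] := by
    filter_upwards [hpull, hkey, hw, hpos] with ω h1 h2 h3 h4
    rw [h1, h2, h3]
    have hne : e (X ω) ≠ 0 := ne_of_gt (lt_of_lt_of_le hη h4.1)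
    field_simp
  calc ∫ ω, A ω * Y ω / e (X ω) ∂μ
      = ∫ ω, (e (X ω))⁻¹ * (Y1 ω * (A ⁻¹' {1}).indicator (fun _ => (1:ℝ)) ω) ∂μ :=
        integral_congr_ae hstep1
    _ = ∫ ω, (μ[fun ω => (e (X ω))⁻¹ * (Y1 ω * (A ⁻¹' {1}).indicator (fun _ => (1:ℝ)) ω)
          | MeasurableSpace.comap X m𝒳]) ω ∂μ := (integral_condExp hm').symm
    _ = ∫ ω, (μ[Y1 | MeasurableSpace.comap X m𝒳]) ω ∂μ := integral_congr_ae hfinal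
    _ = ∫ ω, Y1 ω ∂μ := integral_condExp hm'
end

section
/- Double robustness of the AIPTW functional when the propensity score is correct: under consistency, positivity, and no unmeasured confounding, for ANY bounded measurable function m̃ : {0,1} × 𝒳 → ℝ (a possibly misspecified outcome model), E[ m̃(1, X) + A·(Y − m̃(1, X))/e(X) − m̃(0, X) − (1 − A)·(Y − m̃(0, X))/(1 − e(X)) ] = Δ, where e(X) is the true propensity score. -/
open MeasureTheory ProbabilityTheory

open scoped ENNReal NNReal

/-- Pull-out: for an `m`-strongly-measurable a.e.-bounded `ψ` and integrable `W`,
`∫ ψ·W = ∫ ψ·E[W|m]`. -/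
lemma aux_integral_mul_condexp {Ω : Type*} [mΩ : MeasurableSpace Ω]
    {μ : Measure Ω} [IsProbabilityMeasure μ]
    {m : MeasurableSpace Ω} (hm : m ≤ mΩ)
    {ψ W : Ω → ℝ} {c : ℝ} (hψ : StronglyMeasurable[m] ψ)
    (hbd : ∀ᵐ ω ∂μ, ‖ψ ω‖ ≤ c) (hW : Integrable W μ) :
    ∫ ω, ψ ω * W ω ∂μ = ∫ ω, ψ ω * (μ[W|m]) ω ∂μ := by
  have h1 : μ[ψ * W|m] =ᵐ[μ] ψ * μ[W|m] :=
    condExp_stronglyMeasurable_mul_of_bound hm hψ hW c hbd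
  have h2 : ∫ ω, (μ[ψ * W|m]) ω ∂μ = ∫ ω, (ψ * W) ω ∂μ := integral_condExp hm
  calc ∫ ω, ψ ω * W ω ∂μ = ∫ ω, (μ[ψ * W|m]) ω ∂μ := h2.symm
    _ = ∫ ω, ψ ω * (μ[W|m]) ω ∂μ := integral_congr_ae h1

/-- Key lemma: for a binary `A` conditionally independent of `F` given `m`,
an `m`-measurable a.e.-bounded nonnegative `g`, and a `σ(F)`-measurable `Z`,
`∫ g·A·Z = ∫ g·E[A|m]·Z`. -/
lemma aux_integral_indep_binary {Ω β : Type*} [mΩ : MeasurableSpace Ω] [StandardBorelSpace Ω]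
    {μ : Measure Ω} [IsProbabilityMeasure μ]
    {mβ : MeasurableSpace β}
    {F : Ω → β} (hF : Measurable F) {A : Ω → ℝ} (hA : Measurable A)
    (hAbin : ∀ ω, A ω = 0 ∨ A ω = 1)
    {g : Ω → ℝ} (hgm : Measurable g)
    {c : ℝ} (hgbd : ∀ᵐ ω ∂μ, ‖g ω‖ ≤ c) (hg0 : ∀ᵐ ω ∂μ, 0 ≤ g ω)
    {Z : Ω → ℝ} (hZ : Measurable[MeasurableSpace.comap F mβ] Z)
    {m : MeasurableSpace Ω} (hm : m ≤ mΩ)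
    (hindep : CondIndepFun m hm F A μ)
    (hgsm : StronglyMeasurable[m] g) :
    ∫ ω, g ω * A ω * Z ω ∂μ = ∫ ω, g ω * (μ[A|m]) ω * Z ω ∂μ := by
  letI : MeasurableSpace Ω := mΩ
  have hmF : MeasurableSpace.comap F mβ ≤ mΩ := hF.comap_le
  set T : Set Ω := A ⁻¹' {1} with hT
  have hTmF : MeasurableSet[MeasurableSpace.comap A (borel ℝ)] T := by
    exact ⟨{1}, measurableSet_singleton 1, rfl⟩
  have hTm : MeasurableSet T := hA (measurableSet_singleton 1)
  have hA0 : ∀ ω, 0 ≤ A ω := fun ω => by rcases hAbin ω with h | h <;> simp [h]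
  have hA1 : ∀ ω, A ω ≤ 1 := fun ω => by rcases hAbin ω with h | h <;> simp [h]
  have hAeq : A = Set.indicator T fun _ => (1 : ℝ) := by
    funext ω
    rcases hAbin ω with h | h <;> simp [Set.indicator_apply, T, Set.mem_preimage, h]
  have hA_int : Integrable A μ :=
    (integrable_const (1 : ℝ)).mono' hA.aestronglyMeasurable
      (Filter.Eventually.of_forall fun ω => by
        rw [Real.norm_eq_abs, abs_of_nonneg (hA0 ω)]; exact hA1 ω)
  set ce := μ[A|m] with hce
  have hce_sm : StronglyMeasurable[m] ce := stronglyMeasurable_condExp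
  have hce_meas : Measurable ce := (hce_sm.mono hm).measurable
  have hce0 : 0 ≤ᵐ[μ] ce := condExp_nonneg (Filter.Eventually.of_forall hA0)
  have hce1 : ce ≤ᵐ[μ] fun _ => (1 : ℝ) := by
    have h := condExp_mono (μ := μ) (m := m) hA_int (integrable_const (1 : ℝ))
      (Filter.Eventually.of_forall hA1)
    rwa [condExp_const hm] at h
  have hc0 : 0 ≤ c := by
    have : (ae μ).NeBot := ae_neBot.2 (IsProbabilityMeasure.ne_zero μ)
    obtain ⟨ω, hω⟩ := hgbd.exists
    exact le_trans (norm_nonneg _) hω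
  -- the conditional independence hypothesis, in condexp form
  have hfact : ∀ t : Set Ω, MeasurableSet[MeasurableSpace.comap F mβ] t →
      (μ⟦t ∩ T | m⟧) =ᵐ[μ] (μ⟦t | m⟧) * (μ⟦T | m⟧) := by
    intro t ht
    exact (condIndepFun_iff _ _ F A hF hA μ).mp hindep t T ht hTmF
  -- the set-level identity
  have h1 : ∀ t : Set Ω, MeasurableSet[MeasurableSpace.comap F mβ] t →
      ∫ ω in t, g ω * A ω ∂μ = ∫ ω in t, g ω * ce ω ∂μ := by
    intro t ht
    have htm : MeasurableSet t := hmF t ht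
    have hind_int : Integrable (Set.indicator (t ∩ T) fun _ => (1 : ℝ)) μ :=
      (integrable_const (1 : ℝ)).indicator (htm.inter hTm)
    have hindt_int : Integrable (Set.indicator t fun _ => (1 : ℝ)) μ :=
      (integrable_const (1 : ℝ)).indicator htm
    have e1 : ∫ ω in t, g ω * A ω ∂μ
        = ∫ ω, g ω * Set.indicator (t ∩ T) (fun _ => (1 : ℝ)) ω ∂μ := by
      rw [← integral_indicator htm]
      congr 1
      funext ω
      by_cases hωt : ω ∈ t
      · by_cases hωT : ω ∈ T
        · have : A ω = 1 := hωT
          simp [Set.indicator_apply, hωt, hωT, this]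
        · have : A ω = 0 := by
            rcases hAbin ω with h | h
            · exact h
            · exact absurd h hωT
          simp [Set.indicator_apply, hωt, hωT, this]
      · simp [Set.indicator_apply, hωt]
    have e2 : ∫ ω, g ω * Set.indicator (t ∩ T) (fun _ => (1 : ℝ)) ω ∂μ
        = ∫ ω, g ω * (μ⟦t ∩ T | m⟧) ω ∂μ :=
      aux_integral_mul_condexp hm hgsm hgbd hind_int
    have e3 : ∫ ω, g ω * (μ⟦t ∩ T | m⟧) ω ∂μ
        = ∫ ω, (g ω * (μ⟦T | m⟧) ω) * (μ⟦t | m⟧) ω ∂μ := by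
      refine integral_congr_ae ?_
      filter_upwards [hfact t ht] with ω hω
      rw [hω, Pi.mul_apply]; ring
    have hgT_sm : StronglyMeasurable[m] (fun ω => g ω * (μ⟦T | m⟧) ω) :=
      hgsm.mul stronglyMeasurable_condExp
    have hceT : (μ⟦T | m⟧) = ce := by rw [hce, hAeq]
    have hgT_bd : ∀ᵐ ω ∂μ, ‖g ω * (μ⟦T | m⟧) ω‖ ≤ c := by
      rw [hceT]
      filter_upwards [hgbd, hce0, hce1] with ω h1' h2' h3'
      rw [norm_mul]
      calc ‖g ω‖ * ‖ce ω‖ ≤ c * 1 := by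
            refine mul_le_mul h1' ?_ (norm_nonneg _) hc0
            rw [Real.norm_eq_abs, abs_of_nonneg h2']; exact h3'
        _ = c := mul_one c
    have e4 : ∫ ω, (g ω * (μ⟦T | m⟧) ω) * Set.indicator t (fun _ => (1 : ℝ)) ω ∂μ
        = ∫ ω, (g ω * (μ⟦T | m⟧) ω) * (μ⟦t | m⟧) ω ∂μ :=
      aux_integral_mul_condexp hm hgT_sm hgT_bd hindt_int
    have e5 : ∫ ω in t, g ω * ce ω ∂μ
        = ∫ ω, (g ω * (μ⟦T | m⟧) ω) * Set.indicator t (fun _ => (1 : ℝ)) ω ∂μ := by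
      rw [← integral_indicator htm, hceT]
      congr 1
      funext ω
      by_cases hωt : ω ∈ t <;> simp [Set.indicator_apply, hωt]
    rw [e1, e2, e3, e5, e4]
  -- densities and measures
  have hd1m : Measurable fun ω => Real.toNNReal (g ω * A ω) :=
    (hgm.mul hA).real_toNNReal
  have hd2m : Measurable fun ω => Real.toNNReal (g ω * ce ω) :=
    (hgm.mul hce_meas).real_toNNReal
  set ν1 := μ.withDensity fun ω => ((Real.toNNReal (g ω * A ω) : ℝ≥0) : ℝ≥0∞) with hν1
  set ν2 := μ.withDensity fun ω => ((Real.toNNReal (g ω * ce ω) : ℝ≥0) : ℝ≥0∞) with hν2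
  have hgA_int : Integrable (fun ω => g ω * A ω) μ := hA_int.bdd_mul
    (hgsm.mono hm).aestronglyMeasurable hgbd
  have hgce_int : Integrable (fun ω => g ω * ce ω) μ := integrable_condExp.bdd_mul
    (hgsm.mono hm).aestronglyMeasurable hgbd
  have hνeq : ∀ t : Set Ω, MeasurableSet[MeasurableSpace.comap F mβ] t → ν1 t = ν2 t := by
    intro t ht
    have htm : MeasurableSet t := hmF t ht
    rw [hν1, hν2, withDensity_apply _ htm, withDensity_apply _ htm]
    have k1 : ∫⁻ ω in t, ((Real.toNNReal (g ω * A ω) : ℝ≥0) : ℝ≥0∞) ∂μ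
        = ENNReal.ofReal (∫ ω in t, g ω * A ω ∂μ) := by
      rw [ofReal_integral_eq_lintegral_ofReal hgA_int.integrableOn
        (ae_restrict_of_ae (hg0.mono fun ω h => mul_nonneg h (hA0 ω)))]
      rfl
    have k2 : ∫⁻ ω in t, ((Real.toNNReal (g ω * ce ω) : ℝ≥0) : ℝ≥0∞) ∂μ
        = ENNReal.ofReal (∫ ω in t, g ω * ce ω ∂μ) := by
      rw [ofReal_integral_eq_lintegral_ofReal hgce_int.integrableOn
        (ae_restrict_of_ae ((hg0.and hce0).mono fun ω h => mul_nonneg h.1 h.2))]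
      rfl
    rw [k1, k2, h1 t ht]
  have htrim : ν1.trim hmF = ν2.trim hmF := by
    refine @Measure.ext Ω (MeasurableSpace.comap F mβ) _ _ (fun s hs => ?_)
    rw [trim_measurableSet_eq hmF hs, trim_measurableSet_eq hmF hs, hνeq s hs]
  have hZsm : StronglyMeasurable[MeasurableSpace.comap F mβ] Z := hZ.stronglyMeasurable
  have j1 : ∫ ω, g ω * A ω * Z ω ∂μ = ∫ ω, Z ω ∂ν1 := by
    rw [hν1, integral_withDensity_eq_integral_smul hd1m]
    refine integral_congr_ae ?_
    filter_upwards [hg0] with ω h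
    rw [NNReal.smul_def, Real.coe_toNNReal _ (mul_nonneg h (hA0 ω)), smul_eq_mul]
  have j2 : ∫ ω, g ω * ce ω * Z ω ∂μ = ∫ ω, Z ω ∂ν2 := by
    rw [hν2, integral_withDensity_eq_integral_smul hd2m]
    refine integral_congr_ae ?_
    filter_upwards [hg0.and hce0] with ω h
    rw [NNReal.smul_def, Real.coe_toNNReal _ (mul_nonneg h.1 h.2), smul_eq_mul]
  rw [j1, j2, integral_trim hmF hZsm, integral_trim hmF hZsm, htrim]

/-- **Double robustness of the AIPTW functional with a correct propensity score.**
Under consistency, positivity, and no unmeasured confounding, for ANY bounded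
measurable (possibly misspecified) outcome model `m̃ : {0,1} × 𝒳 → ℝ`
(encoded by its two sections `mt1 = m̃(1,·)` and `mt0 = m̃(0,·)`),
`E[ m̃(1,X) + A(Y − m̃(1,X))/e(X) − m̃(0,X) − (1−A)(Y − m̃(0,X))/(1−e(X)) ] = Δ`,
where `e(X)` is the true propensity score and `Δ = E[Y(1) − Y(0)]`. -/
theorem aiptw_double_robust_ps_correct
    {Ω 𝒳 : Type*} [MeasurableSpace Ω] [StandardBorelSpace Ω]
    [m𝒳 : MeasurableSpace 𝒳]
    {μ : Measure Ω} [IsProbabilityMeasure μ]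
    (X : Ω → 𝒳) (A Y Y0 Y1 : Ω → ℝ) (e : 𝒳 → ℝ)
    (hX : Measurable X) (hA : Measurable A) (hY : Measurable Y)
    (hY0 : Measurable Y0) (hY1 : Measurable Y1) (he : Measurable e)
    (hY0int : Integrable Y0 μ) (hY1int : Integrable Y1 μ)
    -- binary treatment
    (hAbin : ∀ ω, A ω = 0 ∨ A ω = 1)
    -- consistency: Y = Y(A) almost surely
    (hcons : ∀ᵐ ω ∂μ, Y ω = if A ω = 1 then Y1 ω else Y0 ω)
    -- the propensity score e(X) is a version of E[A | σ(X)]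
    (hps : μ[A | MeasurableSpace.comap X m𝒳] =ᵐ[μ] fun ω => e (X ω))
    -- positivity
    {η : ℝ} (hη : 0 < η)
    (hpos : ∀ᵐ ω ∂μ, η ≤ e (X ω) ∧ e (X ω) ≤ 1 - η)
    -- no unmeasured confounding: (Y(0), Y(1)) ⫫ A ∣ σ(X)
    (hignor : CondIndepFun (MeasurableSpace.comap X m𝒳) hX.comap_le
      (fun ω => (Y0 ω, Y1 ω)) A μ)
    -- an arbitrary bounded measurable (possibly misspecified) outcome model
    (mt1 mt0 : 𝒳 → ℝ) (hmt1 : Measurable mt1) (hmt0 : Measurable mt0)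
    (C : ℝ) (hmtbdd : ∀ x, |mt1 x| ≤ C ∧ |mt0 x| ≤ C) :
    ∫ ω, (mt1 (X ω) + A ω * (Y ω - mt1 (X ω)) / e (X ω)
          - mt0 (X ω) - (1 - A ω) * (Y ω - mt0 (X ω)) / (1 - e (X ω))) ∂μ
      = ∫ ω, (Y1 ω - Y0 ω) ∂μ := by
  have haeNB : (ae μ).NeBot := ae_neBot.2 (IsProbabilityMeasure.ne_zero μ)
  obtain ⟨ω₀, -⟩ := hpos.exists
  have hC0 : 0 ≤ C := le_trans (abs_nonneg _) (hmtbdd (X ω₀)).1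
  have hm : MeasurableSpace.comap X m𝒳 ≤ ‹MeasurableSpace Ω› := hX.comap_le
  have hXm : Measurable[MeasurableSpace.comap X m𝒳] X := Measurable.of_comap_le le_rfl
  -- the two inverse-weight functions
  have hg1m : Measurable fun ω => (e (X ω))⁻¹ := (he.comp hX).inv
  have hg1sm : StronglyMeasurable[MeasurableSpace.comap X m𝒳] fun ω => (e (X ω))⁻¹ :=
    ((he.comp hXm).inv).stronglyMeasurable
  have hg0m : Measurable fun ω => (1 - e (X ω))⁻¹ := (measurable_const.sub (he.comp hX)).inv
  have hg0sm : StronglyMeasurable[MeasurableSpace.comap X m𝒳] fun ω => (1 - e (X ω))⁻¹ :=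
    ((measurable_const.sub (he.comp hXm)).inv).stronglyMeasurable
  have he1 : ∀ᵐ ω ∂μ, 0 < e (X ω) := hpos.mono fun ω h => lt_of_lt_of_le hη h.1
  have he0 : ∀ᵐ ω ∂μ, 0 < 1 - e (X ω) := hpos.mono fun ω h =>
    lt_of_lt_of_le hη (by linarith [h.2])
  have hg1bd : ∀ᵐ ω ∂μ, ‖(e (X ω))⁻¹‖ ≤ η⁻¹ := by
    filter_upwards [hpos, he1] with ω h h'
    rw [Real.norm_eq_abs, abs_of_pos (inv_pos.2 h')]
    exact inv_anti₀ hη h.1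
  have hg10 : ∀ᵐ ω ∂μ, 0 ≤ (e (X ω))⁻¹ := he1.mono fun ω h => (inv_pos.2 h).le
  have hg0bd : ∀ᵐ ω ∂μ, ‖(1 - e (X ω))⁻¹‖ ≤ η⁻¹ := by
    filter_upwards [hpos, he0] with ω h h'
    rw [Real.norm_eq_abs, abs_of_pos (inv_pos.2 h')]
    exact inv_anti₀ hη (by linarith [h.2])
  have hg00 : ∀ᵐ ω ∂μ, 0 ≤ (1 - e (X ω))⁻¹ := he0.mono fun ω h => (inv_pos.2 h).le
  -- A and 1 - A
  have hA0 : ∀ ω, 0 ≤ A ω := fun ω => by rcases hAbin ω with h | h <;> simp [h]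
  have hA1 : ∀ ω, A ω ≤ 1 := fun ω => by rcases hAbin ω with h | h <;> simp [h]
  have hA_int : Integrable A μ :=
    (integrable_const (1 : ℝ)).mono' hA.aestronglyMeasurable
      (Filter.Eventually.of_forall fun ω => by
        rw [Real.norm_eq_abs, abs_of_nonneg (hA0 ω)]; exact hA1 ω)
  have hA'm : Measurable fun ω => 1 - A ω := measurable_const.sub hA
  have hA'bin : ∀ ω, (1 - A ω) = 0 ∨ (1 - A ω) = 1 := fun ω => by
    rcases hAbin ω with h | h <;> simp [h]
  -- conditional expectation of 1 - A
  have hps' : μ[(fun ω => 1 - A ω) | MeasurableSpace.comap X m𝒳]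
      =ᵐ[μ] fun ω => 1 - e (X ω) := by
    have h := condExp_sub (μ := μ) (m := MeasurableSpace.comap X m𝒳)
      (integrable_const (1 : ℝ)) hA_int
    rw [condExp_const hm] at h
    have h2 : ((fun _ => (1:ℝ)) - A) = fun ω => 1 - A ω := rfl
    rw [h2] at h
    filter_upwards [h, hps] with ω h h'
    rw [h, Pi.sub_apply, h']
  -- conditional independence of (Y0, Y1) and 1 - A
  have hignor' : CondIndepFun (MeasurableSpace.comap X m𝒳) hX.comap_le
      (fun ω => (Y0 ω, Y1 ω)) (fun ω => 1 - A ω) μ :=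
    hignor.comp measurable_id (measurable_const.sub measurable_id)
  -- measurability of Y1, Y0 w.r.t. the pair
  have hF : Measurable fun ω => (Y0 ω, Y1 ω) := hY0.prodMk hY1
  have hZ1 : Measurable[MeasurableSpace.comap (fun ω => (Y0 ω, Y1 ω)) inferInstance] Y1 :=
    measurable_snd.comp (Measurable.of_comap_le le_rfl)
  have hZ0 : Measurable[MeasurableSpace.comap (fun ω => (Y0 ω, Y1 ω)) inferInstance] Y0 :=
    measurable_fst.comp (Measurable.of_comap_le le_rfl)
  -- the four key integral identities
  have E2 : ∫ ω, (e (X ω))⁻¹ * A ω * Y1 ω ∂μ = ∫ ω, Y1 ω ∂μ := by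
    rw [aux_integral_indep_binary hF hA hAbin hg1m hg1bd hg10 hZ1 hm hignor hg1sm]
    refine integral_congr_ae ?_
    filter_upwards [hps, he1] with ω h h'
    rw [h]
    field_simp
  have E5 : ∫ ω, (1 - e (X ω))⁻¹ * (1 - A ω) * Y0 ω ∂μ = ∫ ω, Y0 ω ∂μ := by
    rw [aux_integral_indep_binary hF hA'm hA'bin hg0m hg0bd hg00 hZ0 hm hignor' hg0sm]
    refine integral_congr_ae ?_
    filter_upwards [hps', he0] with ω h h'
    rw [h]
    field_simp
  have hpsi1_sm : StronglyMeasurable[MeasurableSpace.comap X m𝒳]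
      fun ω => (e (X ω))⁻¹ * mt1 (X ω) :=
    hg1sm.mul ((hmt1.comp hXm).stronglyMeasurable)
  have hpsi1_bd : ∀ᵐ ω ∂μ, ‖(e (X ω))⁻¹ * mt1 (X ω)‖ ≤ η⁻¹ * C := by
    filter_upwards [hg1bd] with ω h
    rw [norm_mul]
    exact mul_le_mul h (by rw [Real.norm_eq_abs]; exact (hmtbdd (X ω)).1)
      (norm_nonneg _) (inv_nonneg.2 hη.le)
  have E3 : ∫ ω, (e (X ω))⁻¹ * mt1 (X ω) * A ω ∂μ = ∫ ω, mt1 (X ω) ∂μ := by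
    rw [aux_integral_mul_condexp hm hpsi1_sm hpsi1_bd hA_int]
    refine integral_congr_ae ?_
    filter_upwards [hps, he1] with ω h h'
    rw [h]
    field_simp
  have hpsi0_sm : StronglyMeasurable[MeasurableSpace.comap X m𝒳]
      fun ω => (1 - e (X ω))⁻¹ * mt0 (X ω) :=
    hg0sm.mul ((hmt0.comp hXm).stronglyMeasurable)
  have hpsi0_bd : ∀ᵐ ω ∂μ, ‖(1 - e (X ω))⁻¹ * mt0 (X ω)‖ ≤ η⁻¹ * C := by
    filter_upwards [hg0bd] with ω h
    rw [norm_mul]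
    exact mul_le_mul h (by rw [Real.norm_eq_abs]; exact (hmtbdd (X ω)).2)
      (norm_nonneg _) (inv_nonneg.2 hη.le)
  have hA'_int : Integrable (fun ω => 1 - A ω) μ := (integrable_const (1 : ℝ)).sub hA_int
  have E6 : ∫ ω, (1 - e (X ω))⁻¹ * mt0 (X ω) * (1 - A ω) ∂μ = ∫ ω, mt0 (X ω) ∂μ := by
    rw [aux_integral_mul_condexp hm hpsi0_sm hpsi0_bd hA'_int]
    refine integral_congr_ae ?_
    filter_upwards [hps', he0] with ω h h'
    rw [h]
    field_simp
  -- integrability of the six pieces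
  have i1 : Integrable (fun ω => mt1 (X ω)) μ :=
    (integrable_const C).mono' (hmt1.comp hX).aestronglyMeasurable
      (Filter.Eventually.of_forall fun ω => by
        rw [Real.norm_eq_abs]; exact (hmtbdd (X ω)).1)
  have i4 : Integrable (fun ω => mt0 (X ω)) μ :=
    (integrable_const C).mono' (hmt0.comp hX).aestronglyMeasurable
      (Filter.Eventually.of_forall fun ω => by
        rw [Real.norm_eq_abs]; exact (hmtbdd (X ω)).2)
  have i2 : Integrable (fun ω => (e (X ω))⁻¹ * A ω * Y1 ω) μ := by
    refine hY1int.bdd_mul (c := η⁻¹) ((hg1m.mul hA).aestronglyMeasurable) ?_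
    filter_upwards [hg1bd] with ω h
    rw [norm_mul]
    calc ‖(e (X ω))⁻¹‖ * ‖A ω‖ ≤ η⁻¹ * 1 := by
          refine mul_le_mul h ?_ (norm_nonneg _) (inv_nonneg.2 hη.le)
          rw [Real.norm_eq_abs, abs_of_nonneg (hA0 ω)]; exact hA1 ω
      _ = η⁻¹ := mul_one _
  have i5 : Integrable (fun ω => (1 - e (X ω))⁻¹ * (1 - A ω) * Y0 ω) μ := by
    refine hY0int.bdd_mul (c := η⁻¹) ((hg0m.mul hA'm).aestronglyMeasurable) ?_
    filter_upwards [hg0bd] with ω h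
    rw [norm_mul]
    calc ‖(1 - e (X ω))⁻¹‖ * ‖1 - A ω‖ ≤ η⁻¹ * 1 := by
          refine mul_le_mul h ?_ (norm_nonneg _) (inv_nonneg.2 hη.le)
          rw [Real.norm_eq_abs]
          rcases hAbin ω with h' | h' <;> simp [h']
      _ = η⁻¹ := mul_one _
  have i3 : Integrable (fun ω => (e (X ω))⁻¹ * mt1 (X ω) * A ω) μ := by
    refine (integrable_const (η⁻¹ * C)).mono'
      ((hg1m.mul (hmt1.comp hX)).mul hA).aestronglyMeasurable ?_
    filter_upwards [hpsi1_bd] with ω h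
    rw [norm_mul]
    calc ‖(e (X ω))⁻¹ * mt1 (X ω)‖ * ‖A ω‖ ≤ (η⁻¹ * C) * 1 := by
          refine mul_le_mul h ?_ (norm_nonneg _) (mul_nonneg (inv_nonneg.2 hη.le) hC0)
          rw [Real.norm_eq_abs, abs_of_nonneg (hA0 ω)]; exact hA1 ω
      _ = η⁻¹ * C := mul_one _
  have i6 : Integrable (fun ω => (1 - e (X ω))⁻¹ * mt0 (X ω) * (1 - A ω)) μ := by
    refine (integrable_const (η⁻¹ * C)).mono'
      ((hg0m.mul (hmt0.comp hX)).mul hA'm).aestronglyMeasurable ?_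
    filter_upwards [hpsi0_bd] with ω h
    rw [norm_mul]
    calc ‖(1 - e (X ω))⁻¹ * mt0 (X ω)‖ * ‖1 - A ω‖ ≤ (η⁻¹ * C) * 1 := by
          refine mul_le_mul h ?_ (norm_nonneg _) (mul_nonneg (inv_nonneg.2 hη.le) hC0)
          rw [Real.norm_eq_abs]
          rcases hAbin ω with h' | h' <;> simp [h']
      _ = η⁻¹ * C := mul_one _
  -- rewrite the integrand a.e.
  have hrw : (fun ω => mt1 (X ω) + A ω * (Y ω - mt1 (X ω)) / e (X ω)
          - mt0 (X ω) - (1 - A ω) * (Y ω - mt0 (X ω)) / (1 - e (X ω)))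
      =ᵐ[μ] fun ω => mt1 (X ω) + (e (X ω))⁻¹ * A ω * Y1 ω
          - (e (X ω))⁻¹ * mt1 (X ω) * A ω - mt0 (X ω)
          - (1 - e (X ω))⁻¹ * (1 - A ω) * Y0 ω
          + (1 - e (X ω))⁻¹ * mt0 (X ω) * (1 - A ω) := by
    filter_upwards [hcons] with ω hY'
    rw [hY']
    rcases hAbin ω with h | h
    · rw [h]
      norm_num
      rw [div_eq_mul_inv]
      ring
    · rw [h]
      norm_num
      rw [div_eq_mul_inv]
      ring
  rw [integral_congr_ae hrw]
  have i12 : Integrable (fun ω => mt1 (X ω) + (e (X ω))⁻¹ * A ω * Y1 ω) μ := i1.add i2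
  have i123 : Integrable (fun ω => mt1 (X ω) + (e (X ω))⁻¹ * A ω * Y1 ω
      - (e (X ω))⁻¹ * mt1 (X ω) * A ω) μ := i12.sub i3
  have i1234 : Integrable (fun ω => mt1 (X ω) + (e (X ω))⁻¹ * A ω * Y1 ω
      - (e (X ω))⁻¹ * mt1 (X ω) * A ω - mt0 (X ω)) μ := i123.sub i4
  have i12345 : Integrable (fun ω => mt1 (X ω) + (e (X ω))⁻¹ * A ω * Y1 ω
      - (e (X ω))⁻¹ * mt1 (X ω) * A ω - mt0 (X ω)
      - (1 - e (X ω))⁻¹ * (1 - A ω) * Y0 ω) μ := i1234.sub i5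
  have s1 : ∫ ω, (mt1 (X ω) + (e (X ω))⁻¹ * A ω * Y1 ω
          - (e (X ω))⁻¹ * mt1 (X ω) * A ω - mt0 (X ω)
          - (1 - e (X ω))⁻¹ * (1 - A ω) * Y0 ω
          + (1 - e (X ω))⁻¹ * mt0 (X ω) * (1 - A ω)) ∂μ
      = ∫ ω, (mt1 (X ω) + (e (X ω))⁻¹ * A ω * Y1 ω
          - (e (X ω))⁻¹ * mt1 (X ω) * A ω - mt0 (X ω)
          - (1 - e (X ω))⁻¹ * (1 - A ω) * Y0 ω) ∂μ
        + ∫ ω, (1 - e (X ω))⁻¹ * mt0 (X ω) * (1 - A ω) ∂μ := integral_add i12345 i6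
  have s2 : ∫ ω, (mt1 (X ω) + (e (X ω))⁻¹ * A ω * Y1 ω
          - (e (X ω))⁻¹ * mt1 (X ω) * A ω - mt0 (X ω)
          - (1 - e (X ω))⁻¹ * (1 - A ω) * Y0 ω) ∂μ
      = ∫ ω, (mt1 (X ω) + (e (X ω))⁻¹ * A ω * Y1 ω
          - (e (X ω))⁻¹ * mt1 (X ω) * A ω - mt0 (X ω)) ∂μ
        - ∫ ω, (1 - e (X ω))⁻¹ * (1 - A ω) * Y0 ω ∂μ := integral_sub i1234 i5
  have s3 : ∫ ω, (mt1 (X ω) + (e (X ω))⁻¹ * A ω * Y1 ω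
          - (e (X ω))⁻¹ * mt1 (X ω) * A ω - mt0 (X ω)) ∂μ
      = ∫ ω, (mt1 (X ω) + (e (X ω))⁻¹ * A ω * Y1 ω
          - (e (X ω))⁻¹ * mt1 (X ω) * A ω) ∂μ - ∫ ω, mt0 (X ω) ∂μ := integral_sub i123 i4
  have s4 : ∫ ω, (mt1 (X ω) + (e (X ω))⁻¹ * A ω * Y1 ω
          - (e (X ω))⁻¹ * mt1 (X ω) * A ω) ∂μ
      = ∫ ω, (mt1 (X ω) + (e (X ω))⁻¹ * A ω * Y1 ω) ∂μ
        - ∫ ω, (e (X ω))⁻¹ * mt1 (X ω) * A ω ∂μ := integral_sub i12 i3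
  have s5 : ∫ ω, (mt1 (X ω) + (e (X ω))⁻¹ * A ω * Y1 ω) ∂μ
      = ∫ ω, mt1 (X ω) ∂μ + ∫ ω, (e (X ω))⁻¹ * A ω * Y1 ω ∂μ := integral_add i1 i2
  rw [s1, s2, s3, s4, s5, E2, E3, E5, E6, integral_sub hY1int hY0int]
  ring
end

section
/- Double robustness of the AIPTW functional when the outcome model is correct: under consistency, positivity, and no unmeasured confounding, for ANY measurable function ẽ : 𝒳 → ℝ with η ≤ ẽ(x) ≤ 1 − η for all x (a possibly misspecified propensity model), E[ m(1, X) + A·(Y − m(1, X))/ẽ(X) − m(0, X) − (1 − A)·(Y − m(0, X))/(1 − ẽ(X)) ] = Δ, where m(a, X) is the true conditional outcome mean. -/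
open MeasureTheory ProbabilityTheory MeasurableSpace Set

lemma aux_ae_indepFun {Ω : Type*} {m mΩ : MeasurableSpace Ω} [StandardBorelSpace Ω]
    {μ : Measure Ω} [IsFiniteMeasure μ] (hm : m ≤ mΩ)
    {f g : Ω → ℝ} (hf : Measurable f) (hg : Measurable g)
    (h : CondIndepFun m hm f g μ) :
    ∀ᵐ ω ∂μ, IndepFun f g (condExpKernel μ m ω) := by
  have h' := (Kernel.indepFun_iff_measure_inter_preimage_eq_mul).mp h
  have hae : ∀ᵐ ω ∂(μ.trim hm), ∀ q r : ℚ,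
      condExpKernel μ m ω (f ⁻¹' Iio (q : ℝ) ∩ g ⁻¹' Iio (r : ℝ))
        = condExpKernel μ m ω (f ⁻¹' Iio (q : ℝ)) * condExpKernel μ m ω (g ⁻¹' Iio (r : ℝ)) := by
    rw [ae_all_iff]
    intro q
    rw [ae_all_iff]
    intro r
    exact h' _ _ measurableSet_Iio measurableSet_Iio
  refine ae_of_ae_trim hm ?_
  filter_upwards [hae] with ω hω
  rw [IndepFun_iff_Indep]
  have hgen : ∀ (φ : Ω → ℝ), MeasurableSpace.comap φ (borel ℝ)
      = generateFrom (preimage φ '' (⋃ a : ℚ, {Iio (a : ℝ)})) := by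
    intro φ
    rw [Real.borel_eq_generateFrom_Iio_rat, comap_generateFrom]
  have hb : Real.measurableSpace = borel ℝ := BorelSpace.measurable_eq
  have hp : ∀ (φ : Ω → ℝ), IsPiSystem (preimage φ '' (⋃ a : ℚ, {Iio (a : ℝ)})) := by
    intro φ
    convert Real.isPiSystem_Iio_rat.comap φ using 1
    rfl
  have hsets : IndepSets (preimage f '' (⋃ a : ℚ, {Iio (a : ℝ)}))
      (preimage g '' (⋃ a : ℚ, {Iio (a : ℝ)})) (condExpKernel μ m ω) := by
    rintro t1 t2 ⟨s1, hs1, rfl⟩ ⟨s2, hs2, rfl⟩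
    simp only [mem_iUnion, mem_singleton_iff] at hs1 hs2
    obtain ⟨q, rfl⟩ := hs1
    obtain ⟨r, rfl⟩ := hs2
    exact Filter.Eventually.of_forall fun _ => hω q r
  exact IndepSets.indep hf.comap_le hg.comap_le (hp f) (hp g)
    (by rw [hb, hgen]) (by rw [hb, hgen]) hsets

lemma aux_condexp_mul {Ω : Type*} {m mΩ : MeasurableSpace Ω} [StandardBorelSpace Ω]
    {μ : Measure Ω} [IsProbabilityMeasure μ] (hm : m ≤ mΩ)
    {f g : Ω → ℝ} (hf : Measurable f) (hg : Measurable g)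
    (hfint : Integrable f μ) (hgbdd : ∀ ω, |g ω| ≤ 1)
    (h : CondIndepFun m hm f g μ) :
    μ[fun ω => f ω * g ω | m] =ᵐ[μ] fun ω => (μ[f|m]) ω * (μ[g|m]) ω := by
  have hae := aux_ae_indepFun hm hf hg h
  have hgint : Integrable g μ :=
    (integrable_const (1 : ℝ)).mono' hg.aestronglyMeasurable
      (Filter.Eventually.of_forall fun ω => by simpa using hgbdd ω)
  have hfgint : Integrable (fun ω => f ω * g ω) μ := by
    have := hfint.bdd_mul (c := 1) hg.aestronglyMeasurable
      (Filter.Eventually.of_forall fun ω => by simpa using hgbdd ω)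
    exact this.congr (Filter.Eventually.of_forall fun ω => mul_comm _ _)
  have h1 := condExp_ae_eq_integral_condExpKernel hm hfgint
  have h2 := condExp_ae_eq_integral_condExpKernel hm hfint
  have h3 := condExp_ae_eq_integral_condExpKernel hm hgint
  filter_upwards [h1, h2, h3, hae] with ω e1 e2 e3 hind
  rw [e1, e2, e3]
  exact hind.integral_fun_mul_eq_mul_integral hf.aestronglyMeasurable hg.aestronglyMeasurable

/-- **Double robustness of the AIPTW functional with a correct outcome model.**
Under consistency, positivity, and no unmeasured confounding, for ANY measurable
(possibly misspecified) propensity model `ẽ : 𝒳 → ℝ` with `η ≤ ẽ(x) ≤ 1 − η` for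
all `x`,
`E[ m(1,X) + A(Y − m(1,X))/ẽ(X) − m(0,X) − (1−A)(Y − m(0,X))/(1−ẽ(X)) ] = Δ`,
where `m(a,·)` is the true conditional outcome mean and `Δ = E[Y(1) − Y(0)]`. -/
theorem aiptw_double_robust_om_correct
    {Ω 𝒳 : Type*} [MeasurableSpace Ω] [StandardBorelSpace Ω]
    [m𝒳 : MeasurableSpace 𝒳]
    {μ : Measure Ω} [IsProbabilityMeasure μ]
    (X : Ω → 𝒳) (A Y Y0 Y1 : Ω → ℝ) (e : 𝒳 → ℝ) (m1 m0 : 𝒳 → ℝ)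
    (hX : Measurable X) (hA : Measurable A) (hY : Measurable Y)
    (hY0 : Measurable Y0) (hY1 : Measurable Y1) (he : Measurable e)
    (hm1 : Measurable m1) (hm0 : Measurable m0)
    (hY0int : Integrable Y0 μ) (hY1int : Integrable Y1 μ)
    -- binary treatment
    (hAbin : ∀ ω, A ω = 0 ∨ A ω = 1)
    -- consistency: Y = Y(A) almost surely
    (hcons : ∀ᵐ ω ∂μ, Y ω = if A ω = 1 then Y1 ω else Y0 ω)
    -- the propensity score e(X) is a version of E[A | σ(X)]
    (hps : μ[A | MeasurableSpace.comap X m𝒳] =ᵐ[μ] fun ω => e (X ω))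
    -- positivity
    {η : ℝ} (hη : 0 < η)
    (hpos : ∀ᵐ ω ∂μ, η ≤ e (X ω) ∧ e (X ω) ≤ 1 - η)
    -- no unmeasured confounding: (Y(0), Y(1)) ⫫ A ∣ σ(X)
    (hignor : CondIndepFun (MeasurableSpace.comap X m𝒳) hX.comap_le
      (fun ω => (Y0 ω, Y1 ω)) A μ)
    -- m(1,·) is a true conditional outcome mean
    (hcm1 : μ[fun ω => (if A ω = 1 then (1 : ℝ) else 0) * Y ω | MeasurableSpace.comap X m𝒳]
      =ᵐ[μ] fun ω => m1 (X ω) *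
        (μ[fun ω' => (if A ω' = 1 then (1 : ℝ) else 0) | MeasurableSpace.comap X m𝒳]) ω)
    -- m(0,·) is a true conditional outcome mean
    (hcm0 : μ[fun ω => (if A ω = 0 then (1 : ℝ) else 0) * Y ω | MeasurableSpace.comap X m𝒳]
      =ᵐ[μ] fun ω => m0 (X ω) *
        (μ[fun ω' => (if A ω' = 0 then (1 : ℝ) else 0) | MeasurableSpace.comap X m𝒳]) ω)
    -- an arbitrary measurable (possibly misspecified) propensity model bounded away from 0 and 1
    (et : 𝒳 → ℝ) (het : Measurable et)
    (hetbdd : ∀ x, η ≤ et x ∧ et x ≤ 1 - η) :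
    ∫ ω, (m1 (X ω) + A ω * (Y ω - m1 (X ω)) / et (X ω)
          - m0 (X ω) - (1 - A ω) * (Y ω - m0 (X ω)) / (1 - et (X ω))) ∂μ
      = ∫ ω, (Y1 ω - Y0 ω) ∂μ := by
  have hG : MeasurableSpace.comap X m𝒳 ≤ _ := hX.comap_le
  have hXG : Measurable[(MeasurableSpace.comap X m𝒳)] X := measurable_iff_comap_le.mpr le_rfl
  -- basic facts about A
  have hA1 : A = fun ω => if A ω = 1 then (1 : ℝ) else 0 := by
    funext ω; rcases hAbin ω with h | h <;> simp [h]
  have hA0 : (fun ω => 1 - A ω) = fun ω => if A ω = 0 then (1 : ℝ) else 0 := by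
    funext ω; rcases hAbin ω with h | h <;> simp [h]
  have hAbdd : ∀ ω, |A ω| ≤ 1 := by
    intro ω; rcases hAbin ω with h | h <;> simp [h]
  have hBbdd : ∀ ω, |1 - A ω| ≤ 1 := by
    intro ω; rcases hAbin ω with h | h <;> simp [h]
  have hAint : Integrable A μ :=
    (integrable_const (1 : ℝ)).mono' hA.aestronglyMeasurable
      (Filter.Eventually.of_forall fun ω => by simpa using hAbdd ω)
  -- integrability of Y
  have hYtilde_int : Integrable (fun ω => if A ω = 1 then Y1 ω else Y0 ω) μ := by
    refine (hY1int.norm.add hY0int.norm).mono'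
      ((Measurable.ite (hA (measurableSet_singleton 1)) hY1 hY0).aestronglyMeasurable) ?_
    refine Filter.Eventually.of_forall fun ω => ?_
    by_cases h : A ω = 1 <;> simp [h, abs_le] <;> constructor <;>
      cases abs_le.mp (le_refl |Y1 ω|) <;> nlinarith [abs_nonneg (Y1 ω), abs_nonneg (Y0 ω),
        neg_abs_le (Y1 ω), le_abs_self (Y1 ω), neg_abs_le (Y0 ω), le_abs_self (Y0 ω)]
  have hYint : Integrable Y μ := hYtilde_int.congr (Filter.EventuallyEq.symm hcons)
  -- helper: integrable times bounded measurable
  have mulbdd : ∀ (u v : Ω → ℝ) (c : ℝ), Integrable u μ → Measurable v → (∀ ω, |v ω| ≤ c) →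
      Integrable (fun ω => u ω * v ω) μ := by
    intro u v c hu hv hvb
    have := hu.bdd_mul (c := c) (hv.aestronglyMeasurable (μ := μ))
      (Filter.Eventually.of_forall fun ω => by simpa using hvb ω)
    exact this.congr (Filter.Eventually.of_forall fun ω => mul_comm _ _)
  -- cancellation helper
  have hcancel : ∀ (u v w : Ω → ℝ), (fun ω => u ω * w ω) =ᵐ[μ] (fun ω => v ω * w ω) →
      (∀ᵐ ω ∂μ, η ≤ w ω) → u =ᵐ[μ] v := by
    intro u v w h hw
    filter_upwards [h, hw] with ω h1 h2
    exact mul_right_cancel₀ (ne_of_gt (lt_of_lt_of_le hη h2)) h1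
  -- rewrite hcm1 in terms of A
  have e2 : μ[fun ω' => (if A ω' = 1 then (1 : ℝ) else 0) | (MeasurableSpace.comap X m𝒳)] = μ[A | (MeasurableSpace.comap X m𝒳)] := by rw [← hA1]
  have e1 : (fun ω => (if A ω = 1 then (1 : ℝ) else 0) * Y ω) =ᵐ[μ] (fun ω => A ω * Y ω) :=
    Filter.Eventually.of_forall fun ω => by rcases hAbin ω with h | h <;> simp [h]
  have hcm1' : μ[fun ω => A ω * Y ω | (MeasurableSpace.comap X m𝒳)] =ᵐ[μ] fun ω => m1 (X ω) * (μ[A | (MeasurableSpace.comap X m𝒳)]) ω := by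
    rw [e2] at hcm1
    exact (condExp_congr_ae e1).symm.trans hcm1
  -- rewrite hcm0 in terms of B := 1 - A
  have e2' : μ[fun ω' => (if A ω' = 0 then (1 : ℝ) else 0) | (MeasurableSpace.comap X m𝒳)] = μ[fun ω => 1 - A ω | (MeasurableSpace.comap X m𝒳)] := by
    rw [← hA0]
  have e1' : (fun ω => (if A ω = 0 then (1 : ℝ) else 0) * Y ω)
      =ᵐ[μ] (fun ω => (1 - A ω) * Y ω) :=
    Filter.Eventually.of_forall fun ω => by rcases hAbin ω with h | h <;> simp [h]
  have hcm0' : μ[fun ω => (1 - A ω) * Y ω | (MeasurableSpace.comap X m𝒳)]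
      =ᵐ[μ] fun ω => m0 (X ω) * (μ[fun ω' => 1 - A ω' | (MeasurableSpace.comap X m𝒳)]) ω := by
    rw [e2'] at hcm0
    exact (condExp_congr_ae e1').symm.trans hcm0
  -- conditional expectation of B
  have hBcond : μ[fun ω => 1 - A ω | (MeasurableSpace.comap X m𝒳)] =ᵐ[μ] fun ω => 1 - e (X ω) := by
    have h1 : μ[fun ω => 1 - A ω | (MeasurableSpace.comap X m𝒳)] =ᵐ[μ] μ[fun _ => (1:ℝ) | (MeasurableSpace.comap X m𝒳)] - μ[A | (MeasurableSpace.comap X m𝒳)] :=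
      condExp_sub (integrable_const 1) hAint _
    filter_upwards [h1, hps] with ω hω1 hω2
    simp only [Pi.sub_apply] at hω1
    rw [hω1, hω2, condExp_const hG (1:ℝ)]
  -- m1 (X ·) is a version of E[Y1 | (MeasurableSpace.comap X m𝒳)]
  have e3 : (fun ω => A ω * Y ω) =ᵐ[μ] (fun ω => Y1 ω * A ω) := by
    filter_upwards [hcons] with ω h
    rcases hAbin ω with h' | h' <;> simp [h', h]
  have hci1 : CondIndepFun (MeasurableSpace.comap X m𝒳) hG Y1 A μ := by
    have := hignor.comp (φ := Prod.snd) (ψ := id) measurable_snd measurable_id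
    exact this
  have hprod1 : μ[fun ω => Y1 ω * A ω | (MeasurableSpace.comap X m𝒳)] =ᵐ[μ] fun ω => (μ[Y1 | (MeasurableSpace.comap X m𝒳)]) ω * (μ[A | (MeasurableSpace.comap X m𝒳)]) ω :=
    aux_condexp_mul hG hY1 hA hY1int hAbdd hci1
  have hm1eq : (fun ω => m1 (X ω)) =ᵐ[μ] μ[Y1 | (MeasurableSpace.comap X m𝒳)] := by
    refine hcancel _ _ (μ[A | (MeasurableSpace.comap X m𝒳)]) ?_ ?_
    · exact hcm1'.symm.trans ((condExp_congr_ae e3).trans hprod1)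
    · filter_upwards [hps, hpos] with ω h1 h2
      rw [h1]; exact h2.1
  -- m0 (X ·) is a version of E[Y0 | (MeasurableSpace.comap X m𝒳)]
  have e3' : (fun ω => (1 - A ω) * Y ω) =ᵐ[μ] (fun ω => Y0 ω * (1 - A ω)) := by
    filter_upwards [hcons] with ω h
    rcases hAbin ω with h' | h' <;> simp [h', h]
  have hci0 : CondIndepFun (MeasurableSpace.comap X m𝒳) hG Y0 (fun ω => 1 - A ω) μ := by
    have := hignor.comp (φ := Prod.fst) (ψ := fun a : ℝ => 1 - a) measurable_fst
      (measurable_const.sub measurable_id)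
    exact this
  have hB : Measurable (fun ω => 1 - A ω) := measurable_const.sub hA
  have hprod0 : μ[fun ω => Y0 ω * (1 - A ω) | (MeasurableSpace.comap X m𝒳)]
      =ᵐ[μ] fun ω => (μ[Y0 | (MeasurableSpace.comap X m𝒳)]) ω * (μ[fun ω' => 1 - A ω' | (MeasurableSpace.comap X m𝒳)]) ω :=
    aux_condexp_mul hG hY0 hB hY0int hBbdd hci0
  have hm0eq : (fun ω => m0 (X ω)) =ᵐ[μ] μ[Y0 | (MeasurableSpace.comap X m𝒳)] := by
    refine hcancel _ _ (μ[fun ω' => 1 - A ω' | (MeasurableSpace.comap X m𝒳)]) ?_ ?_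
    · exact hcm0'.symm.trans ((condExp_congr_ae e3').trans hprod0)
    · filter_upwards [hBcond, hpos] with ω h1 h2
      rw [h1]; linarith [h2.2]
  -- integrability of m1(X), m0(X)
  have hm1Xint : Integrable (fun ω => m1 (X ω)) μ := integrable_condExp.congr hm1eq.symm
  have hm0Xint : Integrable (fun ω => m0 (X ω)) μ := integrable_condExp.congr hm0eq.symm
  -- strongly measurable w.r.t. (MeasurableSpace.comap X m𝒳)
  have hm1sm : StronglyMeasurable[(MeasurableSpace.comap X m𝒳)] (fun ω => m1 (X ω)) := (hm1.comp hXG).stronglyMeasurable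
  have hm0sm : StronglyMeasurable[(MeasurableSpace.comap X m𝒳)] (fun ω => m0 (X ω)) := (hm0.comp hXG).stronglyMeasurable
  -- conditional expectation of the correction terms is zero
  have hAYint : Integrable (fun ω => A ω * Y ω) μ := by
    have := mulbdd Y A 1 hYint hA hAbdd
    exact this.congr (Filter.Eventually.of_forall fun ω => mul_comm _ _)
  have hm1Aint : Integrable (fun ω => m1 (X ω) * A ω) μ := mulbdd _ A 1 hm1Xint hA hAbdd
  have hZ1 : μ[fun ω => A ω * Y ω - m1 (X ω) * A ω | (MeasurableSpace.comap X m𝒳)] =ᵐ[μ] fun _ => (0 : ℝ) := by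
    have hsub : μ[fun ω => A ω * Y ω - m1 (X ω) * A ω | (MeasurableSpace.comap X m𝒳)]
        =ᵐ[μ] μ[fun ω => A ω * Y ω | (MeasurableSpace.comap X m𝒳)] - μ[fun ω => m1 (X ω) * A ω | (MeasurableSpace.comap X m𝒳)] :=
      condExp_sub hAYint hm1Aint _
    have hmul : μ[fun ω => m1 (X ω) * A ω | (MeasurableSpace.comap X m𝒳)] =ᵐ[μ] fun ω => m1 (X ω) * (μ[A | (MeasurableSpace.comap X m𝒳)]) ω := by
      have := condExp_mul_of_stronglyMeasurable_left hm1sm hm1Aint hAint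
      exact this
    filter_upwards [hsub, hmul, hcm1'] with ω h1 h2 h3
    simp only [Pi.sub_apply] at h1
    rw [h1, h2, h3]; ring
  have hBYint : Integrable (fun ω => (1 - A ω) * Y ω) μ := by
    have := mulbdd Y (fun ω => 1 - A ω) 1 hYint hB hBbdd
    exact this.congr (Filter.Eventually.of_forall fun ω => mul_comm _ _)
  have hm0Bint : Integrable (fun ω => m0 (X ω) * (1 - A ω)) μ :=
    mulbdd _ (fun ω => 1 - A ω) 1 hm0Xint hB hBbdd
  have hZ0 : μ[fun ω => (1 - A ω) * Y ω - m0 (X ω) * (1 - A ω) | (MeasurableSpace.comap X m𝒳)] =ᵐ[μ] fun _ => (0 : ℝ) := by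
    have hsub : μ[fun ω => (1 - A ω) * Y ω - m0 (X ω) * (1 - A ω) | (MeasurableSpace.comap X m𝒳)]
        =ᵐ[μ] μ[fun ω => (1 - A ω) * Y ω | (MeasurableSpace.comap X m𝒳)] - μ[fun ω => m0 (X ω) * (1 - A ω) | (MeasurableSpace.comap X m𝒳)] :=
      condExp_sub hBYint hm0Bint _
    have hmul : μ[fun ω => m0 (X ω) * (1 - A ω) | (MeasurableSpace.comap X m𝒳)]
        =ᵐ[μ] fun ω => m0 (X ω) * (μ[fun ω' => 1 - A ω' | (MeasurableSpace.comap X m𝒳)]) ω := by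
      have hBint : Integrable (fun ω => 1 - A ω) μ := (integrable_const (1:ℝ)).sub hAint
      have := condExp_mul_of_stronglyMeasurable_left hm0sm hm0Bint hBint
      exact this
    filter_upwards [hsub, hmul, hcm0'] with ω h1 h2 h3
    simp only [Pi.sub_apply] at h1
    rw [h1, h2, h3]; ring
  -- the correction terms have zero integral
  have hetpos : ∀ x, (0:ℝ) < et x := fun x => lt_of_lt_of_le hη (hetbdd x).1
  have hetpos' : ∀ x, (0:ℝ) < 1 - et x := fun x => lt_of_lt_of_le hη (by linarith [(hetbdd x).2])
  have hg1sm : StronglyMeasurable[(MeasurableSpace.comap X m𝒳)] (fun ω => (et (X ω))⁻¹) :=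
    ((het.comp hXG).inv).stronglyMeasurable
  have hg0sm : StronglyMeasurable[(MeasurableSpace.comap X m𝒳)] (fun ω => (1 - et (X ω))⁻¹) :=
    ((measurable_const.sub (het.comp hXG)).inv).stronglyMeasurable
  have hg1bdd : ∀ ω, |(et (X ω))⁻¹| ≤ η⁻¹ := by
    intro ω
    rw [abs_of_pos (inv_pos.mpr (hetpos (X ω)))]
    exact inv_anti₀ hη (hetbdd (X ω)).1
  have hg0bdd : ∀ ω, |(1 - et (X ω))⁻¹| ≤ η⁻¹ := by
    intro ω
    rw [abs_of_pos (inv_pos.mpr (hetpos' (X ω)))]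
    refine inv_anti₀ hη ?_
    linarith [(hetbdd (X ω)).2]
  have hZ1int : Integrable (fun ω => A ω * Y ω - m1 (X ω) * A ω) μ := hAYint.sub hm1Aint
  have hZ0int : Integrable (fun ω => (1 - A ω) * Y ω - m0 (X ω) * (1 - A ω)) μ :=
    hBYint.sub hm0Bint
  have hT1eq : (fun ω => A ω * (Y ω - m1 (X ω)) / et (X ω))
      = fun ω => (et (X ω))⁻¹ * (A ω * Y ω - m1 (X ω) * A ω) := by
    funext ω; rw [div_eq_mul_inv]; ring
  have hT0eq : (fun ω => (1 - A ω) * (Y ω - m0 (X ω)) / (1 - et (X ω)))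
      = fun ω => (1 - et (X ω))⁻¹ * ((1 - A ω) * Y ω - m0 (X ω) * (1 - A ω)) := by
    funext ω; rw [div_eq_mul_inv]; ring
  have hT1int : Integrable (fun ω => (et (X ω))⁻¹ * (A ω * Y ω - m1 (X ω) * A ω)) μ :=
    hZ1int.bdd_mul ((het.comp hX).inv).aestronglyMeasurable
      (Filter.Eventually.of_forall fun ω => by rw [Real.norm_eq_abs]; exact hg1bdd ω)
  have hT0int : Integrable
      (fun ω => (1 - et (X ω))⁻¹ * ((1 - A ω) * Y ω - m0 (X ω) * (1 - A ω))) μ :=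
    hZ0int.bdd_mul ((measurable_const.sub (het.comp hX)).inv).aestronglyMeasurable
      (Filter.Eventually.of_forall fun ω => by rw [Real.norm_eq_abs]; exact hg0bdd ω)
  have hT1zero : ∫ ω, (et (X ω))⁻¹ * (A ω * Y ω - m1 (X ω) * A ω) ∂μ = 0 := by
    rw [← integral_condExp hG]
    have hc : μ[fun ω => (et (X ω))⁻¹ * (A ω * Y ω - m1 (X ω) * A ω) | (MeasurableSpace.comap X m𝒳)]
        =ᵐ[μ] fun _ => (0:ℝ) := by
      have hmul : μ[fun ω => (et (X ω))⁻¹ * (A ω * Y ω - m1 (X ω) * A ω) | MeasurableSpace.comap X m𝒳]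
          =ᵐ[μ] fun ω => (et (X ω))⁻¹ *
            (μ[fun ω' => A ω' * Y ω' - m1 (X ω') * A ω' | MeasurableSpace.comap X m𝒳]) ω :=
        condExp_mul_of_stronglyMeasurable_left hg1sm hT1int hZ1int
      filter_upwards [hmul, hZ1] with ω h1 h2
      rw [h1, h2, mul_zero]
    rw [integral_congr_ae hc, integral_zero]
  have hT0zero : ∫ ω, (1 - et (X ω))⁻¹ * ((1 - A ω) * Y ω - m0 (X ω) * (1 - A ω)) ∂μ = 0 := by
    rw [← integral_condExp hG]
    have hc : μ[fun ω => (1 - et (X ω))⁻¹ * ((1 - A ω) * Y ω - m0 (X ω) * (1 - A ω)) | (MeasurableSpace.comap X m𝒳)]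
        =ᵐ[μ] fun _ => (0:ℝ) := by
      have hmul : μ[fun ω => (1 - et (X ω))⁻¹ * ((1 - A ω) * Y ω - m0 (X ω) * (1 - A ω)) | MeasurableSpace.comap X m𝒳]
          =ᵐ[μ] fun ω => (1 - et (X ω))⁻¹ *
            (μ[fun ω' => (1 - A ω') * Y ω' - m0 (X ω') * (1 - A ω') | MeasurableSpace.comap X m𝒳]) ω :=
        condExp_mul_of_stronglyMeasurable_left hg0sm hT0int hZ0int
      filter_upwards [hmul, hZ0] with ω h1 h2
      rw [h1, h2, mul_zero]
    rw [integral_congr_ae hc, integral_zero]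
  have hT1int' : Integrable (fun ω => A ω * (Y ω - m1 (X ω)) / et (X ω)) μ := by
    rw [hT1eq]; exact hT1int
  have hT0int' : Integrable (fun ω => (1 - A ω) * (Y ω - m0 (X ω)) / (1 - et (X ω))) μ := by
    rw [hT0eq]; exact hT0int
  have z1 : ∫ ω, A ω * (Y ω - m1 (X ω)) / et (X ω) ∂μ = 0 := by
    rw [hT1eq]; exact hT1zero
  have z0 : ∫ ω, (1 - A ω) * (Y ω - m0 (X ω)) / (1 - et (X ω)) ∂μ = 0 := by
    rw [hT0eq]; exact hT0zero
  have key1 : ∫ ω, m1 (X ω) ∂μ = ∫ ω, Y1 ω ∂μ := by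
    rw [integral_congr_ae hm1eq, integral_condExp hG]
  have key0 : ∫ ω, m0 (X ω) ∂μ = ∫ ω, Y0 ω ∂μ := by
    rw [integral_congr_ae hm0eq, integral_condExp hG]
  have e4 : ∫ ω, ((m1 (X ω) + A ω * (Y ω - m1 (X ω)) / et (X ω) - m0 (X ω))
        - (1 - A ω) * (Y ω - m0 (X ω)) / (1 - et (X ω))) ∂μ
      = (∫ ω, (m1 (X ω) + A ω * (Y ω - m1 (X ω)) / et (X ω) - m0 (X ω)) ∂μ)
        - ∫ ω, (1 - A ω) * (Y ω - m0 (X ω)) / (1 - et (X ω)) ∂μ :=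
    integral_sub ((hm1Xint.add hT1int').sub hm0Xint) hT0int'
  have e5 : ∫ ω, ((m1 (X ω) + A ω * (Y ω - m1 (X ω)) / et (X ω)) - m0 (X ω)) ∂μ
      = (∫ ω, (m1 (X ω) + A ω * (Y ω - m1 (X ω)) / et (X ω)) ∂μ) - ∫ ω, m0 (X ω) ∂μ :=
    integral_sub (hm1Xint.add hT1int') hm0Xint
  have e6 : ∫ ω, (m1 (X ω) + A ω * (Y ω - m1 (X ω)) / et (X ω)) ∂μ
      = (∫ ω, m1 (X ω) ∂μ) + ∫ ω, A ω * (Y ω - m1 (X ω)) / et (X ω) ∂μ :=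
    integral_add hm1Xint hT1int'
  rw [e4, e5, e6, integral_sub hY1int hY0int, z1, z0, key1, key0]
  ring
end

section
/- Double robustness of the stacked AIPTW estimating equation (Example 3): let U(O; θ) = ( g(X)(A − e(X; α)), h(A, X)(Y − m(A, X; β)), [m(1, X; β) + A(Y − m(1, X; β))/e(X; α)] − [m(0, X; β) + (1 − A)(Y − m(0, X; β))/(1 − e(X; α))] − Δ′ ), with θ = (α, β, Δ′). Suppose (α₀, β₀) is the unique zero of the first two blocks, i.e. the unique (α, β) with E[g(X)(A − e(X; α))] = 0 and E[h(A, X)(Y − m(A, X; β))] = 0. If, in addition, EITHER e(X; α₀) = e(X) a.s. (propensity model correct) OR m(a, X; β₀) is a version of E[Y | A = a, X] for a ∈ {0,1} (outcome model correct), then under consistency, positivity, and no unmeasured confounding, E[U(O; θ)] = 0 if and only if θ = (α₀, β₀, Δ), where Δ = E[Y(1) − Y(0)]. -/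
open MeasureTheory ProbabilityTheory
open scoped ENNReal NNReal

namespace AIPTW

variable {Ω : Type*} {mΩ : MeasurableSpace Ω} {μ : Measure Ω}

lemma int_of_bdd [IsFiniteMeasure μ] {f : Ω → ℝ} (hf : AEStronglyMeasurable f μ)
    {C : ℝ} (hb : ∀ ω, |f ω| ≤ C) : Integrable f μ :=
  (integrable_const C).mono' hf (ae_of_all _ fun ω => by simpa using hb ω)

lemma integral_mul_eq_integral_mul_condexp [IsProbabilityMeasure μ]
    {m : MeasurableSpace Ω} (hm : m ≤ mΩ) {c f : Ω → ℝ}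
    (hc : StronglyMeasurable[m] c) {C : ℝ} (hcb : ∀ ω, |c ω| ≤ C)
    (hf : Integrable f μ) :
    ∫ ω, c ω * f ω ∂μ = ∫ ω, c ω * (μ[f|m]) ω ∂μ := by
  have hcm : AEStronglyMeasurable[mΩ] c μ := (hc.mono hm).aestronglyMeasurable
  have h2 := condExp_stronglyMeasurable_mul_of_bound hm hc hf C (ae_of_all _ fun x => by simpa using hcb x)
  calc ∫ ω, c ω * f ω ∂μ = ∫ ω, (μ[(fun ω => c ω * f ω)|m]) ω ∂μ := (integral_condExp hm).symm
    _ = ∫ ω, c ω * (μ[f|m]) ω ∂μ := integral_congr_ae h2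

/-- Key conditional-independence factorization in integral form. -/
lemma indep_factor {𝒳 : Type*} [StandardBorelSpace Ω] [IsProbabilityMeasure μ]
    [m𝒳 : MeasurableSpace 𝒳]
    (X : Ω → 𝒳) (A Y0 Y1 : Ω → ℝ) (e : 𝒳 → ℝ)
    (hX : Measurable X) (hA : Measurable A) (hY0 : Measurable Y0) (hY1 : Measurable Y1)
    (he : Measurable e) (he0 : ∀ x, 0 ≤ e x) (he1 : ∀ x, e x ≤ 1)
    (hAbin : ∀ ω, A ω = 0 ∨ A ω = 1)
    (hps : μ[A | MeasurableSpace.comap X m𝒳] =ᵐ[μ] fun ω => e (X ω))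
    (hignor : CondIndepFun (MeasurableSpace.comap X m𝒳) hX.comap_le
      (fun ω => (Y0 ω, Y1 ω)) A μ)
    (f : ℝ × ℝ → ℝ) (hf : Measurable f)
    (hfi : Integrable (fun ω => f (Y0 ω, Y1 ω)) μ)
    (w : 𝒳 → ℝ) (hw : Measurable w) {Cw : ℝ} (hw0 : ∀ x, 0 ≤ w x) (hwC : ∀ x, w x ≤ Cw) :
    ∫ ω, A ω * f (Y0 ω, Y1 ω) * w (X ω) ∂μ
      = ∫ ω, e (X ω) * f (Y0 ω, Y1 ω) * w (X ω) ∂μ := by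
  set mX := MeasurableSpace.comap X m𝒳 with hmXdef
  have hmX : mX ≤ mΩ := hX.comap_le
  set T : Ω → ℝ × ℝ := fun ω => (Y0 ω, Y1 ω) with hTdef
  have hT : Measurable[mΩ] T := hY0.prodMk hY1
  have hXmX : Measurable[mX] X := fun s hs => ⟨s, hs, rfl⟩
  have hwX : StronglyMeasurable[mX] (fun ω => w (X ω)) := ((hw.comp hXmX)).stronglyMeasurable
  have hewX : StronglyMeasurable[mX] (fun ω => e (X ω) * w (X ω)) :=
    (((he.mul hw).comp hXmX)).stronglyMeasurable
  have hwXb : ∀ ω, |w (X ω)| ≤ Cw := fun ω => by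
    rw [abs_of_nonneg (hw0 _)]; exact hwC _
  have hewXb : ∀ ω, |e (X ω) * w (X ω)| ≤ Cw := fun ω => by
    rw [abs_of_nonneg (mul_nonneg (he0 _) (hw0 _))]
    calc e (X ω) * w (X ω) ≤ 1 * w (X ω) := by
          exact mul_le_mul_of_nonneg_right (he1 _) (hw0 _)
      _ = w (X ω) := one_mul _
      _ ≤ Cw := hwC _
  -- A as an indicator
  have hA1 : (A ⁻¹' {1}).indicator (fun _ => (1:ℝ)) = A := by
    funext ω
    rcases hAbin ω with h | h <;> simp [Set.indicator_apply, Set.mem_preimage, h]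
  -- conditional expectation of the indicator of A⁻¹{1}
  have hcondA : μ[(A ⁻¹' {1}).indicator (fun _ => (1:ℝ)) | mX] =ᵐ[μ] fun ω => e (X ω) := by
    rw [hA1]; exact hps
  -- step 1: indicator version
  have hind : ∀ s : Set (ℝ × ℝ), MeasurableSet s →
      ∫ ω, A ω * (T ⁻¹' s).indicator (fun _ => (1:ℝ)) ω * w (X ω) ∂μ
        = ∫ ω, e (X ω) * (T ⁻¹' s).indicator (fun _ => (1:ℝ)) ω * w (X ω) ∂μ := by
    intro s hs
    have hfac := (condIndepFun_iff_condExp_inter_preimage_eq_mul (μ := μ) hT hA).mp hignor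
      s {1} hs (measurableSet_singleton 1)
    have hBmeas : MeasurableSet[mΩ] (T ⁻¹' s) := hT hs
    have hBAmeas : MeasurableSet[mΩ] (T ⁻¹' s ∩ A ⁻¹' {1}) := hBmeas.inter (hA (measurableSet_singleton 1))
    have hindint : Integrable ((T ⁻¹' s ∩ A ⁻¹' {1}).indicator (fun _ => (1:ℝ))) μ :=
      int_of_bdd ((stronglyMeasurable_const.indicator hBAmeas).aestronglyMeasurable)
        (C := 1) (fun ω => by
          by_cases h : ω ∈ T ⁻¹' s ∩ A ⁻¹' {1} <;> simp [Set.indicator_apply, h])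
    have hBint : Integrable ((T ⁻¹' s).indicator (fun _ => (1:ℝ))) μ :=
      int_of_bdd ((stronglyMeasurable_const.indicator hBmeas).aestronglyMeasurable)
        (C := 1) (fun ω => by
          by_cases h : ω ∈ T ⁻¹' s <;> simp [Set.indicator_apply, h])
    -- pointwise: A * 1_B = 1_{B ∩ A⁻¹{1}}
    have hpt : ∀ ω, A ω * (T ⁻¹' s).indicator (fun _ => (1:ℝ)) ω * w (X ω)
        = w (X ω) * (T ⁻¹' s ∩ A ⁻¹' {1}).indicator (fun _ => (1:ℝ)) ω := by
      intro ω
      rcases hAbin ω with h | h <;>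
        by_cases hB : ω ∈ T ⁻¹' s <;>
          simp [Set.indicator_apply, hB, h, Set.mem_preimage] <;> ring_nf <;> simp [h]
    calc ∫ ω, A ω * (T ⁻¹' s).indicator (fun _ => (1:ℝ)) ω * w (X ω) ∂μ
        = ∫ ω, w (X ω) * (T ⁻¹' s ∩ A ⁻¹' {1}).indicator (fun _ => (1:ℝ)) ω ∂μ :=
          integral_congr_ae (ae_of_all _ hpt)
      _ = ∫ ω, w (X ω) * (μ[(T ⁻¹' s ∩ A ⁻¹' {1}).indicator (fun _ => (1:ℝ))|mX]) ω ∂μ :=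
          integral_mul_eq_integral_mul_condexp hmX hwX hwXb hindint
      _ = ∫ ω, (e (X ω) * w (X ω)) * (μ[(T ⁻¹' s).indicator (fun _ => (1:ℝ))|mX]) ω ∂μ := by
          refine integral_congr_ae ?_
          filter_upwards [hfac, hcondA] with ω h1 h2
          rw [h1, h2]; ring
      _ = ∫ ω, (e (X ω) * w (X ω)) * (T ⁻¹' s).indicator (fun _ => (1:ℝ)) ω ∂μ :=
          (integral_mul_eq_integral_mul_condexp hmX hewX hewXb hBint).symm
      _ = ∫ ω, e (X ω) * (T ⁻¹' s).indicator (fun _ => (1:ℝ)) ω * w (X ω) ∂μ := by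
          refine integral_congr_ae (ae_of_all _ fun ω => ?_); ring
  -- step 2: extend from indicators to f via equality of measures
  have hAw_nonneg : ∀ ω, 0 ≤ A ω * w (X ω) := fun ω => by
    rcases hAbin ω with h | h <;> simp [h, hw0]
  have hew_nonneg : ∀ ω, 0 ≤ e (X ω) * w (X ω) := fun ω => mul_nonneg (he0 _) (hw0 _)
  have hAw_meas : Measurable[mΩ] (fun ω => A ω * w (X ω)) := hA.mul (hw.comp hX)
  have hew_meas : Measurable[mΩ] (fun ω => e (X ω) * w (X ω)) := (he.comp hX).mul (hw.comp hX)
  set d₁ : Ω → NNReal := fun ω => (A ω * w (X ω)).toNNReal with hd₁def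
  set d₂ : Ω → NNReal := fun ω => (e (X ω) * w (X ω)).toNNReal with hd₂def
  have hd₁ : Measurable[mΩ] d₁ := hAw_meas.real_toNNReal
  have hd₂ : Measurable[mΩ] d₂ := hew_meas.real_toNNReal
  have hAwC : ∀ ω, |A ω * w (X ω)| ≤ max Cw 0 := fun ω => by
    rw [abs_of_nonneg (hAw_nonneg ω)]
    rcases hAbin ω with h | h
    · simp [h, le_max_iff]
    · simp only [h, one_mul]; exact le_max_of_le_left (hwC _)
  have hewC : ∀ ω, |e (X ω) * w (X ω)| ≤ max Cw 0 := fun ω =>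
    le_trans (hewXb ω) (le_max_left _ _)
  have hAwint : Integrable (fun ω => A ω * w (X ω)) μ :=
    int_of_bdd hAw_meas.aestronglyMeasurable hAwC
  have hewint : Integrable (fun ω => e (X ω) * w (X ω)) μ :=
    int_of_bdd hew_meas.aestronglyMeasurable hewC
  have hmeq : @Measure.map Ω (ℝ × ℝ) mΩ _ T (μ.withDensity fun ω => ((d₁ ω : ℝ≥0∞)))
      = @Measure.map Ω (ℝ × ℝ) mΩ _ T (μ.withDensity fun ω => ((d₂ ω : ℝ≥0∞))) := by
    refine Measure.ext fun s hs => ?_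
    rw [Measure.map_apply hT hs, Measure.map_apply hT hs,
      withDensity_apply _ (hT hs), withDensity_apply _ (hT hs)]
    have conv : ∀ (g : Ω → ℝ), Measurable[mΩ] g → (∀ ω, 0 ≤ g ω) → Integrable g μ →
        ∫⁻ ω in T ⁻¹' s, ((g ω).toNNReal : ℝ≥0∞) ∂μ
          = ENNReal.ofReal (∫ ω, g ω * (T ⁻¹' s).indicator (fun _ => (1:ℝ)) ω ∂μ) := by
      intro g hg hg0 hgint
      have h1 : (fun ω => g ω * (T ⁻¹' s).indicator (fun _ => (1:ℝ)) ω)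
          = (T ⁻¹' s).indicator g := by
        funext ω; by_cases h : ω ∈ T ⁻¹' s <;> simp [Set.indicator_apply, h]
      rw [h1, @integral_indicator Ω ℝ mΩ _ _ g (T ⁻¹' s) μ (hT hs),
        ofReal_integral_eq_lintegral_ofReal (hgint.restrict)
          (ae_of_all _ fun ω => hg0 ω)]
      rfl
    rw [conv _ hAw_meas hAw_nonneg hAwint, conv _ hew_meas hew_nonneg hewint]
    congr 1
    calc ∫ ω, A ω * w (X ω) * (T ⁻¹' s).indicator (fun _ => (1:ℝ)) ω ∂μ
        = ∫ ω, A ω * (T ⁻¹' s).indicator (fun _ => (1:ℝ)) ω * w (X ω) ∂μ :=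
          integral_congr_ae (ae_of_all _ fun ω => by ring)
      _ = ∫ ω, e (X ω) * (T ⁻¹' s).indicator (fun _ => (1:ℝ)) ω * w (X ω) ∂μ := hind s hs
      _ = ∫ ω, e (X ω) * w (X ω) * (T ⁻¹' s).indicator (fun _ => (1:ℝ)) ω ∂μ :=
          integral_congr_ae (ae_of_all _ fun ω => by ring)
  have hint1 : ∫ p, f p ∂(@Measure.map Ω (ℝ × ℝ) mΩ _ T (μ.withDensity fun ω => ((d₁ ω : ℝ≥0∞))))
      = ∫ ω, A ω * f (T ω) * w (X ω) ∂μ := by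
    rw [@integral_map Ω ℝ _ _ mΩ (μ.withDensity fun ω => ((d₁ ω : ℝ≥0∞))) (ℝ × ℝ) _ T
        hT.aemeasurable f hf.aestronglyMeasurable,
      @integral_withDensity_eq_integral_smul Ω ℝ mΩ μ _ _ d₁ hd₁ (fun ω => f (T ω))]
    refine integral_congr_ae (ae_of_all _ fun ω => ?_)
    show d₁ ω • f (T ω) = A ω * f (T ω) * w (X ω)
    simp only [hd₁def, NNReal.smul_def, smul_eq_mul, Real.coe_toNNReal _ (hAw_nonneg ω)]
    ring
  have hint2 : ∫ p, f p ∂(@Measure.map Ω (ℝ × ℝ) mΩ _ T (μ.withDensity fun ω => ((d₂ ω : ℝ≥0∞))))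
      = ∫ ω, e (X ω) * f (T ω) * w (X ω) ∂μ := by
    rw [@integral_map Ω ℝ _ _ mΩ (μ.withDensity fun ω => ((d₂ ω : ℝ≥0∞))) (ℝ × ℝ) _ T
        hT.aemeasurable f hf.aestronglyMeasurable,
      @integral_withDensity_eq_integral_smul Ω ℝ mΩ μ _ _ d₂ hd₂ (fun ω => f (T ω))]
    refine integral_congr_ae (ae_of_all _ fun ω => ?_)
    show d₂ ω • f (T ω) = e (X ω) * f (T ω) * w (X ω)
    simp only [hd₂def, NNReal.smul_def, smul_eq_mul, Real.coe_toNNReal _ (hew_nonneg ω)]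
    ring
  rw [← hint1, ← hint2, hmeq]


/-- One-arm AIPTW identity under double robustness. -/
lemma arm {𝒳 : Type*} [IsProbabilityMeasure μ] [m𝒳 : MeasurableSpace 𝒳]
    (X : Ω → 𝒳) (A Yp : Ω → ℝ) (e eh mh : 𝒳 → ℝ)
    (hX : Measurable X) (hA : Measurable A) (hYpint : Integrable Yp μ)
    (hAbin : ∀ ω, A ω = 0 ∨ A ω = 1)
    {η : ℝ} (hη : 0 < η)
    (he : Measurable e) (heb : ∀ x, η ≤ e x)
    (hps : μ[A | MeasurableSpace.comap X m𝒳] =ᵐ[μ] fun ω => e (X ω))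
    (heh : Measurable eh) (hehb : ∀ x, η ≤ eh x)
    (hmh : Measurable mh) {Cm : ℝ} (hmhb : ∀ x, |mh x| ≤ Cm)
    (hkey : ∀ w : 𝒳 → ℝ, Measurable w → (∀ x, 0 ≤ w x) → (∀ x, w x ≤ η⁻¹) →
      ∫ ω, A ω * Yp ω * w (X ω) ∂μ = ∫ ω, e (X ω) * Yp ω * w (X ω) ∂μ)
    (hcor : (∀ᵐ ω ∂μ, eh (X ω) = e (X ω)) ∨
      (μ[fun ω => A ω * Yp ω | MeasurableSpace.comap X m𝒳] =ᵐ[μ]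
        fun ω => mh (X ω) * e (X ω))) :
    ∫ ω, (mh (X ω) + A ω * (Yp ω - mh (X ω)) / eh (X ω)) ∂μ = ∫ ω, Yp ω ∂μ := by
  have hmX : MeasurableSpace.comap X m𝒳 ≤ mΩ := hX.comap_le
  have hXmX : Measurable[MeasurableSpace.comap X m𝒳] X := fun s hs => ⟨s, hs, rfl⟩
  have hAb1 : ∀ ω, |A ω| ≤ 1 := fun ω => by rcases hAbin ω with h | h <;> simp [h]
  have hAint : Integrable A μ := int_of_bdd hA.aestronglyMeasurable hAb1
  set w : 𝒳 → ℝ := fun x => (eh x)⁻¹ with hwdef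
  have hw : Measurable w := heh.inv
  have hehpos : ∀ x, 0 < eh x := fun x => lt_of_lt_of_le hη (hehb x)
  have hw0 : ∀ x, 0 ≤ w x := fun x => inv_nonneg.mpr (hehpos x).le
  have hwC : ∀ x, w x ≤ η⁻¹ := fun x => inv_anti₀ hη (hehb x)
  have hwb : ∀ x, |w x| ≤ η⁻¹ := fun x => by rw [abs_of_nonneg (hw0 x)]; exact hwC x
  -- integrability of the three pieces
  have ht1 : Integrable (fun ω => mh (X ω)) μ :=
    int_of_bdd (hmh.comp hX).aestronglyMeasurable (fun ω => hmhb _)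
  have ht2 : Integrable (fun ω => A ω * Yp ω * w (X ω)) μ := by
    have : Integrable (fun ω => (A ω * w (X ω)) * Yp ω) μ :=
      hYpint.bdd_mul (c := η⁻¹) (hA.mul (hw.comp hX)).aestronglyMeasurable
        (ae_of_all _ fun ω => by
          rw [Real.norm_eq_abs, abs_mul]
          calc |A ω| * |w (X ω)| ≤ 1 * η⁻¹ :=
            mul_le_mul (hAb1 ω) (hwb _) (abs_nonneg _) zero_le_one
          _ = η⁻¹ := one_mul _)
    exact this.congr (ae_of_all _ fun ω => by ring)
  have ht3 : Integrable (fun ω => A ω * mh (X ω) * w (X ω)) μ :=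
    int_of_bdd ((hA.mul (hmh.comp hX)).mul (hw.comp hX)).aestronglyMeasurable
      (C := |Cm| * η⁻¹) (fun ω => by
        rw [abs_mul, abs_mul]
        refine mul_le_mul ?_ (hwb _) (abs_nonneg _) (abs_nonneg Cm)
        calc |A ω| * |mh (X ω)| ≤ 1 * |Cm| :=
          mul_le_mul (hAb1 ω) ((hmhb _).trans (le_abs_self Cm)) (abs_nonneg _) zero_le_one
        _ = |Cm| := one_mul _)
  -- split the integral
  have hsplit : ∫ ω, (mh (X ω) + A ω * (Yp ω - mh (X ω)) / eh (X ω)) ∂μ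
      = (∫ ω, mh (X ω) ∂μ) + ((∫ ω, A ω * Yp ω * w (X ω) ∂μ)
        - ∫ ω, A ω * mh (X ω) * w (X ω) ∂μ) := by
    have e1 : ∫ ω, (mh (X ω) + (A ω * Yp ω * w (X ω) - A ω * mh (X ω) * w (X ω))) ∂μ
        = (∫ ω, mh (X ω) ∂μ)
          + ∫ ω, (A ω * Yp ω * w (X ω) - A ω * mh (X ω) * w (X ω)) ∂μ :=
      integral_add ht1 (ht2.sub ht3)
    have e2 : ∫ ω, (A ω * Yp ω * w (X ω) - A ω * mh (X ω) * w (X ω)) ∂μ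
        = (∫ ω, A ω * Yp ω * w (X ω) ∂μ) - ∫ ω, A ω * mh (X ω) * w (X ω) ∂μ :=
      integral_sub ht2 ht3
    calc ∫ ω, (mh (X ω) + A ω * (Yp ω - mh (X ω)) / eh (X ω)) ∂μ
        = ∫ ω, (mh (X ω) + (A ω * Yp ω * w (X ω) - A ω * mh (X ω) * w (X ω))) ∂μ := by
          refine integral_congr_ae (ae_of_all _ fun ω => ?_)
          have hne : eh (X ω) ≠ 0 := (hehpos _).ne'
          simp only [hwdef]
          field_simp
      _ = (∫ ω, mh (X ω) ∂μ)
          + ∫ ω, (A ω * Yp ω * w (X ω) - A ω * mh (X ω) * w (X ω)) ∂μ := e1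
      _ = (∫ ω, mh (X ω) ∂μ) + ((∫ ω, A ω * Yp ω * w (X ω) ∂μ)
          - ∫ ω, A ω * mh (X ω) * w (X ω) ∂μ) := by rw [e2]
  -- common computation: ∫ A mh w = ∫ e mh w
  have hcomm : ∫ ω, A ω * mh (X ω) * w (X ω) ∂μ
      = ∫ ω, e (X ω) * mh (X ω) * w (X ω) ∂μ := by
    have hc : StronglyMeasurable[MeasurableSpace.comap X m𝒳]
        (fun ω => mh (X ω) * w (X ω)) := ((hmh.mul hw).comp hXmX).stronglyMeasurable
    have hcb : ∀ ω, |mh (X ω) * w (X ω)| ≤ |Cm| * η⁻¹ := fun ω => by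
      rw [abs_mul]
      exact mul_le_mul ((hmhb _).trans (le_abs_self Cm)) (hwb _) (abs_nonneg _) (abs_nonneg _)
    calc ∫ ω, A ω * mh (X ω) * w (X ω) ∂μ
        = ∫ ω, (mh (X ω) * w (X ω)) * A ω ∂μ :=
          integral_congr_ae (ae_of_all _ fun ω => by ring)
      _ = ∫ ω, (mh (X ω) * w (X ω)) * (μ[A|MeasurableSpace.comap X m𝒳]) ω ∂μ :=
          integral_mul_eq_integral_mul_condexp hmX hc hcb hAint
      _ = ∫ ω, (mh (X ω) * w (X ω)) * e (X ω) ∂μ := by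
          refine integral_congr_ae ?_
          filter_upwards [hps] with ω hω; rw [hω]
      _ = ∫ ω, e (X ω) * mh (X ω) * w (X ω) ∂μ :=
          integral_congr_ae (ae_of_all _ fun ω => by ring)
  rw [hsplit]
  rcases hcor with hP | hO
  · -- propensity model correct
    have hP2 : ∀ᵐ ω ∂μ, e (X ω) * w (X ω) = 1 := by
      filter_upwards [hP] with ω hω
      rw [hwdef, ← hω]
      exact mul_inv_cancel₀ (hehpos _).ne'
    have h2 : ∫ ω, A ω * Yp ω * w (X ω) ∂μ = ∫ ω, Yp ω ∂μ := by
      rw [hkey w hw hw0 hwC]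
      refine integral_congr_ae ?_
      filter_upwards [hP2] with ω hω
      calc e (X ω) * Yp ω * w (X ω) = (e (X ω) * w (X ω)) * Yp ω := by ring
        _ = Yp ω := by rw [hω, one_mul]
    have h3 : ∫ ω, A ω * mh (X ω) * w (X ω) ∂μ = ∫ ω, mh (X ω) ∂μ := by
      rw [hcomm]
      refine integral_congr_ae ?_
      filter_upwards [hP2] with ω hω
      calc e (X ω) * mh (X ω) * w (X ω) = (e (X ω) * w (X ω)) * mh (X ω) := by ring
        _ = mh (X ω) := by rw [hω, one_mul]
    rw [h2, h3]; ring
  · -- outcome model correct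
    have hAYpint : Integrable (fun ω => A ω * Yp ω) μ :=
      hYpint.bdd_mul (c := 1) hA.aestronglyMeasurable (ae_of_all _ fun ω => by simpa using hAb1 ω)
    have hwX : StronglyMeasurable[MeasurableSpace.comap X m𝒳] (fun ω => w (X ω)) :=
      (hw.comp hXmX).stronglyMeasurable
    have hwXb : ∀ ω, |w (X ω)| ≤ η⁻¹ := fun ω => hwb _
    have h2 : ∫ ω, A ω * Yp ω * w (X ω) ∂μ
        = ∫ ω, e (X ω) * mh (X ω) * w (X ω) ∂μ := by
      calc ∫ ω, A ω * Yp ω * w (X ω) ∂μ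
          = ∫ ω, w (X ω) * (A ω * Yp ω) ∂μ :=
            integral_congr_ae (ae_of_all _ fun ω => by ring)
        _ = ∫ ω, w (X ω) * (μ[fun ω => A ω * Yp ω|MeasurableSpace.comap X m𝒳]) ω ∂μ :=
            integral_mul_eq_integral_mul_condexp hmX hwX hwXb hAYpint
        _ = ∫ ω, w (X ω) * (mh (X ω) * e (X ω)) ∂μ := by
            refine integral_congr_ae ?_
            filter_upwards [hO] with ω hω; rw [hω]
        _ = ∫ ω, e (X ω) * mh (X ω) * w (X ω) ∂μ :=
            integral_congr_ae (ae_of_all _ fun ω => by ring)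
    -- ∫ mh(X) = ∫ Yp
    have hepos : ∀ x, 0 < e x := fun x => lt_of_lt_of_le hη (heb x)
    set w' : 𝒳 → ℝ := fun x => (e x)⁻¹ with hw'def
    have hw' : Measurable w' := he.inv
    have hw'0 : ∀ x, 0 ≤ w' x := fun x => inv_nonneg.mpr (hepos x).le
    have hw'C : ∀ x, w' x ≤ η⁻¹ := fun x => inv_anti₀ hη (heb x)
    have hw'b : ∀ ω, |w' (X ω)| ≤ η⁻¹ := fun ω => by
      rw [abs_of_nonneg (hw'0 _)]; exact hw'C _
    have hw'X : StronglyMeasurable[MeasurableSpace.comap X m𝒳] (fun ω => w' (X ω)) :=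
      (hw'.comp hXmX).stronglyMeasurable
    have hm : ∫ ω, mh (X ω) ∂μ = ∫ ω, Yp ω ∂μ := by
      have hee : ∀ x, e x * w' x = 1 := fun x => mul_inv_cancel₀ (hepos x).ne'
      calc ∫ ω, mh (X ω) ∂μ
          = ∫ ω, w' (X ω) * (mh (X ω) * e (X ω)) ∂μ := by
            refine integral_congr_ae (ae_of_all _ fun ω => ?_)
            calc mh (X ω) = (e (X ω) * w' (X ω)) * mh (X ω) := by rw [hee, one_mul]
              _ = w' (X ω) * (mh (X ω) * e (X ω)) := by ring
        _ = ∫ ω, w' (X ω) * (μ[fun ω => A ω * Yp ω|MeasurableSpace.comap X m𝒳]) ω ∂μ := by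
            refine integral_congr_ae ?_
            filter_upwards [hO] with ω hω; rw [hω]
        _ = ∫ ω, w' (X ω) * (A ω * Yp ω) ∂μ :=
            (integral_mul_eq_integral_mul_condexp hmX hw'X hw'b hAYpint).symm
        _ = ∫ ω, A ω * Yp ω * w' (X ω) ∂μ :=
            integral_congr_ae (ae_of_all _ fun ω => by ring)
        _ = ∫ ω, e (X ω) * Yp ω * w' (X ω) ∂μ := hkey w' hw' hw'0 hw'C
        _ = ∫ ω, Yp ω ∂μ := by
            refine integral_congr_ae (ae_of_all _ fun ω => ?_)
            calc e (X ω) * Yp ω * w' (X ω) = (e (X ω) * w' (X ω)) * Yp ω := by ring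
              _ = Yp ω := by rw [hee, one_mul]
    rw [h2, hcomm, hm]; ring


/-- Integrability of a one-arm AIPTW integrand. -/
lemma arm_integrable {𝒳 : Type*} [IsProbabilityMeasure μ] [m𝒳 : MeasurableSpace 𝒳]
    (X : Ω → 𝒳) (A Yp : Ω → ℝ) (eh mh : 𝒳 → ℝ)
    (hX : Measurable X) (hA : Measurable A) (hYpint : Integrable Yp μ)
    (hAbin : ∀ ω, A ω = 0 ∨ A ω = 1)
    {η : ℝ} (hη : 0 < η)
    (heh : Measurable eh) (hehb : ∀ x, η ≤ eh x)
    (hmh : Measurable mh) {Cm : ℝ} (hmhb : ∀ x, |mh x| ≤ Cm) :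
    Integrable (fun ω => mh (X ω) + A ω * (Yp ω - mh (X ω)) / eh (X ω)) μ := by
  have hAb1 : ∀ ω, |A ω| ≤ 1 := fun ω => by rcases hAbin ω with h | h <;> simp [h]
  have hehpos : ∀ x, 0 < eh x := fun x => lt_of_lt_of_le hη (hehb x)
  set w : 𝒳 → ℝ := fun x => (eh x)⁻¹ with hwdef
  have hw : Measurable w := heh.inv
  have hw0 : ∀ x, 0 ≤ w x := fun x => inv_nonneg.mpr (hehpos x).le
  have hwC : ∀ x, w x ≤ η⁻¹ := fun x => inv_anti₀ hη (hehb x)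
  have hwb : ∀ x, |w x| ≤ η⁻¹ := fun x => by rw [abs_of_nonneg (hw0 x)]; exact hwC x
  have ht1 : Integrable (fun ω => mh (X ω)) μ :=
    int_of_bdd (hmh.comp hX).aestronglyMeasurable (fun ω => hmhb _)
  have ht2 : Integrable (fun ω => A ω * Yp ω * w (X ω)) μ := by
    have : Integrable (fun ω => (A ω * w (X ω)) * Yp ω) μ :=
      hYpint.bdd_mul (c := η⁻¹) (hA.mul (hw.comp hX)).aestronglyMeasurable
        (ae_of_all _ fun ω => by
          rw [Real.norm_eq_abs, abs_mul]
          calc |A ω| * |w (X ω)| ≤ 1 * η⁻¹ :=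
            mul_le_mul (hAb1 ω) (hwb _) (abs_nonneg _) zero_le_one
          _ = η⁻¹ := one_mul _)
    exact this.congr (ae_of_all _ fun ω => by ring)
  have ht3 : Integrable (fun ω => A ω * mh (X ω) * w (X ω)) μ :=
    int_of_bdd ((hA.mul (hmh.comp hX)).mul (hw.comp hX)).aestronglyMeasurable
      (C := |Cm| * η⁻¹) (fun ω => by
        rw [abs_mul, abs_mul]
        refine mul_le_mul ?_ (hwb _) (abs_nonneg _) (abs_nonneg Cm)
        calc |A ω| * |mh (X ω)| ≤ 1 * |Cm| :=
          mul_le_mul (hAb1 ω) ((hmhb _).trans (le_abs_self Cm)) (abs_nonneg _) zero_le_one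
        _ = |Cm| := one_mul _)
  refine (ht1.add (ht2.sub ht3)).congr (ae_of_all _ fun ω => ?_)
  have hne : eh (X ω) ≠ 0 := (hehpos _).ne'
  show mh (X ω) + (A ω * Yp ω * w (X ω) - A ω * mh (X ω) * w (X ω)) = _
  simp only [hwdef]
  field_simp

end AIPTW

/-- **Double robustness of the stacked AIPTW estimating equation (Example 3).**
Suppose `(α₀, β₀)` is the unique zero of the first two blocks
`E[g(X)(A − e(X;α))] = 0` and `E[h(A,X)(Y − m(A,X;β))] = 0`, and EITHER the
propensity model is correct at `α₀` OR the outcome model is correct at `β₀`.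
Then, under consistency, positivity, and no unmeasured confounding,
`E[U(O;θ)] = 0` if and only if `θ = (α₀, β₀, Δ)`, where `Δ = E[Y(1) − Y(0)]`. -/
theorem aiptw_stacked_ee_double_robust_identification
    {Ω 𝒳 : Type*} [MeasurableSpace Ω] [StandardBorelSpace Ω]
    [m𝒳 : MeasurableSpace 𝒳]
    {μ : Measure Ω} [IsProbabilityMeasure μ]
    {k q : ℕ}
    (X : Ω → 𝒳) (A Y Y0 Y1 : Ω → ℝ) (e : 𝒳 → ℝ)
    (hX : Measurable X) (hA : Measurable A) (hY : Measurable Y)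
    (hY0 : Measurable Y0) (hY1 : Measurable Y1) (he : Measurable e)
    (hY0int : Integrable Y0 μ) (hY1int : Integrable Y1 μ)
    -- binary treatment
    (hAbin : ∀ ω, A ω = 0 ∨ A ω = 1)
    -- consistency: Y = Y(A) almost surely
    (hcons : ∀ᵐ ω ∂μ, Y ω = if A ω = 1 then Y1 ω else Y0 ω)
    -- the propensity score e(X) is a version of E[A | σ(X)]
    (hps : μ[A | MeasurableSpace.comap X m𝒳] =ᵐ[μ] fun ω => e (X ω))
    -- positivity
    {η : ℝ} (hη : 0 < η)
    (hpos : ∀ᵐ ω ∂μ, η ≤ e (X ω) ∧ e (X ω) ≤ 1 - η)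
    -- no unmeasured confounding: (Y(0), Y(1)) ⫫ A ∣ σ(X)
    (hignor : CondIndepFun (MeasurableSpace.comap X m𝒳) hX.comap_le
      (fun ω => (Y0 ω, Y1 ω)) A μ)
    -- parametric propensity model e(·;α), α ∈ 𝒜 ⊂ ℝ^k, bounded away from 0 and 1
    (𝒜 : Set (Fin k → ℝ)) (emod : (Fin k → ℝ) → 𝒳 → ℝ)
    (hemod : ∀ α, Measurable (emod α))
    (hemodbdd : ∀ α ∈ 𝒜, ∀ x, η ≤ emod α x ∧ emod α x ≤ 1 - η)
    -- parametric outcome model m(a,x;β), β ∈ ℬ ⊂ ℝ^q, bounded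
    (ℬ : Set (Fin q → ℝ)) (mmod : (Fin q → ℝ) → ℝ → 𝒳 → ℝ)
    (hmmod : ∀ β a, Measurable (mmod β a))
    (Cm : ℝ) (hmmodbdd : ∀ β ∈ ℬ, ∀ a ∈ ({0, 1} : Set ℝ), ∀ x, |mmod β a x| ≤ Cm)
    -- fixed bounded measurable g and h
    (g : 𝒳 → Fin k → ℝ) (hg : Measurable g) (Cg : ℝ) (hgbdd : ∀ x, ‖g x‖ ≤ Cg)
    (h : ℝ → 𝒳 → Fin q → ℝ) (hh : ∀ a ∈ ({0, 1} : Set ℝ), Measurable (h a))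
    (Ch : ℝ) (hhbdd : ∀ a ∈ ({0, 1} : Set ℝ), ∀ x, ‖h a x‖ ≤ Ch)
    -- (α₀, β₀) ∈ 𝒜 × ℬ is the unique zero of the first two blocks
    (α₀ : Fin k → ℝ) (hα₀ : α₀ ∈ 𝒜) (β₀ : Fin q → ℝ) (hβ₀ : β₀ ∈ ℬ)
    (hzero₁ : (∫ ω, (A ω - emod α₀ (X ω)) • g (X ω) ∂μ) = 0)
    (hzero₂ : (∫ ω, (Y ω - mmod β₀ (A ω) (X ω)) • h (A ω) (X ω) ∂μ) = 0)
    (huniq : ∀ α ∈ 𝒜, ∀ β ∈ ℬ,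
      (∫ ω, (A ω - emod α (X ω)) • g (X ω) ∂μ) = 0 →
      (∫ ω, (Y ω - mmod β (A ω) (X ω)) • h (A ω) (X ω) ∂μ) = 0 →
      α = α₀ ∧ β = β₀)
    -- EITHER the propensity model OR the outcome model is correctly specified
    (hcorrect :
      (∀ᵐ ω ∂μ, emod α₀ (X ω) = e (X ω)) ∨
      (∀ a ∈ ({0, 1} : Set ℝ),
        μ[fun ω => (if A ω = a then (1 : ℝ) else 0) * Y ω | MeasurableSpace.comap X m𝒳]
          =ᵐ[μ] fun ω => mmod β₀ a (X ω) *
            (μ[fun ω' => (if A ω' = a then (1 : ℝ) else 0) | MeasurableSpace.comap X m𝒳]) ω)) :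
    ∀ α ∈ 𝒜, ∀ β ∈ ℬ, ∀ Δ' : ℝ,
      (((∫ ω, (A ω - emod α (X ω)) • g (X ω) ∂μ) = 0) ∧
        ((∫ ω, (Y ω - mmod β (A ω) (X ω)) • h (A ω) (X ω) ∂μ) = 0) ∧
        (∫ ω, ((mmod β 1 (X ω) + A ω * (Y ω - mmod β 1 (X ω)) / emod α (X ω))
          - (mmod β 0 (X ω) + (1 - A ω) * (Y ω - mmod β 0 (X ω)) / (1 - emod α (X ω)))
          - Δ') ∂μ) = 0)
      ↔ (α = α₀ ∧ β = β₀ ∧ Δ' = ∫ ω, (Y1 ω - Y0 ω) ∂μ) := by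
  classical
  have hmX : MeasurableSpace.comap X m𝒳 ≤ ‹MeasurableSpace Ω› := hX.comap_le
  -- basic facts
  have hAb1 : ∀ ω, |A ω| ≤ 1 := fun ω => by rcases hAbin ω with h | h <;> simp [h]
  have hAint : Integrable A μ := AIPTW.int_of_bdd hA.aestronglyMeasurable hAb1
  have hμne : μ ≠ 0 := IsProbabilityMeasure.ne_zero μ
  have haeNeBot : (MeasureTheory.ae μ).NeBot := ae_neBot.mpr hμne
  obtain ⟨ω₀, hω₀1, hω₀2⟩ := hpos.exists
  have hηhalf : η ≤ 1 - η := le_trans hω₀1 hω₀2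
  -- truncated propensity score, globally bounded
  set eb : 𝒳 → ℝ := fun x => max η (min (e x) (1 - η)) with hebdef
  have heb : Measurable eb := measurable_const.max (he.min measurable_const)
  have heb_lb : ∀ x, η ≤ eb x := fun x => le_max_left _ _
  have heb_ub : ∀ x, eb x ≤ 1 - η := fun x => max_le hηhalf (min_le_right _ _)
  have heb0 : ∀ x, 0 ≤ eb x := fun x => le_trans hη.le (heb_lb x)
  have heb1 : ∀ x, eb x ≤ 1 := fun x => le_trans (heb_ub x) (by linarith)
  have hebX : ∀ᵐ ω ∂μ, eb (X ω) = e (X ω) := by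
    filter_upwards [hpos] with ω hω
    rw [hebdef]
    simp only
    rw [min_eq_left hω.2, max_eq_right hω.1]
  have hpsb : μ[A | MeasurableSpace.comap X m𝒳] =ᵐ[μ] fun ω => eb (X ω) := by
    filter_upwards [hps, hebX] with ω h1 h2
    rw [h1, h2]
  -- Y is integrable
  have hYeq : Y =ᵐ[μ] fun ω => A ω * Y1 ω + (1 - A ω) * Y0 ω := by
    filter_upwards [hcons] with ω hω
    rcases hAbin ω with h | h <;> simp [hω, h]
  have hYint : Integrable Y μ := by
    refine Integrable.congr ?_ hYeq.symm
    exact (hY1int.bdd_mul (c := 1) hA.aestronglyMeasurable (ae_of_all _ fun ω => by simpa using hAb1 ω)).add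
      (hY0int.bdd_mul (c := 2) (measurable_const.sub hA).aestronglyMeasurable
        (ae_of_all _ fun ω => by
          rcases hAbin ω with h | h <;> simp [h] <;> norm_num))
  -- key conditional independence identities
  have hkey1 : ∀ w : 𝒳 → ℝ, Measurable w → (∀ x, 0 ≤ w x) → (∀ x, w x ≤ η⁻¹) →
      ∫ ω, A ω * Y1 ω * w (X ω) ∂μ = ∫ ω, eb (X ω) * Y1 ω * w (X ω) ∂μ := by
    intro w hw hw0 hwC
    exact AIPTW.indep_factor X A Y0 Y1 eb hX hA hY0 hY1 heb heb0 heb1 hAbin hpsb hignor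
      (fun p => p.2) measurable_snd hY1int w hw hw0 hwC
  -- complementary treatment indicator
  have hA'bin : ∀ ω, (1 - A ω) = 0 ∨ (1 - A ω) = 1 := fun ω => by
    rcases hAbin ω with h | h <;> simp [h]
  have hA' : Measurable (fun ω => 1 - A ω) := measurable_const.sub hA
  have hps' : μ[(fun ω => 1 - A ω) | MeasurableSpace.comap X m𝒳]
      =ᵐ[μ] fun ω => 1 - eb (X ω) := by
    have hsub : μ[((fun _ => (1:ℝ)) - A) | MeasurableSpace.comap X m𝒳]
        =ᵐ[μ] μ[(fun _ => (1:ℝ)) | MeasurableSpace.comap X m𝒳]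
          - μ[A | MeasurableSpace.comap X m𝒳] :=
      condExp_sub (integrable_const (1:ℝ)) hAint _
    have hconst : μ[(fun _ => (1:ℝ)) | MeasurableSpace.comap X m𝒳] = fun _ => (1:ℝ) :=
      condExp_const hmX (1:ℝ)
    have hfe : ((fun _ => (1:ℝ)) - A) = fun ω => 1 - A ω := rfl
    rw [hfe] at hsub
    filter_upwards [hsub, hpsb] with ω h1 h2
    rw [h1, Pi.sub_apply, hconst, h2]
  have hignor' : CondIndepFun (MeasurableSpace.comap X m𝒳) hX.comap_le
      (fun ω => (Y0 ω, Y1 ω)) (fun ω => 1 - A ω) μ :=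
    hignor.comp measurable_id (measurable_const.sub measurable_id)
  have hkey0 : ∀ w : 𝒳 → ℝ, Measurable w → (∀ x, 0 ≤ w x) → (∀ x, w x ≤ η⁻¹) →
      ∫ ω, (1 - A ω) * Y0 ω * w (X ω) ∂μ = ∫ ω, (1 - eb (X ω)) * Y0 ω * w (X ω) ∂μ := by
    intro w hw hw0 hwC
    exact AIPTW.indep_factor X (fun ω => 1 - A ω) Y0 Y1 (fun x => 1 - eb x) hX hA' hY0 hY1
      (measurable_const.sub heb) (fun x => by show (0:ℝ) ≤ 1 - eb x; linarith [heb1 x])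
      (fun x => by show (1:ℝ) - eb x ≤ 1; linarith [heb0 x])
      hA'bin hps' hignor' (fun p => p.1) measurable_fst hY0int w hw hw0 hwC
  -- membership lemmas
  have h1mem : (1:ℝ) ∈ ({0, 1} : Set ℝ) := by simp
  have h0mem : (0:ℝ) ∈ ({0, 1} : Set ℝ) := by simp
  -- indicator identities
  have hi1 : (fun ω => (if A ω = (1:ℝ) then (1:ℝ) else 0)) = A := by
    funext ω; rcases hAbin ω with h | h <;> simp [h]
  have hi0 : (fun ω => (if A ω = (0:ℝ) then (1:ℝ) else 0)) = fun ω => 1 - A ω := by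
    funext ω; rcases hAbin ω with h | h <;> simp [h]
  -- consistency rewrites
  have hAY1 : (fun ω => A ω * Y ω) =ᵐ[μ] fun ω => A ω * Y1 ω := by
    filter_upwards [hcons] with ω hω
    rcases hAbin ω with h | h <;> simp [h, hω]
  have hAY0 : (fun ω => (1 - A ω) * Y ω) =ᵐ[μ] fun ω => (1 - A ω) * Y0 ω := by
    filter_upwards [hcons] with ω hω
    rcases hAbin ω with h | h <;> simp [h, hω]
  -- correctness hypotheses for each arm
  have hcor1 : (∀ᵐ ω ∂μ, emod α₀ (X ω) = eb (X ω)) ∨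
      (μ[fun ω => A ω * Y1 ω | MeasurableSpace.comap X m𝒳] =ᵐ[μ]
        fun ω => mmod β₀ 1 (X ω) * eb (X ω)) := by
    rcases hcorrect with hP | hOC
    · left; filter_upwards [hP, hebX] with ω h1 h2; rw [h1, h2]
    · right
      have h1 := hOC 1 h1mem
      rw [show (fun ω => (if A ω = (1:ℝ) then (1:ℝ) else 0) * Y ω) = fun ω => A ω * Y ω
          from funext fun ω => by rcases hAbin ω with h | h <;> simp [h], hi1] at h1
      have := condExp_congr_ae (μ := μ) (m := MeasurableSpace.comap X m𝒳) hAY1.symm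
      filter_upwards [this, h1, hpsb] with ω e1 e2 e3
      rw [e1, e2, e3]
  have hcor0 : (∀ᵐ ω ∂μ, (1 - emod α₀ (X ω)) = 1 - eb (X ω)) ∨
      (μ[fun ω => (1 - A ω) * Y0 ω | MeasurableSpace.comap X m𝒳] =ᵐ[μ]
        fun ω => mmod β₀ 0 (X ω) * (1 - eb (X ω))) := by
    rcases hcorrect with hP | hOC
    · left; filter_upwards [hP, hebX] with ω h1 h2; rw [h1, h2]
    · right
      have h1 := hOC 0 h0mem
      rw [show (fun ω => (if A ω = (0:ℝ) then (1:ℝ) else 0) * Y ω)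
            = fun ω => (1 - A ω) * Y ω
          from funext fun ω => by rcases hAbin ω with h | h <;> simp [h], hi0] at h1
      have := condExp_congr_ae (μ := μ) (m := MeasurableSpace.comap X m𝒳) hAY0.symm
      filter_upwards [this, h1, hps'] with ω e1 e2 e3
      rw [e1, e2, e3]
  -- the two arm identities
  have harm1 : ∫ ω, (mmod β₀ 1 (X ω) + A ω * (Y1 ω - mmod β₀ 1 (X ω)) / emod α₀ (X ω)) ∂μ
      = ∫ ω, Y1 ω ∂μ :=
    AIPTW.arm X A Y1 eb (emod α₀) (mmod β₀ 1) hX hA hY1int hAbin hη heb heb_lb hpsb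
      (hemod α₀) (fun x => (hemodbdd α₀ hα₀ x).1) (hmmod β₀ 1)
      (fun x => hmmodbdd β₀ hβ₀ 1 h1mem x) hkey1 hcor1
  have harm0 : ∫ ω, (mmod β₀ 0 (X ω)
        + (1 - A ω) * (Y0 ω - mmod β₀ 0 (X ω)) / (1 - emod α₀ (X ω))) ∂μ
      = ∫ ω, Y0 ω ∂μ :=
    AIPTW.arm X (fun ω => 1 - A ω) Y0 (fun x => 1 - eb x) (fun x => 1 - emod α₀ x)
      (mmod β₀ 0) hX hA' hY0int hA'bin hη (measurable_const.sub heb)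
      (fun x => by show η ≤ 1 - eb x; linarith [heb_ub x]) hps'
      (measurable_const.sub (hemod α₀))
      (fun x => by show η ≤ 1 - emod α₀ x; linarith [(hemodbdd α₀ hα₀ x).2]) (hmmod β₀ 0)
      (fun x => hmmodbdd β₀ hβ₀ 0 h0mem x) hkey0 hcor0
  -- integrability of the two arm integrands
  have hint1 : Integrable
      (fun ω => mmod β₀ 1 (X ω) + A ω * (Y1 ω - mmod β₀ 1 (X ω)) / emod α₀ (X ω)) μ :=
    AIPTW.arm_integrable X A Y1 (emod α₀) (mmod β₀ 1) hX hA hY1int hAbin hη (hemod α₀)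
      (fun x => (hemodbdd α₀ hα₀ x).1) (hmmod β₀ 1) (fun x => hmmodbdd β₀ hβ₀ 1 h1mem x)
  have hint0 : Integrable
      (fun ω => mmod β₀ 0 (X ω)
        + (1 - A ω) * (Y0 ω - mmod β₀ 0 (X ω)) / (1 - emod α₀ (X ω))) μ :=
    AIPTW.arm_integrable X (fun ω => 1 - A ω) Y0 (fun x => 1 - emod α₀ x) (mmod β₀ 0)
      hX hA' hY0int hA'bin hη (measurable_const.sub (hemod α₀))
      (fun x => by show η ≤ 1 - emod α₀ x; linarith [(hemodbdd α₀ hα₀ x).2]) (hmmod β₀ 0)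
      (fun x => hmmodbdd β₀ hβ₀ 0 h0mem x)
  -- the AIPTW functional at (α₀, β₀), with Y replaced by potential outcomes a.e.
  have hΦeq : (fun ω => (mmod β₀ 1 (X ω) + A ω * (Y ω - mmod β₀ 1 (X ω)) / emod α₀ (X ω))
        - (mmod β₀ 0 (X ω) + (1 - A ω) * (Y ω - mmod β₀ 0 (X ω)) / (1 - emod α₀ (X ω))))
      =ᵐ[μ] fun ω => (mmod β₀ 1 (X ω) + A ω * (Y1 ω - mmod β₀ 1 (X ω)) / emod α₀ (X ω))
        - (mmod β₀ 0 (X ω) + (1 - A ω) * (Y0 ω - mmod β₀ 0 (X ω)) / (1 - emod α₀ (X ω))) := by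
    filter_upwards [hcons] with ω hω
    rcases hAbin ω with h | h <;> simp [h, hω]
  have hΦint : Integrable
      (fun ω => (mmod β₀ 1 (X ω) + A ω * (Y ω - mmod β₀ 1 (X ω)) / emod α₀ (X ω))
        - (mmod β₀ 0 (X ω) + (1 - A ω) * (Y ω - mmod β₀ 0 (X ω)) / (1 - emod α₀ (X ω)))) μ :=
    ((hint1.sub hint0).congr hΦeq.symm)
  have hM : ∫ ω, ((mmod β₀ 1 (X ω) + A ω * (Y ω - mmod β₀ 1 (X ω)) / emod α₀ (X ω))
        - (mmod β₀ 0 (X ω) + (1 - A ω) * (Y ω - mmod β₀ 0 (X ω)) / (1 - emod α₀ (X ω)))) ∂μ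
      = ∫ ω, (Y1 ω - Y0 ω) ∂μ := by
    rw [integral_congr_ae hΦeq, integral_sub hint1 hint0, harm1, harm0,
      integral_sub hY1int hY0int]
  -- value of the third block
  have hthird : ∀ Δ' : ℝ,
      (∫ ω, ((mmod β₀ 1 (X ω) + A ω * (Y ω - mmod β₀ 1 (X ω)) / emod α₀ (X ω))
        - (mmod β₀ 0 (X ω) + (1 - A ω) * (Y ω - mmod β₀ 0 (X ω)) / (1 - emod α₀ (X ω)))
        - Δ') ∂μ)
      = (∫ ω, (Y1 ω - Y0 ω) ∂μ) - Δ' := by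
    intro Δ'
    rw [integral_sub hΦint (integrable_const Δ'), hM, integral_const]
    simp
  intro α hα β hβ Δ'
  constructor
  · rintro ⟨h1, h2, h3⟩
    obtain ⟨hαe, hβe⟩ := huniq α hα β hβ h1 h2
    subst hαe; subst hβe
    refine ⟨rfl, rfl, ?_⟩
    have := hthird Δ'
    rw [h3] at this
    linarith [this]
  · rintro ⟨rfl, rfl, rfl⟩
    refine ⟨hzero₁, hzero₂, ?_⟩
    rw [hthird]
    ring
end

section
/- Exact equivalence of online and offline estimators for affine estimating functions: suppose U(o; θ) = a(o) − B(o)θ where a(o) ∈ ℝ^p and B(o) is a p×p matrix, and suppose for each b the cumulative matrix Σ_{j≤b} Σ_{o ∈ D_j} B(o) is invertible. Define the online estimators recursively: θ̃₁ solves U₁(D₁; θ̃₁) = 0, and for b ≥ 2, θ̃_b solves Σ_{j=1}^{b−1} S_j(D_j; θ̃_j)(θ̃_{b−1} − θ̃_b) + U_b(D_b; θ̃_b) = 0, where S_j(D_j; θ) = −∂U_j(D_j; θ)/∂θᵀ. Then for every b ≥ 1, θ̃_b equals the offline estimator θ̂_b⋆ solving the aggregated equation Σ_{j=1}^{b} U_j(D_j;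 θ̂_b⋆) = 0. -/
open scoped BigOperators

lemma list_sum_clm_apply {𝒪 : Type*} {p : ℕ}
    (B : 𝒪 → EuclideanSpace ℝ (Fin p) →L[ℝ] EuclideanSpace ℝ (Fin p))
    (l : List 𝒪) (x : EuclideanSpace ℝ (Fin p)) :
    ((l.map B).sum) x = (l.map fun o => B o x).sum := by
  induction l with
  | nil => simp
  | cons h t ih => simp [ih]

lemma list_sum_map_sub {𝒪 : Type*} {p : ℕ}
    (f g : 𝒪 → EuclideanSpace ℝ (Fin p)) (l : List 𝒪) :
    (l.map fun o => f o - g o).sum = (l.map f).sum - (l.map g).sum := by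
  induction l with
  | nil => simp
  | cons h t ih => simp [ih]; abel

/-- **Exact equivalence of online and offline estimators for affine estimating functions.**
Suppose `U(o;θ) = a(o) − B(o)θ`, so that for any batch `D` the batch sensitivity matrix is
`S(D;θ) = Σ_{o∈D} B(o)`, independent of `θ`, and suppose each cumulative matrix
`Σ_{j≤b} Σ_{o∈D_j} B(o)` is invertible. If `θ̃₀` solves the first-batch equation and each
`θ̃_{b+1}` solves the online estimating equation
`(Σ_{j≤b} S_j(D_j;θ̃_j))(θ̃_b − θ̃_{b+1}) + U_{b+1}(D_{b+1};θ̃_{b+1}) = 0`,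
then for every `b`, `θ̃_b` equals the offline estimator `θ̂_b⋆` solving the aggregated
equation `Σ_{j≤b} U_j(D_j;θ̂_b⋆) = 0`. -/
theorem online_equals_offline_affine
    {𝒪 : Type*} {p : ℕ}
    (a : 𝒪 → EuclideanSpace ℝ (Fin p))
    (B : 𝒪 → EuclideanSpace ℝ (Fin p) →L[ℝ] EuclideanSpace ℝ (Fin p))
    (D : ℕ → List 𝒪)
    -- the cumulative sensitivity matrices are invertible
    (hinv : ∀ b : ℕ, IsUnit (∑ j ∈ Finset.range (b + 1), ((D j).map B).sum))
    (θt θoff : ℕ → EuclideanSpace ℝ (Fin p))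
    -- the initial estimator solves the first-batch estimating equation
    (hinit : ((D 0).map fun o => a o - B o (θt 0)).sum = 0)
    -- online updates: Σ_{j≤b} S_j(D_j;θ̃_j) (θ̃_b − θ̃_{b+1}) + U_{b+1}(D_{b+1};θ̃_{b+1}) = 0
    (hrec : ∀ b : ℕ,
      (∑ j ∈ Finset.range (b + 1), ((D j).map B).sum) (θt b - θt (b + 1)) +
        ((D (b + 1)).map fun o => a o - B o (θt (b + 1))).sum = 0)
    -- the offline estimators solve the aggregated estimating equations
    (hoff : ∀ b : ℕ,
      ∑ j ∈ Finset.range (b + 1), ((D j).map fun o => a o - B o (θoff b)).sum = 0) :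
    ∀ b : ℕ, θt b = θoff b := by
  set A : ℕ → (EuclideanSpace ℝ (Fin p) →L[ℝ] EuclideanSpace ℝ (Fin p)) :=
    fun b => ∑ j ∈ Finset.range (b + 1), ((D j).map B).sum with hA
  set v : ℕ → EuclideanSpace ℝ (Fin p) :=
    fun b => ∑ j ∈ Finset.range (b + 1), ((D j).map a).sum with hv
  -- rewrite batch equations: U-batch at θ is (map a).sum - (map B).sum θ
  have hbatch : ∀ (j : ℕ) (x : EuclideanSpace ℝ (Fin p)),
      ((D j).map fun o => a o - B o x).sum
        = ((D j).map a).sum - (((D j).map B).sum) x := by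
    intro j x
    rw [list_sum_clm_apply, list_sum_map_sub]
  have hApply : ∀ (b : ℕ) (x : EuclideanSpace ℝ (Fin p)),
      (A b) x = ∑ j ∈ Finset.range (b + 1), (((D j).map B).sum) x := by
    intro b x
    simp [hA, ContinuousLinearMap.sum_apply]
  -- key invariant: A b (θt b) = v b
  have key : ∀ b : ℕ, (A b) (θt b) = v b := by
    intro b
    induction b with
    | zero =>
      have := hinit
      rw [hbatch] at this
      have h' : (((D 0).map B).sum) (θt 0) = ((D 0).map a).sum := by
        have := sub_eq_zero.mp this
        exact this.symm
      simp [hApply, hv, h']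
    | succ n ih =>
      have h := hrec n
      rw [hbatch] at h
      have hAmap := (A n).map_sub (θt n) (θt (n + 1))
      have h2 : (A n) (θt n) - (A n) (θt (n + 1)) +
          (((D (n + 1)).map a).sum - (((D (n + 1)).map B).sum) (θt (n + 1))) = 0 := by
        rw [← hAmap]; exact h
      rw [ih] at h2
      have hAsucc : A (n + 1) = A n + ((D (n + 1)).map B).sum := by
        simp [hA, Finset.sum_range_succ]
      have hvsucc : v (n + 1) = v n + ((D (n + 1)).map a).sum := by
        simp [hv, Finset.sum_range_succ]
      rw [hAsucc, hvsucc]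
      simp only [ContinuousLinearMap.add_apply]
      have := sub_eq_zero.mp (by linear_combination (norm := abel_nf) h2 :
        v n + ((D (n + 1)).map a).sum -
          ((A n) (θt (n + 1)) + (((D (n + 1)).map B).sum) (θt (n + 1))) = 0)
      exact this.symm
  -- offline: A b (θoff b) = v b
  have koff : ∀ b : ℕ, (A b) (θoff b) = v b := by
    intro b
    have h := hoff b
    have h' : ∀ j ∈ Finset.range (b + 1),
        ((D j).map fun o => a o - B o (θoff b)).sum
          = ((D j).map a).sum - (((D j).map B).sum) (θoff b) := fun j _ => hbatch j _
    rw [Finset.sum_congr rfl h', Finset.sum_sub_distrib] at h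
    have := sub_eq_zero.mp h
    rw [hApply, hv]
    exact this.symm
  intro b
  have hu := hinv b
  obtain ⟨u, hu⟩ := hu
  have heq : (A b) (θt b) = (A b) (θoff b) := by rw [key b, koff b]
  have : u.val (θt b) = u.val (θoff b) := by rw [hu]; exact heq
  have h2 : (u⁻¹.val) (u.val (θt b)) = (u⁻¹.val) (u.val (θoff b)) := by rw [this]
  simpa [← ContinuousLinearMap.comp_apply, ← ContinuousLinearMap.mul_def,
    u.inv_mul] using h2
end

section
/- Closed-form two-batch online update: under the two-batch setting, if the matrix S₁(D₁; θ̂₁) + S₂(D₂; θ̃₂) appearing below is invertible and U is affine in θ, i.e. U(o; θ) = a(o) − B(o)θ with Σ_{o∈D₁} B(o) and Σ_{o∈D₁∪D₂} B(o) invertible, then the unique solution θ̃₂ of the online estimating equation S₁(D₁; θ̂₁)(θ̂₁ − θ̃₂) + U₂(D₂; θ̃₂) = 0 is θ̃₂ = (Σ_{o∈D₁∪D₂} B(o))⁻¹ (Σ_{o∈D₁∪D₂} a(o)), i.e. it coincides exactly with the offline estimator θ̂₂⋆ solving U₁(D₁; θ̂₂⋆) + U₂(D₂; θ̂₂⋆)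 = 0. -/
open scoped BigOperators

private lemma sum_map_sub_aux {𝒪 : Type*} {p : ℕ}
    (a : 𝒪 → EuclideanSpace ℝ (Fin p))
    (B : 𝒪 → EuclideanSpace ℝ (Fin p) →L[ℝ] EuclideanSpace ℝ (Fin p))
    (D : List 𝒪) (θ : EuclideanSpace ℝ (Fin p)) :
    (D.map fun o => a o - B o θ).sum = (D.map a).sum - (D.map B).sum θ := by
  induction D with
  | nil => simp
  | cons o t ih =>
    simp [ih, ContinuousLinearMap.add_apply]
    abel

/-- **Closed-form two-batch online update.**
For an affine estimating function `U(o;θ) = a(o) − B(o)θ` (so that batch sensitivity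
matrices `S(D;θ) = Σ_{o∈D} B(o)` do not depend on `θ`), with `Σ_{o∈D₁} B(o)` and
`S₁(D₁;θ̂₁) + S₂(D₂;θ̃₂) = Σ_{o∈D₁∪D₂} B(o)` invertible, the unique solution `θ̃₂` of the
online estimating equation `S₁(D₁;θ̂₁)(θ̂₁ − θ̃₂) + U₂(D₂;θ̃₂) = 0` is
`θ̃₂ = (Σ_{o∈D₁∪D₂} B(o))⁻¹ (Σ_{o∈D₁∪D₂} a(o))`, i.e. it coincides exactly with the
offline estimator `θ̂₂⋆` solving `U₁(D₁;θ̂₂⋆) + U₂(D₂;θ̂₂⋆) = 0`. -/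
theorem two_batch_online_closed_form
    {𝒪 : Type*} {p : ℕ}
    (a : 𝒪 → EuclideanSpace ℝ (Fin p))
    (B : 𝒪 → EuclideanSpace ℝ (Fin p) →L[ℝ] EuclideanSpace ℝ (Fin p))
    (D₁ D₂ : List 𝒪)
    (θhat₁ θt₂ θoff : EuclideanSpace ℝ (Fin p))
    -- invertibility of Σ_{o∈D₁} B(o) and of Σ_{o∈D₁∪D₂} B(o) = S₁(D₁;θ̂₁) + S₂(D₂;θ̃₂)
    (hinv₁ : IsUnit (D₁.map B).sum)
    (hinv₁₂ : IsUnit ((D₁ ++ D₂).map B).sum)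
    -- the initial estimator θ̂₁ solves the first-batch estimating equation
    (hinit : (D₁.map fun o => a o - B o θhat₁).sum = 0)
    -- θ̃₂ solves the online estimating equation S₁(D₁;θ̂₁)(θ̂₁ − θ̃₂) + U₂(D₂;θ̃₂) = 0
    (honline : (D₁.map B).sum (θhat₁ - θt₂) + (D₂.map fun o => a o - B o θt₂).sum = 0)
    -- θ̂₂⋆ solves the aggregated offline estimating equation U₁(D₁;θ) + U₂(D₂;θ) = 0
    (hoffline : (D₁.map fun o => a o - B o θoff).sum +
      (D₂.map fun o => a o - B o θoff).sum = 0) :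
    θt₂ = Ring.inverse ((D₁ ++ D₂).map B).sum ((D₁ ++ D₂).map a).sum ∧ θt₂ = θoff := by
  set S : EuclideanSpace ℝ (Fin p) →L[ℝ] EuclideanSpace ℝ (Fin p) :=
    ((D₁ ++ D₂).map B).sum with hS
  have hSsplit : S = (D₁.map B).sum + (D₂.map B).sum := by
    simp [hS, List.map_append]
  have hasplit : ((D₁ ++ D₂).map a).sum = (D₁.map a).sum + (D₂.map a).sum := by
    simp [List.map_append]
  have h1 : (D₁.map B).sum θhat₁ = (D₁.map a).sum := by
    rw [sum_map_sub_aux] at hinit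
    exact (sub_eq_zero.mp hinit).symm
  have hSt₂ : S θt₂ = ((D₁ ++ D₂).map a).sum := by
    rw [sum_map_sub_aux, map_sub, h1] at honline
    rw [hSsplit, hasplit, ContinuousLinearMap.add_apply]
    have : (D₁.map a).sum - (D₁.map B).sum θt₂
        + ((D₂.map a).sum - (D₂.map B).sum θt₂) = 0 := honline
    have := sub_eq_zero.mp (by linear_combination (norm := abel) this :
      ((D₁.map a).sum + (D₂.map a).sum)
      - ((D₁.map B).sum θt₂ + (D₂.map B).sum θt₂) = 0)
    exact this.symm
  have hSoff : S θoff = ((D₁ ++ D₂).map a).sum := by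
    rw [sum_map_sub_aux, sum_map_sub_aux] at hoffline
    rw [hSsplit, hasplit, ContinuousLinearMap.add_apply]
    have := sub_eq_zero.mp (by linear_combination (norm := abel) hoffline :
      ((D₁.map a).sum + (D₂.map a).sum)
      - ((D₁.map B).sum θoff + (D₂.map B).sum θoff) = 0)
    exact this.symm
  have hcancel : ∀ x, Ring.inverse S (S x) = x := by
    intro x
    have h := Ring.inverse_mul_cancel S hinv₁₂
    calc Ring.inverse S (S x) = (Ring.inverse S * S) x := rfl
      _ = x := by rw [h]; rfl
  constructor
  · rw [← hSt₂, hcancel]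
  · have : Ring.inverse S (S θt₂) = Ring.inverse S (S θoff) := by rw [hSt₂, hSoff]
    rwa [hcancel, hcancel] at this
end

section
/- Conditional-on-treated identification used in the G-formula proof: under consistency and no unmeasured confounding, for each a ∈ {0,1}, E[Y(a)·1{A=a} | σ(X)] = E[Y(a) | σ(X)]·E[1{A=a} | σ(X)] almost surely, and consequently, if positivity also holds and m(a,·) is a conditional outcome mean, then m(a, X) = E[Y(a) | σ(X)] almost surely. -/
open MeasureTheory ProbabilityTheory

section Aux
set_option linter.unusedVariables false
set_option linter.unusedSectionVars false


lemma norm_ind_le_one {Ω : Type*} (S : Set Ω) (ω : Ω) :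
    ‖S.indicator (fun _ => (1:ℝ)) ω‖ ≤ 1 := by
  by_cases h : ω ∈ S <;> simp [Set.indicator_apply, h]

lemma ind_integrable {Ω : Type*} {mΩ : MeasurableSpace Ω} {μ : Measure Ω}
    [IsProbabilityMeasure μ] {S : Set Ω} (hS : MeasurableSet[mΩ] S) :
    Integrable (S.indicator (fun _ => (1:ℝ))) μ :=
  (integrable_const (1:ℝ)).indicator hS

lemma integral_indicator_mul {Ω : Type*} {mΩ : MeasurableSpace Ω} {μ : Measure Ω}
    {s : Set Ω} (hs : MeasurableSet[mΩ] s) (g : Ω → ℝ) :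
    ∫ ω, s.indicator (fun _ => (1:ℝ)) ω * g ω ∂μ = ∫ ω in s, g ω ∂μ := by
  rw [← integral_indicator hs]
  congr 1
  funext ω
  by_cases h : ω ∈ s <;> simp [Set.indicator_apply, h]

lemma int_mul_of_bdd_right {Ω : Type*} {mΩ : MeasurableSpace Ω} {μ : Measure Ω}
    {a b : Ω → ℝ} (ha : Integrable a μ)
    (hb : AEStronglyMeasurable b μ) {c : ℝ} (hbd : ∀ᵐ ω ∂μ, ‖b ω‖ ≤ c) :
    Integrable (fun ω => a ω * b ω) μ :=
  (ha.bdd_mul hb hbd).congr (ae_of_all _ fun ω => mul_comm _ _)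

/-- self-adjointness-type identity: `∫ h·E[k|m'] = ∫ h·k` for `h` `m'`-measurable. -/
lemma integral_mul_condexp_eq {Ω : Type*} {mΩ : MeasurableSpace Ω} {μ : Measure Ω}
    [IsProbabilityMeasure μ] {m' : MeasurableSpace Ω} (hm' : m' ≤ mΩ) {h k : Ω → ℝ}
    (hh : StronglyMeasurable[m'] h) (hki : Integrable k μ)
    (hhk : Integrable (fun ω => h ω * k ω) μ) :
    ∫ ω, h ω * (μ[k|m']) ω ∂μ = ∫ ω, h ω * k ω ∂μ := by
  have h1 : μ[h * k|m'] =ᵐ[μ] h * μ[k|m'] :=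
    condExp_mul_of_stronglyMeasurable_left hh hhk hki
  calc ∫ ω, h ω * (μ[k|m']) ω ∂μ = ∫ ω, (μ[h * k|m']) ω ∂μ :=
        (integral_congr_ae h1).symm
    _ = ∫ ω, (h * k) ω ∂μ := integral_condExp hm'
    _ = ∫ ω, h ω * k ω ∂μ := rfl

lemma condexp_ae_norm_le {Ω : Type*} {mΩ : MeasurableSpace Ω} {μ : Measure Ω}
    [IsProbabilityMeasure μ] {m' : MeasurableSpace Ω} (hm' : m' ≤ mΩ) {k : Ω → ℝ} {c : ℝ}
    (hki : Integrable k μ) (hbd : ∀ᵐ ω ∂μ, ‖k ω‖ ≤ c) :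
    ∀ᵐ ω ∂μ, ‖(μ[k|m']) ω‖ ≤ c := by
  have h1 : μ[k|m'] ≤ᵐ[μ] μ[(fun _ => c)|m'] := by
    refine condExp_mono hki (integrable_const c) ?_
    filter_upwards [hbd] with ω h using le_trans (le_abs_self _) h
  have h2 : μ[(fun _ => (-c : ℝ))|m'] ≤ᵐ[μ] μ[k|m'] := by
    refine condExp_mono (integrable_const _) hki ?_
    filter_upwards [hbd] with ω h
    have := neg_abs_le (k ω)
    simp only [Real.norm_eq_abs] at h
    linarith
  have hc1 : μ[(fun _ => c)|m'] = fun _ => c := condExp_const hm' c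
  have hc2 : μ[(fun _ => (-c:ℝ))|m'] = fun _ => (-c:ℝ) := condExp_const hm' (-c)
  filter_upwards [h1, h2] with ω e1 e2
  rw [hc1] at e1; rw [hc2] at e2
  rw [Real.norm_eq_abs, abs_le]
  exact ⟨e2, e1⟩

section Base
variable {Ω : Type*} {mΩ : MeasurableSpace Ω} {μ : Measure Ω} [IsProbabilityMeasure μ]

lemma base_indicator {m' : MeasurableSpace Ω} (hm' : m' ≤ mΩ) {s S T : Set Ω}
    (hs : MeasurableSet[m'] s) (hS : MeasurableSet[mΩ] S) (hT : MeasurableSet[mΩ] T)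
    (hci : (μ⟦S ∩ T | m'⟧) =ᵐ[μ] fun ω => (μ⟦S | m'⟧) ω * (μ⟦T | m'⟧) ω) :
    ∫ ω, (μ[fun ω' => s.indicator (fun _ => (1:ℝ)) ω' * T.indicator (fun _ => (1:ℝ)) ω' | m']) ω
        * S.indicator (fun _ => (1:ℝ)) ω ∂μ
      = ∫ ω, (s.indicator (fun _ => (1:ℝ)) ω * T.indicator (fun _ => (1:ℝ)) ω)
        * S.indicator (fun _ => (1:ℝ)) ω ∂μ := by
  have hsΩ : MeasurableSet[mΩ] s := hm' _ hs
  have his_m' : StronglyMeasurable[m'] (s.indicator (fun _ => (1:ℝ))) :=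
    stronglyMeasurable_const.indicator hs
  have hiS_int : Integrable (S.indicator (fun _ => (1:ℝ))) μ := ind_integrable (mΩ := mΩ) hS
  have hiT_int : Integrable (T.indicator (fun _ => (1:ℝ))) μ := ind_integrable (mΩ := mΩ) hT
  have his_int : Integrable (s.indicator (fun _ => (1:ℝ))) μ := ind_integrable (mΩ := mΩ) hsΩ
  have h0_int : Integrable (fun ω => s.indicator (fun _ => (1:ℝ)) ω
      * T.indicator (fun _ => (1:ℝ)) ω) μ :=
    int_mul_of_bdd_right his_int hiT_int.1 (ae_of_all _ (norm_ind_le_one T))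
  -- LHS
  have l1 : ∫ ω, (μ[fun ω' => s.indicator (fun _ => (1:ℝ)) ω'
        * T.indicator (fun _ => (1:ℝ)) ω' | m']) ω * S.indicator (fun _ => (1:ℝ)) ω ∂μ
      = ∫ ω, (μ[fun ω' => s.indicator (fun _ => (1:ℝ)) ω'
        * T.indicator (fun _ => (1:ℝ)) ω' | m']) ω * (μ[S.indicator (fun _ => (1:ℝ)) | m']) ω ∂μ := by
    refine (integral_mul_condexp_eq hm' stronglyMeasurable_condExp hiS_int ?_).symm
    exact int_mul_of_bdd_right integrable_condExp hiS_int.1 (ae_of_all _ (norm_ind_le_one S))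
  have l2 : ∫ ω, (μ[fun ω' => s.indicator (fun _ => (1:ℝ)) ω'
        * T.indicator (fun _ => (1:ℝ)) ω' | m']) ω * (μ[S.indicator (fun _ => (1:ℝ)) | m']) ω ∂μ
      = ∫ ω, (μ[S.indicator (fun _ => (1:ℝ)) | m']) ω
          * (s.indicator (fun _ => (1:ℝ)) ω * T.indicator (fun _ => (1:ℝ)) ω) ∂μ := by
    rw [integral_congr_ae (ae_of_all μ fun ω => mul_comm
      ((μ[fun ω' => s.indicator (fun _ => (1:ℝ)) ω' * T.indicator (fun _ => (1:ℝ)) ω' | m']) ω)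
      ((μ[S.indicator (fun _ => (1:ℝ)) | m']) ω))]
    refine integral_mul_condexp_eq hm' stronglyMeasurable_condExp h0_int ?_
    refine int_mul_of_bdd_right (c := 1) integrable_condExp h0_int.1 (ae_of_all _ fun ω => ?_)
    calc ‖s.indicator (fun _ => (1:ℝ)) ω * T.indicator (fun _ => (1:ℝ)) ω‖
        = ‖s.indicator (fun _ => (1:ℝ)) ω‖ * ‖T.indicator (fun _ => (1:ℝ)) ω‖ := norm_mul _ _
      _ ≤ 1 * 1 := mul_le_mul (norm_ind_le_one s ω) (norm_ind_le_one T ω)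
          (norm_nonneg _) zero_le_one
      _ = 1 := one_mul 1
  have l4 : ∫ ω, (s.indicator (fun _ => (1:ℝ)) ω * (μ[S.indicator (fun _ => (1:ℝ)) | m']) ω)
        * T.indicator (fun _ => (1:ℝ)) ω ∂μ
      = ∫ ω, (s.indicator (fun _ => (1:ℝ)) ω * (μ[S.indicator (fun _ => (1:ℝ)) | m']) ω)
        * (μ[T.indicator (fun _ => (1:ℝ))|m']) ω ∂μ := by
    refine (integral_mul_condexp_eq hm' (his_m'.mul stronglyMeasurable_condExp) hiT_int ?_).symm
    refine int_mul_of_bdd_right ?_ hiT_int.1 (ae_of_all _ (norm_ind_le_one T))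
    exact (int_mul_of_bdd_right integrable_condExp his_int.1 (ae_of_all _ (norm_ind_le_one s))).congr
      (ae_of_all _ fun ω => mul_comm _ _)
  -- middle value via conditional independence
  have mid : ∫ ω, (s.indicator (fun _ => (1:ℝ)) ω * (μ[S.indicator (fun _ => (1:ℝ)) | m']) ω)
        * (μ[T.indicator (fun _ => (1:ℝ))|m']) ω ∂μ
      = ∫ ω in s, (S ∩ T).indicator (fun _ => (1:ℝ)) ω ∂μ := by
    have e1 : ∫ ω, (s.indicator (fun _ => (1:ℝ)) ω * (μ[S.indicator (fun _ => (1:ℝ)) | m']) ω)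
          * (μ[T.indicator (fun _ => (1:ℝ))|m']) ω ∂μ
        = ∫ ω, s.indicator (fun _ => (1:ℝ)) ω * ((μ[S.indicator (fun _ => (1:ℝ)) | m']) ω
          * (μ[T.indicator (fun _ => (1:ℝ))|m']) ω) ∂μ :=
      integral_congr_ae (ae_of_all _ fun ω => by ring)
    rw [e1, integral_indicator_mul (mΩ := mΩ) hsΩ]
    have e2 : ∫ ω in s, (μ[S.indicator (fun _ => (1:ℝ)) | m']) ω
          * (μ[T.indicator (fun _ => (1:ℝ))|m']) ω ∂μ
        = ∫ ω in s, (μ[(S ∩ T).indicator (fun _ => (1:ℝ))|m']) ω ∂μ := by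
      refine integral_congr_ae (ae_restrict_of_ae ?_)
      filter_upwards [hci] with ω h using h.symm
    rw [e2, setIntegral_condExp hm' (ind_integrable (mΩ := mΩ) (hS.inter hT)) hs]
  -- RHS
  have r1 : ∫ ω, (s.indicator (fun _ => (1:ℝ)) ω * T.indicator (fun _ => (1:ℝ)) ω)
        * S.indicator (fun _ => (1:ℝ)) ω ∂μ
      = ∫ ω in s, (S ∩ T).indicator (fun _ => (1:ℝ)) ω ∂μ := by
    rw [← integral_indicator_mul (mΩ := mΩ) hsΩ]
    refine integral_congr_ae (ae_of_all _ fun ω => ?_)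
    by_cases h1 : ω ∈ S <;> by_cases h2 : ω ∈ T <;> by_cases h3 : ω ∈ s <;>
      simp [Set.indicator_apply, h1, h2, h3, Set.mem_inter_iff]
  have l3 : ∫ ω, (μ[S.indicator (fun _ => (1:ℝ)) | m']) ω
        * (s.indicator (fun _ => (1:ℝ)) ω * T.indicator (fun _ => (1:ℝ)) ω) ∂μ
      = ∫ ω, (s.indicator (fun _ => (1:ℝ)) ω * (μ[S.indicator (fun _ => (1:ℝ)) | m']) ω)
        * T.indicator (fun _ => (1:ℝ)) ω ∂μ :=
    integral_congr_ae (ae_of_all _ fun ω => by ring)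
  rw [l1, l2, l3, l4, mid, r1]

end Base
section Step
variable {Ω : Type*} {mΩ : MeasurableSpace Ω} {μ : Measure Ω} [IsProbabilityMeasure μ]

lemma simplefunc_step {m' : MeasurableSpace Ω} (hm' : m' ≤ mΩ) {s T : Set Ω} {f0 : Ω → ℝ}
    (hs : MeasurableSet[m'] s) (hT : MeasurableSet[mΩ] T) (hf0 : Measurable[mΩ] f0)
    (hci : ∀ B : Set ℝ, MeasurableSet B →
      (μ⟦f0 ⁻¹' B ∩ T | m'⟧) =ᵐ[μ] fun ω => (μ⟦f0 ⁻¹' B | m'⟧) ω * (μ⟦T | m'⟧) ω)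
    (φ : MeasureTheory.SimpleFunc ℝ ℝ) :
    ∫ ω, (μ[fun ω' => s.indicator (fun _ => (1:ℝ)) ω' * T.indicator (fun _ => (1:ℝ)) ω' | m']) ω
        * φ (f0 ω) ∂μ
      = ∫ ω, (s.indicator (fun _ => (1:ℝ)) ω * T.indicator (fun _ => (1:ℝ)) ω) * φ (f0 ω) ∂μ := by
  have hsΩ : MeasurableSet[mΩ] s := hm' _ hs
  have h0_int : Integrable (fun ω => s.indicator (fun _ => (1:ℝ)) ω
      * T.indicator (fun _ => (1:ℝ)) ω) μ :=
    int_mul_of_bdd_right (ind_integrable (mΩ := mΩ) hsΩ) (ind_integrable (mΩ := mΩ) hT).1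
      (ae_of_all _ (norm_ind_le_one T))
  -- integrability of pieces
  have key_int : ∀ ψ : MeasureTheory.SimpleFunc ℝ ℝ,
      Integrable (fun ω => (μ[fun ω' => s.indicator (fun _ => (1:ℝ)) ω'
        * T.indicator (fun _ => (1:ℝ)) ω' | m']) ω * ψ (f0 ω)) μ := by
    intro ψ
    obtain ⟨C, hC⟩ := ψ.exists_forall_norm_le
    exact int_mul_of_bdd_right integrable_condExp
      ((ψ.measurable.comp hf0).aestronglyMeasurable) (ae_of_all _ fun ω => hC _)
  have key_int' : ∀ ψ : MeasureTheory.SimpleFunc ℝ ℝ,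
      Integrable (fun ω => (s.indicator (fun _ => (1:ℝ)) ω * T.indicator (fun _ => (1:ℝ)) ω)
        * ψ (f0 ω)) μ := by
    intro ψ
    obtain ⟨C, hC⟩ := ψ.exists_forall_norm_le
    exact int_mul_of_bdd_right h0_int
      ((ψ.measurable.comp hf0).aestronglyMeasurable) (ae_of_all _ fun ω => hC _)
  induction φ using MeasureTheory.SimpleFunc.induction with
  | const c hB =>
    rename_i B
    have hφval : ∀ y, (MeasureTheory.SimpleFunc.piecewise B hB
        (MeasureTheory.SimpleFunc.const _ c) (MeasureTheory.SimpleFunc.const _ 0)) y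
        = c * B.indicator (fun _ => (1:ℝ)) y := by
      intro y
      by_cases h : y ∈ B <;>
        simp [MeasureTheory.SimpleFunc.piecewise_apply, Set.indicator_apply, h]
    have base := base_indicator (μ := μ) hm' hs (hf0 hB) hT (hci B hB)
    calc ∫ ω, (μ[fun ω' => s.indicator (fun _ => (1:ℝ)) ω'
          * T.indicator (fun _ => (1:ℝ)) ω' | m']) ω
          * (MeasureTheory.SimpleFunc.piecewise B hB (MeasureTheory.SimpleFunc.const _ c)
            (MeasureTheory.SimpleFunc.const _ 0)) (f0 ω) ∂μ
        = ∫ ω, c * ((μ[fun ω' => s.indicator (fun _ => (1:ℝ)) ω'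
            * T.indicator (fun _ => (1:ℝ)) ω' | m']) ω
            * (f0 ⁻¹' B).indicator (fun _ => (1:ℝ)) ω) ∂μ := by
          refine integral_congr_ae (ae_of_all _ fun ω => ?_)
          have hBi : (f0 ⁻¹' B).indicator (fun _ => (1:ℝ)) ω
              = B.indicator (fun _ => (1:ℝ)) (f0 ω) := by
            by_cases h : f0 ω ∈ B <;> simp [Set.indicator_apply, h, Set.mem_preimage]
          simp only [hφval, hBi]
          ring
      _ = c * ∫ ω, (μ[fun ω' => s.indicator (fun _ => (1:ℝ)) ω'
            * T.indicator (fun _ => (1:ℝ)) ω' | m']) ω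
            * (f0 ⁻¹' B).indicator (fun _ => (1:ℝ)) ω ∂μ := integral_const_mul _ _
      _ = c * ∫ ω, (s.indicator (fun _ => (1:ℝ)) ω * T.indicator (fun _ => (1:ℝ)) ω)
            * (f0 ⁻¹' B).indicator (fun _ => (1:ℝ)) ω ∂μ := by rw [base]
      _ = ∫ ω, (s.indicator (fun _ => (1:ℝ)) ω * T.indicator (fun _ => (1:ℝ)) ω)
            * (MeasureTheory.SimpleFunc.piecewise B hB (MeasureTheory.SimpleFunc.const _ c)
              (MeasureTheory.SimpleFunc.const _ 0)) (f0 ω) ∂μ := by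
          rw [← integral_const_mul]
          refine integral_congr_ae (ae_of_all _ fun ω => ?_)
          have hBi : (f0 ⁻¹' B).indicator (fun _ => (1:ℝ)) ω
              = B.indicator (fun _ => (1:ℝ)) (f0 ω) := by
            by_cases h : f0 ω ∈ B <;> simp [Set.indicator_apply, h, Set.mem_preimage]
          simp only [hφval, hBi]
          ring
  | add hdisj ihφ ihψ =>
    rename_i φ ψ
    have e1 : ∫ ω, (μ[fun ω' => s.indicator (fun _ => (1:ℝ)) ω'
          * T.indicator (fun _ => (1:ℝ)) ω' | m']) ω * (φ + ψ) (f0 ω) ∂μ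
        = (∫ ω, (μ[fun ω' => s.indicator (fun _ => (1:ℝ)) ω'
          * T.indicator (fun _ => (1:ℝ)) ω' | m']) ω * φ (f0 ω) ∂μ)
        + ∫ ω, (μ[fun ω' => s.indicator (fun _ => (1:ℝ)) ω'
          * T.indicator (fun _ => (1:ℝ)) ω' | m']) ω * ψ (f0 ω) ∂μ := by
      rw [← integral_add (key_int φ) (key_int ψ)]
      refine integral_congr_ae (ae_of_all _ fun ω => ?_)
      simp [MeasureTheory.SimpleFunc.coe_add, mul_add]
    have e2 : ∫ ω, (s.indicator (fun _ => (1:ℝ)) ω * T.indicator (fun _ => (1:ℝ)) ω)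
          * (φ + ψ) (f0 ω) ∂μ
        = (∫ ω, (s.indicator (fun _ => (1:ℝ)) ω * T.indicator (fun _ => (1:ℝ)) ω)
          * φ (f0 ω) ∂μ)
        + ∫ ω, (s.indicator (fun _ => (1:ℝ)) ω * T.indicator (fun _ => (1:ℝ)) ω)
          * ψ (f0 ω) ∂μ := by
      rw [← integral_add (key_int' φ) (key_int' ψ)]
      refine integral_congr_ae (ae_of_all _ fun ω => ?_)
      simp [MeasureTheory.SimpleFunc.coe_add, mul_add]
    rw [e1, e2, ihφ, ihψ]

end Step
section Limit
variable {Ω : Type*} {mΩ : MeasurableSpace Ω} {μ : Measure Ω} [IsProbabilityMeasure μ]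

lemma approx_limit {m' : MeasurableSpace Ω} (hm' : m' ≤ mΩ) {s T : Set Ω} {f0 : Ω → ℝ}
    (hs : MeasurableSet[m'] s) (hT : MeasurableSet[mΩ] T) (hf0 : Measurable[mΩ] f0)
    (hf0i : Integrable f0 μ)
    (hci : ∀ B : Set ℝ, MeasurableSet B →
      (μ⟦f0 ⁻¹' B ∩ T | m'⟧) =ᵐ[μ] fun ω => (μ⟦f0 ⁻¹' B | m'⟧) ω * (μ⟦T | m'⟧) ω) :
    ∫ ω, (μ[fun ω' => s.indicator (fun _ => (1:ℝ)) ω' * T.indicator (fun _ => (1:ℝ)) ω' | m']) ω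
        * f0 ω ∂μ
      = ∫ ω, (s.indicator (fun _ => (1:ℝ)) ω * T.indicator (fun _ => (1:ℝ)) ω) * f0 ω ∂μ := by
  have hsΩ : MeasurableSet[mΩ] s := hm' _ hs
  set E := μ[fun ω' => s.indicator (fun _ => (1:ℝ)) ω' * T.indicator (fun _ => (1:ℝ)) ω' | m']
    with hE
  have h0_int : Integrable (fun ω => s.indicator (fun _ => (1:ℝ)) ω
      * T.indicator (fun _ => (1:ℝ)) ω) μ :=
    int_mul_of_bdd_right (ind_integrable (mΩ := mΩ) hsΩ) (ind_integrable (mΩ := mΩ) hT).1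
      (ae_of_all _ (norm_ind_le_one T))
  have hIb : ∀ ω, ‖s.indicator (fun _ => (1:ℝ)) ω * T.indicator (fun _ => (1:ℝ)) ω‖ ≤ 1 := by
    intro ω
    calc ‖s.indicator (fun _ => (1:ℝ)) ω * T.indicator (fun _ => (1:ℝ)) ω‖
        = ‖s.indicator (fun _ => (1:ℝ)) ω‖ * ‖T.indicator (fun _ => (1:ℝ)) ω‖ := norm_mul _ _
      _ ≤ 1 * 1 := mul_le_mul (norm_ind_le_one s ω) (norm_ind_le_one T ω)
          (norm_nonneg _) zero_le_one
      _ = 1 := one_mul 1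
  have hEb : ∀ᵐ ω ∂μ, ‖E ω‖ ≤ 1 := condexp_ae_norm_le hm' h0_int (ae_of_all _ hIb)
  -- approximating simple functions
  set φ : ℕ → MeasureTheory.SimpleFunc ℝ ℝ :=
    fun n => MeasureTheory.SimpleFunc.approxOn (id : ℝ → ℝ) measurable_id Set.univ 0
      (Set.mem_univ 0) n with hφ
  have hφt : ∀ x : ℝ, Filter.Tendsto (fun n => φ n x) Filter.atTop (nhds x) := by
    intro x
    have := MeasureTheory.SimpleFunc.tendsto_approxOn (f := (id : ℝ → ℝ)) measurable_id
      (Set.mem_univ 0) (x := x) (by simp)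
    simpa using this
  have hφb : ∀ (n : ℕ) (x : ℝ), ‖φ n x‖ ≤ ‖x‖ + ‖x‖ := by
    intro n x
    have := MeasureTheory.SimpleFunc.norm_approxOn_zero_le (f := (id : ℝ → ℝ)) measurable_id
      (s := Set.univ) (Set.mem_univ 0) x n
    simpa using this
  have bound_int : Integrable (fun ω => ‖f0 ω‖ + ‖f0 ω‖) μ := hf0i.norm.add hf0i.norm
  -- LHS limit
  have tl : Filter.Tendsto (fun n => ∫ ω, E ω * φ n (f0 ω) ∂μ) Filter.atTop
      (nhds (∫ ω, E ω * f0 ω ∂μ)) := by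
    refine MeasureTheory.tendsto_integral_of_dominated_convergence
      (fun ω => ‖f0 ω‖ + ‖f0 ω‖) (fun n => ?_) bound_int (fun n => ?_) ?_
    · exact (integrable_condExp.1.mul ((φ n).measurable.comp hf0).aestronglyMeasurable)
    · filter_upwards [hEb] with ω hb
      calc ‖E ω * φ n (f0 ω)‖ = ‖E ω‖ * ‖φ n (f0 ω)‖ := norm_mul _ _
        _ ≤ 1 * (‖f0 ω‖ + ‖f0 ω‖) := mul_le_mul hb (hφb n (f0 ω)) (norm_nonneg _) zero_le_one
        _ = ‖f0 ω‖ + ‖f0 ω‖ := one_mul _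
    · exact ae_of_all _ fun ω => tendsto_const_nhds.mul (hφt (f0 ω))
  -- RHS limit
  have tr : Filter.Tendsto (fun n => ∫ ω, (s.indicator (fun _ => (1:ℝ)) ω
      * T.indicator (fun _ => (1:ℝ)) ω) * φ n (f0 ω) ∂μ) Filter.atTop
      (nhds (∫ ω, (s.indicator (fun _ => (1:ℝ)) ω * T.indicator (fun _ => (1:ℝ)) ω)
        * f0 ω ∂μ)) := by
    refine MeasureTheory.tendsto_integral_of_dominated_convergence
      (fun ω => ‖f0 ω‖ + ‖f0 ω‖) (fun n => ?_) bound_int (fun n => ?_) ?_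
    · exact (h0_int.1.mul ((φ n).measurable.comp hf0).aestronglyMeasurable)
    · refine ae_of_all _ fun ω => ?_
      calc ‖(s.indicator (fun _ => (1:ℝ)) ω * T.indicator (fun _ => (1:ℝ)) ω) * φ n (f0 ω)‖
          = ‖s.indicator (fun _ => (1:ℝ)) ω * T.indicator (fun _ => (1:ℝ)) ω‖ * ‖φ n (f0 ω)‖ :=
            norm_mul _ _
        _ ≤ 1 * (‖f0 ω‖ + ‖f0 ω‖) := mul_le_mul (hIb ω) (hφb n (f0 ω))
            (norm_nonneg _) zero_le_one
        _ = ‖f0 ω‖ + ‖f0 ω‖ := one_mul _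
    · exact ae_of_all _ fun ω => tendsto_const_nhds.mul (hφt (f0 ω))
  have heq : ∀ n, ∫ ω, E ω * φ n (f0 ω) ∂μ
      = ∫ ω, (s.indicator (fun _ => (1:ℝ)) ω * T.indicator (fun _ => (1:ℝ)) ω)
        * φ n (f0 ω) ∂μ := fun n => simplefunc_step hm' hs hT hf0 hci (φ n)
  have := tl.congr (fun n => heq n)
  exact tendsto_nhds_unique this tr

end Limit
section CondexpMul
variable {Ω : Type*} {mΩ : MeasurableSpace Ω} {μ : Measure Ω} [IsProbabilityMeasure μ]

/-- Product rule for conditional expectation against an indicator, given set-level conditional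
independence identities. -/
lemma condexp_mul_indicator_of_sets {m' : MeasurableSpace Ω} (hm' : m' ≤ mΩ) {T : Set Ω}
    {f0 : Ω → ℝ} (hT : MeasurableSet[mΩ] T) (hf0 : Measurable[mΩ] f0) (hf0i : Integrable f0 μ)
    (hci : ∀ B : Set ℝ, MeasurableSet B →
      (μ⟦f0 ⁻¹' B ∩ T | m'⟧) =ᵐ[μ] fun ω => (μ⟦f0 ⁻¹' B | m'⟧) ω * (μ⟦T | m'⟧) ω) :
    μ[fun ω => f0 ω * T.indicator (fun _ => (1:ℝ)) ω | m']
      =ᵐ[μ] fun ω => (μ[f0 | m']) ω * (μ⟦T | m'⟧) ω := by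
  have hiT_int : Integrable (T.indicator (fun _ => (1:ℝ))) μ := ind_integrable (mΩ := mΩ) hT
  have hf_int : Integrable (fun ω => f0 ω * T.indicator (fun _ => (1:ℝ)) ω) μ :=
    int_mul_of_bdd_right hf0i hiT_int.1 (ae_of_all _ (norm_ind_le_one T))
  have hGb : ∀ᵐ ω ∂μ, ‖(μ[T.indicator (fun _ => (1:ℝ))|m']) ω‖ ≤ 1 :=
    condexp_ae_norm_le hm' hiT_int (ae_of_all _ (norm_ind_le_one T))
  have hg_int : Integrable (fun ω => (μ[f0 | m']) ω * (μ[T.indicator (fun _ => (1:ℝ))|m']) ω) μ :=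
    int_mul_of_bdd_right integrable_condExp integrable_condExp.1 hGb
  refine (ae_eq_condExp_of_forall_setIntegral_eq hm' hf_int
    (fun t _ _ => hg_int.restrict) (fun t ht _ => ?_) ?_).symm
  swap
  · exact (stronglyMeasurable_condExp.mul stronglyMeasurable_condExp).aestronglyMeasurable
  -- the set integral identity
  have htΩ : MeasurableSet[mΩ] t := hm' _ ht
  have ht_m' : StronglyMeasurable[m'] (t.indicator (fun _ => (1:ℝ))) :=
    stronglyMeasurable_const.indicator ht
  have hit_int : Integrable (t.indicator (fun _ => (1:ℝ))) μ := ind_integrable (mΩ := mΩ) htΩ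
  have htF_m' : StronglyMeasurable[m']
      (fun ω => t.indicator (fun _ => (1:ℝ)) ω * (μ[f0|m']) ω) :=
    ht_m'.mul stronglyMeasurable_condExp
  have htF_int : Integrable (fun ω => t.indicator (fun _ => (1:ℝ)) ω * (μ[f0|m']) ω) μ :=
    (int_mul_of_bdd_right integrable_condExp hit_int.1
      (ae_of_all _ (norm_ind_le_one t))).congr (ae_of_all _ fun ω => mul_comm _ _)
  have hist_int : Integrable (fun ω => t.indicator (fun _ => (1:ℝ)) ω
      * T.indicator (fun _ => (1:ℝ)) ω) μ :=
    int_mul_of_bdd_right hit_int hiT_int.1 (ae_of_all _ (norm_ind_le_one T))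
  calc ∫ ω in t, (μ[f0 | m']) ω * (μ[T.indicator (fun _ => (1:ℝ))|m']) ω ∂μ
      = ∫ ω, t.indicator (fun _ => (1:ℝ)) ω
          * ((μ[f0 | m']) ω * (μ[T.indicator (fun _ => (1:ℝ))|m']) ω) ∂μ :=
        (integral_indicator_mul (mΩ := mΩ) htΩ _).symm
    _ = ∫ ω, (fun ω' => t.indicator (fun _ => (1:ℝ)) ω' * (μ[f0|m']) ω') ω
          * (μ[T.indicator (fun _ => (1:ℝ))|m']) ω ∂μ :=
        integral_congr_ae (ae_of_all _ fun ω => by ring)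
    _ = ∫ ω, (fun ω' => t.indicator (fun _ => (1:ℝ)) ω' * (μ[f0|m']) ω') ω
          * T.indicator (fun _ => (1:ℝ)) ω ∂μ := by
        refine integral_mul_condexp_eq hm' htF_m' hiT_int ?_
        exact int_mul_of_bdd_right htF_int hiT_int.1 (ae_of_all _ (norm_ind_le_one T))
    _ = ∫ ω, (μ[f0|m']) ω * (fun ω' => t.indicator (fun _ => (1:ℝ)) ω'
          * T.indicator (fun _ => (1:ℝ)) ω') ω ∂μ :=
        integral_congr_ae (ae_of_all _ fun ω => by ring)
    _ = ∫ ω, (μ[f0|m']) ω * (μ[fun ω' => t.indicator (fun _ => (1:ℝ)) ω'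
          * T.indicator (fun _ => (1:ℝ)) ω'|m']) ω ∂μ := by
        refine (integral_mul_condexp_eq hm' stronglyMeasurable_condExp hist_int ?_).symm
        refine int_mul_of_bdd_right (c := 1) integrable_condExp hist_int.1 (ae_of_all _ fun ω => ?_)
        calc ‖t.indicator (fun _ => (1:ℝ)) ω * T.indicator (fun _ => (1:ℝ)) ω‖
            = ‖t.indicator (fun _ => (1:ℝ)) ω‖ * ‖T.indicator (fun _ => (1:ℝ)) ω‖ := norm_mul _ _
          _ ≤ 1 * 1 := mul_le_mul (norm_ind_le_one t ω) (norm_ind_le_one T ω)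
              (norm_nonneg _) zero_le_one
          _ = 1 := one_mul 1
    _ = ∫ ω, (μ[fun ω' => t.indicator (fun _ => (1:ℝ)) ω'
          * T.indicator (fun _ => (1:ℝ)) ω'|m']) ω * f0 ω ∂μ := by
        rw [integral_congr_ae (ae_of_all μ fun ω => mul_comm ((μ[f0|m']) ω)
          ((μ[fun ω' => t.indicator (fun _ => (1:ℝ)) ω'
            * T.indicator (fun _ => (1:ℝ)) ω'|m']) ω))]
        refine integral_mul_condexp_eq hm' stronglyMeasurable_condExp hf0i ?_
        refine hf0i.bdd_mul (stronglyMeasurable_condExp.mono hm').aestronglyMeasurable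
          (condexp_ae_norm_le (c := 1) hm' hist_int (ae_of_all _ fun ω => ?_))
        calc ‖t.indicator (fun _ => (1:ℝ)) ω * T.indicator (fun _ => (1:ℝ)) ω‖
            = ‖t.indicator (fun _ => (1:ℝ)) ω‖ * ‖T.indicator (fun _ => (1:ℝ)) ω‖ := norm_mul _ _
          _ ≤ 1 * 1 := mul_le_mul (norm_ind_le_one t ω) (norm_ind_le_one T ω)
              (norm_nonneg _) zero_le_one
          _ = 1 := one_mul 1
    _ = ∫ ω, (t.indicator (fun _ => (1:ℝ)) ω * T.indicator (fun _ => (1:ℝ)) ω) * f0 ω ∂μ :=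
        approx_limit hm' ht hT hf0 hf0i hci
    _ = ∫ ω in t, f0 ω * T.indicator (fun _ => (1:ℝ)) ω ∂μ := by
        rw [← integral_indicator_mul (mΩ := mΩ) htΩ]
        exact integral_congr_ae (ae_of_all _ fun ω => by ring)

end CondexpMul

end Aux

/-- **Conditional-on-treated identification used in the G-formula proof.**
Under consistency and no unmeasured confounding, for each `a ∈ {0,1}`,
`E[Y(a)·1{A=a} | σ(X)] = E[Y(a) | σ(X)]·E[1{A=a} | σ(X)]` almost surely; consequently,
since positivity also holds and `m(a,·)` is a conditional outcome mean
(`E[1{A=a}·Y | σ(X)] = m(a,X)·E[1{A=a} | σ(X)]` a.s.), `m(a,X) = E[Y(a) | σ(X)]` a.s. -/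
theorem cond_on_treated_identification
    {Ω 𝒳 : Type*} [MeasurableSpace Ω] [StandardBorelSpace Ω]
    [m𝒳 : MeasurableSpace 𝒳]
    {μ : Measure Ω} [IsProbabilityMeasure μ]
    (X : Ω → 𝒳) (A Y Y0 Y1 : Ω → ℝ) (e : 𝒳 → ℝ) (m1 m0 : 𝒳 → ℝ)
    (hX : Measurable X) (hA : Measurable A) (hY : Measurable Y)
    (hY0 : Measurable Y0) (hY1 : Measurable Y1) (he : Measurable e)
    (hm1 : Measurable m1) (hm0 : Measurable m0)
    (hY0int : Integrable Y0 μ) (hY1int : Integrable Y1 μ)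
    -- binary treatment
    (hAbin : ∀ ω, A ω = 0 ∨ A ω = 1)
    -- consistency: Y = Y(A) almost surely
    (hcons : ∀ᵐ ω ∂μ, Y ω = if A ω = 1 then Y1 ω else Y0 ω)
    -- the propensity score e(X) is a version of E[A | σ(X)]
    (hps : μ[A | MeasurableSpace.comap X m𝒳] =ᵐ[μ] fun ω => e (X ω))
    -- positivity
    {η : ℝ} (hη : 0 < η)
    (hpos : ∀ᵐ ω ∂μ, η ≤ e (X ω) ∧ e (X ω) ≤ 1 - η)
    -- no unmeasured confounding: (Y(0), Y(1)) ⫫ A ∣ σ(X)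
    (hignor : CondIndepFun (MeasurableSpace.comap X m𝒳) hX.comap_le
      (fun ω => (Y0 ω, Y1 ω)) A μ)
    -- m(1,·) is a conditional outcome mean
    (hcm1 : μ[fun ω => (if A ω = 1 then (1 : ℝ) else 0) * Y ω | MeasurableSpace.comap X m𝒳]
      =ᵐ[μ] fun ω => m1 (X ω) *
        (μ[fun ω' => (if A ω' = 1 then (1 : ℝ) else 0) | MeasurableSpace.comap X m𝒳]) ω)
    -- m(0,·) is a conditional outcome mean
    (hcm0 : μ[fun ω => (if A ω = 0 then (1 : ℝ) else 0) * Y ω | MeasurableSpace.comap X m𝒳]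
      =ᵐ[μ] fun ω => m0 (X ω) *
        (μ[fun ω' => (if A ω' = 0 then (1 : ℝ) else 0) | MeasurableSpace.comap X m𝒳]) ω) :
    -- E[Y(1)·1{A=1} | σ(X)] = E[Y(1) | σ(X)]·E[1{A=1} | σ(X)] a.s.
    (μ[fun ω => Y1 ω * (if A ω = 1 then (1 : ℝ) else 0) | MeasurableSpace.comap X m𝒳]
      =ᵐ[μ] fun ω => (μ[Y1 | MeasurableSpace.comap X m𝒳]) ω *
        (μ[fun ω' => (if A ω' = 1 then (1 : ℝ) else 0) | MeasurableSpace.comap X m𝒳]) ω)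
    -- E[Y(0)·1{A=0} | σ(X)] = E[Y(0) | σ(X)]·E[1{A=0} | σ(X)] a.s.
    ∧ (μ[fun ω => Y0 ω * (if A ω = 0 then (1 : ℝ) else 0) | MeasurableSpace.comap X m𝒳]
      =ᵐ[μ] fun ω => (μ[Y0 | MeasurableSpace.comap X m𝒳]) ω *
        (μ[fun ω' => (if A ω' = 0 then (1 : ℝ) else 0) | MeasurableSpace.comap X m𝒳]) ω)
    -- consequently m(1,X) = E[Y(1) | σ(X)] a.s.
    ∧ ((fun ω => m1 (X ω)) =ᵐ[μ] μ[Y1 | MeasurableSpace.comap X m𝒳])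
    -- and m(0,X) = E[Y(0) | σ(X)] a.s.
    ∧ ((fun ω => m0 (X ω)) =ᵐ[μ] μ[Y0 | MeasurableSpace.comap X m𝒳]) := by
  have hm' : MeasurableSpace.comap X m𝒳 ≤ ‹MeasurableSpace Ω› := hX.comap_le
  -- indicator rewrites
  have e1 : (fun ω => Y1 ω * (if A ω = 1 then (1 : ℝ) else 0))
      = fun ω => Y1 ω * (A ⁻¹' {1}).indicator (fun _ => (1:ℝ)) ω := by
    funext ω; by_cases h : A ω = 1 <;> simp [Set.indicator_apply, h]
  have e0 : (fun ω => Y0 ω * (if A ω = 0 then (1 : ℝ) else 0))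
      = fun ω => Y0 ω * (A ⁻¹' {0}).indicator (fun _ => (1:ℝ)) ω := by
    funext ω; by_cases h : A ω = 0 <;> simp [Set.indicator_apply, h]
  have i1 : (fun ω' => (if A ω' = 1 then (1 : ℝ) else 0))
      = (A ⁻¹' {1}).indicator (fun _ => (1:ℝ)) := by
    funext ω; by_cases h : A ω = 1 <;> simp [Set.indicator_apply, h]
  have i0 : (fun ω' => (if A ω' = 0 then (1 : ℝ) else 0))
      = (A ⁻¹' {0}).indicator (fun _ => (1:ℝ)) := by
    funext ω; by_cases h : A ω = 0 <;> simp [Set.indicator_apply, h]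
  -- conditional independence, componentwise
  have hciY1 : CondIndepFun (MeasurableSpace.comap X m𝒳) hm' Y1 A μ := by
    have := hignor.comp (measurable_snd (β := ℝ)) (measurable_id (α := ℝ))
    exact this
  have hciY0 : CondIndepFun (MeasurableSpace.comap X m𝒳) hm' Y0 A μ := by
    have := hignor.comp (measurable_fst (β := ℝ)) (measurable_id (α := ℝ))
    exact this
  have hset1 := (condIndepFun_iff_condExp_inter_preimage_eq_mul
    (hm' := hm') (μ := μ) hY1 hA).mp hciY1
  have hset0 := (condIndepFun_iff_condExp_inter_preimage_eq_mul
    (hm' := hm') (μ := μ) hY0 hA).mp hciY0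
  have hci1 : ∀ B : Set ℝ, MeasurableSet B →
      (μ⟦Y1 ⁻¹' B ∩ A ⁻¹' {1} | MeasurableSpace.comap X m𝒳⟧) =ᵐ[μ]
        fun ω => (μ⟦Y1 ⁻¹' B | MeasurableSpace.comap X m𝒳⟧) ω * (μ⟦A ⁻¹' {1} | MeasurableSpace.comap X m𝒳⟧) ω :=
    fun B hB => hset1 B {1} hB (measurableSet_singleton 1)
  have hci0 : ∀ B : Set ℝ, MeasurableSet B →
      (μ⟦Y0 ⁻¹' B ∩ A ⁻¹' {0} | MeasurableSpace.comap X m𝒳⟧) =ᵐ[μ]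
        fun ω => (μ⟦Y0 ⁻¹' B | MeasurableSpace.comap X m𝒳⟧) ω * (μ⟦A ⁻¹' {0} | MeasurableSpace.comap X m𝒳⟧) ω :=
    fun B hB => hset0 B {0} hB (measurableSet_singleton 0)
  -- first two conclusions
  have res1 : μ[fun ω => Y1 ω * (if A ω = 1 then (1 : ℝ) else 0) | MeasurableSpace.comap X m𝒳]
      =ᵐ[μ] fun ω => (μ[Y1 | MeasurableSpace.comap X m𝒳]) ω
        * (μ[fun ω' => (if A ω' = 1 then (1 : ℝ) else 0) | MeasurableSpace.comap X m𝒳]) ω := by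
    rw [e1, i1]
    exact condexp_mul_indicator_of_sets hm' (hA (measurableSet_singleton 1)) hY1 hY1int hci1
  have res0 : μ[fun ω => Y0 ω * (if A ω = 0 then (1 : ℝ) else 0) | MeasurableSpace.comap X m𝒳]
      =ᵐ[μ] fun ω => (μ[Y0 | MeasurableSpace.comap X m𝒳]) ω
        * (μ[fun ω' => (if A ω' = 0 then (1 : ℝ) else 0) | MeasurableSpace.comap X m𝒳]) ω := by
    rw [e0, i0]
    exact condexp_mul_indicator_of_sets hm' (hA (measurableSet_singleton 0)) hY0 hY0int hci0
  -- treatment indicator equals A resp. 1 - A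
  have hA1 : (fun ω' => (if A ω' = 1 then (1 : ℝ) else 0)) = A := by
    funext ω; rcases hAbin ω with h | h <;> simp [h]
  have hAint : Integrable A μ := by
    refine Integrable.mono' (integrable_const 1) hA.aestronglyMeasurable (ae_of_all _ fun ω => ?_)
    rcases hAbin ω with h | h <;> simp [h]
  have hE1 : μ[fun ω' => (if A ω' = 1 then (1 : ℝ) else 0) | MeasurableSpace.comap X m𝒳] =ᵐ[μ] fun ω => e (X ω) := by
    rw [hA1]; exact hps
  have hE0 : μ[fun ω' => (if A ω' = 0 then (1 : ℝ) else 0) | MeasurableSpace.comap X m𝒳]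
      =ᵐ[μ] fun ω => 1 - e (X ω) := by
    have hA0 : (fun ω' => (if A ω' = 0 then (1 : ℝ) else 0)) = (fun _ => (1:ℝ)) - A := by
      funext ω; rcases hAbin ω with h | h <;> simp [h]
    rw [hA0]
    have hsub : μ[(fun _ => (1:ℝ)) - A | MeasurableSpace.comap X m𝒳] =ᵐ[μ] μ[fun _ => (1:ℝ) | MeasurableSpace.comap X m𝒳] - μ[A | MeasurableSpace.comap X m𝒳] :=
      condExp_sub (integrable_const 1) hAint _
    have hone : μ[(fun _ => (1:ℝ)) | MeasurableSpace.comap X m𝒳] = fun _ => (1:ℝ) := condExp_const hm' 1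
    filter_upwards [hsub, hps] with ω h1 h2
    rw [h1]
    simp only [Pi.sub_apply, hone, h2]
  -- consistency rewrites
  have hcons1 : (fun ω => (if A ω = 1 then (1 : ℝ) else 0) * Y ω)
      =ᵐ[μ] fun ω => Y1 ω * (if A ω = 1 then (1 : ℝ) else 0) := by
    filter_upwards [hcons] with ω h
    by_cases h1 : A ω = 1 <;> simp [h1, h]
  have hcons0 : (fun ω => (if A ω = 0 then (1 : ℝ) else 0) * Y ω)
      =ᵐ[μ] fun ω => Y0 ω * (if A ω = 0 then (1 : ℝ) else 0) := by
    filter_upwards [hcons] with ω h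
    rcases hAbin ω with h0 | h0 <;> simp [h0, h]
  -- consequence for m1
  have chain1 : (fun ω => m1 (X ω)
        * (μ[fun ω' => (if A ω' = 1 then (1 : ℝ) else 0) | MeasurableSpace.comap X m𝒳]) ω)
      =ᵐ[μ] fun ω => (μ[Y1 | MeasurableSpace.comap X m𝒳]) ω
        * (μ[fun ω' => (if A ω' = 1 then (1 : ℝ) else 0) | MeasurableSpace.comap X m𝒳]) ω :=
    hcm1.symm.trans ((condExp_congr_ae hcons1).trans res1)
  have chain0 : (fun ω => m0 (X ω)
        * (μ[fun ω' => (if A ω' = 0 then (1 : ℝ) else 0) | MeasurableSpace.comap X m𝒳]) ω)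
      =ᵐ[μ] fun ω => (μ[Y0 | MeasurableSpace.comap X m𝒳]) ω
        * (μ[fun ω' => (if A ω' = 0 then (1 : ℝ) else 0) | MeasurableSpace.comap X m𝒳]) ω :=
    hcm0.symm.trans ((condExp_congr_ae hcons0).trans res0)
  have res2 : (fun ω => m1 (X ω)) =ᵐ[μ] μ[Y1 | MeasurableSpace.comap X m𝒳] := by
    filter_upwards [chain1, hE1, hpos] with ω hc he1 hp
    have hne : (μ[fun ω' => (if A ω' = 1 then (1 : ℝ) else 0) | MeasurableSpace.comap X m𝒳]) ω ≠ 0 := by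
      rw [he1]; exact ne_of_gt (lt_of_lt_of_le hη hp.1)
    exact mul_right_cancel₀ hne hc
  have res3 : (fun ω => m0 (X ω)) =ᵐ[μ] μ[Y0 | MeasurableSpace.comap X m𝒳] := by
    filter_upwards [chain0, hE0, hpos] with ω hc he0 hp
    have hne : (μ[fun ω' => (if A ω' = 0 then (1 : ℝ) else 0) | MeasurableSpace.comap X m𝒳]) ω ≠ 0 := by
      rw [he0]
      have : η ≤ 1 - e (X ω) := by linarith [hp.2]
      exact ne_of_gt (lt_of_lt_of_le hη this)
    exact mul_right_cancel₀ hne hc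
  exact ⟨res1, res0, res2, res3⟩
end
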